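/- arXiv:2211.03351 — 10 statements merged into one kernel-verified Lean document; each statement's English description precedes it below -/
import Mathlib

section
/- Let ω be a radial weight on [0,1) (a non-negative integrable function) with tail integral ω̂(r) = ∫_r^1 ω(s) ds. If ω satisfies the doubling condition ω̂(r) ≤ C ω̂((1+r)/2) for all 0 ≤ r < 1 and some constant C ≥ 1, then there exist constants C' > 0 and β > 0 such that ω̂(r) ≤ C' ((1-r)/(1-t))^β ω̂(t) for all 0 ≤ r ≤ t < 1. -/
open MeasureTheory Set

lemma what_anti (ω : ℝ → ℝ) (hnn : ∀ r, 0 ≤ ω r)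
    (hInt : IntegrableOn ω (Set.Ico (0:ℝ) 1))
    (What : ℝ → ℝ) (hWhat : ∀ r, What r = ∫ s in Set.Ioc r 1, ω s) :
    ∀ a b : ℝ, 0 ≤ a → a ≤ b → What b ≤ What a := by
  intro a b ha hab
  rw [hWhat a, hWhat b]
  have hIa : IntegrableOn ω (Set.Ioc a 1) := by
    rw [integrableOn_Ioc_iff_integrableOn_Ioo]
    exact hInt.mono_set fun x hx => ⟨le_of_lt (lt_of_le_of_lt ha hx.1), hx.2⟩
  apply setIntegral_mono_set hIa
  · exact Filter.Eventually.of_forall fun x => hnn x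
  · exact HasSubset.Subset.eventuallyLE (Set.Ioc_subset_Ioc_left hab)

/-- If a radial weight ω satisfies the doubling condition
ω̂(r) ≤ C ω̂((1+r)/2), then ω̂(r) ≤ C' ((1-r)/(1-t))^β ω̂(t) for 0 ≤ r ≤ t < 1. -/
theorem stmt_0 (ω : ℝ → ℝ) (hnn : ∀ r, 0 ≤ ω r)
    (hInt : IntegrableOn ω (Set.Ico (0:ℝ) 1))
    (What : ℝ → ℝ) (hWhat : ∀ r, What r = ∫ s in Set.Ioc r 1, ω s)
    (hpos : ∀ r ∈ Set.Ico (0:ℝ) 1, 0 < What r)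
    (hD : ∃ C ≥ (1:ℝ), ∀ r ∈ Set.Ico (0:ℝ) 1, What r ≤ C * What ((1 + r) / 2)) :
    ∃ C' > (0:ℝ), ∃ β > (0:ℝ), ∀ r t : ℝ, 0 ≤ r → r ≤ t → t < 1 →
      What r ≤ C' * ((1 - r) / (1 - t)) ^ β * What t := by
  obtain ⟨C, hC1, hDD⟩ := hD
  set C₂ : ℝ := max C 2 with hC₂def
  have hC₂2 : (2:ℝ) ≤ C₂ := le_max_right _ _
  have hC₂pos : (0:ℝ) < C₂ := by linarith
  set β : ℝ := Real.logb 2 C₂ with hβdef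
  have hβpos : 0 < β := Real.logb_pos one_lt_two (by linarith)
  refine ⟨C₂, hC₂pos, β, hβpos, ?_⟩
  intro r t hr hrt ht
  have anti := what_anti ω hnn hInt What hWhat
  have hr1 : r < 1 := lt_of_le_of_lt hrt ht
  have h1t : (0:ℝ) < 1 - t := by linarith
  have h1r : (0:ℝ) < 1 - r := by linarith
  have hWnn : ∀ a, 0 ≤ a → 0 ≤ What a := by
    intro a ha
    rcases lt_or_ge a 1 with h | h
    · exact (hpos a ⟨ha, h⟩).le
    · calc (0:ℝ) ≤ What 1 := by
            rw [hWhat 1]; simp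
        _ ≤ What a := by
            -- What a = ∫ over Ioc a 1 which is empty set integral ≥ 0 anyway
            rw [hWhat a, hWhat 1]
            simp [Set.Ioc_eq_empty (by linarith : ¬ (1:ℝ) < 1),
              Set.Ioc_eq_empty (by linarith : ¬ a < 1)]
  have hD2 : ∀ a, 0 ≤ a → a < 1 → What a ≤ C₂ * What ((1+a)/2) := by
    intro a h1 h2
    have h := hDD a ⟨h1, h2⟩
    have hWn : 0 < What ((1+a)/2) := hpos _ ⟨by linarith, by linarith⟩
    have hCle : C ≤ C₂ := le_max_left _ _
    nlinarith
  -- iteration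
  have iter : ∀ n : ℕ, What r ≤ C₂ ^ n * What (1 - (1 - r) / 2 ^ n) := by
    intro n; induction n with
    | zero => simp
    | succ n ih =>
      have hpow : (0:ℝ) < 2 ^ n := by positivity
      have hdivle : (1 - r) / 2 ^ n ≤ 1 - r :=
        div_le_self h1r.le (one_le_pow₀ one_le_two)
      have harg0 : 0 ≤ 1 - (1 - r) / 2 ^ n := by linarith
      have harg1 : 1 - (1 - r) / 2 ^ n < 1 := by
        have : 0 < (1 - r) / 2 ^ n := by positivity
        linarith
      have hstep := hD2 _ harg0 harg1
      have heq : (1 + (1 - (1 - r) / 2 ^ n)) / 2 = 1 - (1 - r) / 2 ^ (n+1) := by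
        field_simp
        ring
      rw [heq] at hstep
      calc What r ≤ C₂ ^ n * What (1 - (1 - r) / 2 ^ n) := ih
        _ ≤ C₂ ^ n * (C₂ * What (1 - (1 - r) / 2 ^ (n+1))) := by
            apply mul_le_mul_of_nonneg_left hstep (by positivity)
        _ = C₂ ^ (n+1) * What (1 - (1 - r) / 2 ^ (n+1)) := by ring
  set x : ℝ := (1 - r) / (1 - t) with hxdef
  have hx1 : (1:ℝ) ≤ x := by
    rw [hxdef, le_div_iff₀ h1t]; linarith
  have hxpos : 0 < x := by linarith
  have hlogbnn : 0 ≤ Real.logb 2 x := Real.logb_nonneg one_lt_two hx1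
  set n : ℕ := ⌈Real.logb 2 x⌉₊ with hndef
  have hnge : Real.logb 2 x ≤ (n : ℝ) := Nat.le_ceil _
  have hnlt : (n : ℝ) < Real.logb 2 x + 1 := Nat.ceil_lt_add_one hlogbnn
  have h2x : x ≤ (2:ℝ) ^ n := by
    have h1 : x = (2:ℝ) ^ Real.logb 2 x := (Real.rpow_logb two_pos (by norm_num) hxpos).symm
    have h2 : (2:ℝ) ^ Real.logb 2 x ≤ (2:ℝ) ^ (n : ℝ) :=
      Real.rpow_le_rpow_of_exponent_le one_le_two hnge
    rw [Real.rpow_natCast] at h2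
    linarith
  -- r_n ≥ t
  have hpown : (0:ℝ) < 2 ^ n := by positivity
  have hrn : t ≤ 1 - (1 - r) / 2 ^ n := by
    have h1 : 1 - r ≤ 2 ^ n * (1 - t) := by
      have := (div_le_iff₀ h1t).mp h2x
      linarith
    have h2 : (1 - r) / 2 ^ n ≤ 1 - t := by
      rw [div_le_iff₀ hpown]; linarith
    linarith
  -- C₂ ^ n ≤ C₂ * x ^ β
  have hCn : C₂ ^ n ≤ C₂ * x ^ β := by
    have hC2eq : (2:ℝ) ^ β = C₂ := Real.rpow_logb two_pos (by norm_num) hC₂pos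
    have e1 : C₂ ^ n = (2:ℝ) ^ (β * (n:ℝ)) := by
      rw [Real.rpow_mul (by norm_num : (0:ℝ) ≤ 2), hC2eq, Real.rpow_natCast]
    have e2 : (2:ℝ) ^ (β * (n:ℝ)) ≤ (2:ℝ) ^ (β * (Real.logb 2 x + 1)) := by
      apply Real.rpow_le_rpow_of_exponent_le one_le_two
      nlinarith
    have e3 : (2:ℝ) ^ (β * (Real.logb 2 x + 1)) = C₂ * x ^ β := by
      rw [mul_add, mul_one, Real.rpow_add two_pos, mul_comm β (Real.logb 2 x),
        Real.rpow_mul (by norm_num : (0:ℝ) ≤ 2),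
        Real.rpow_logb two_pos (by norm_num) hxpos, hC2eq, mul_comm]
    rw [e1]; rw [e3] at e2; exact e2
  have hWt : 0 ≤ What t := hWnn t (le_trans hr hrt)
  have hmono : What (1 - (1 - r) / 2 ^ n) ≤ What t :=
    anti t _ (le_trans hr hrt) hrn
  calc What r ≤ C₂ ^ n * What (1 - (1 - r) / 2 ^ n) := iter n
    _ ≤ C₂ ^ n * What t := mul_le_mul_of_nonneg_left hmono (by positivity)
    _ ≤ (C₂ * x ^ β) * What t := mul_le_mul_of_nonneg_right hCn hWt
    _ = C₂ * x ^ β * What t := by ring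
end

section
/- Let ω be a radial weight in D̂. Then there exist constants C ≥ 1 and η > 0 such that ω_x ≤ C (y/x)^η ω_y for all 0 < x ≤ y < ∞, where ω_x = ∫_0^1 s^x ω(s) ds. -/
open MeasureTheory Set

/-- recursive series bound -/
noncomputable def auxS (C : ℝ) : ℕ → ℕ → ℝ
  | 0, _ => 0
  | (N+1), j => C * Real.exp (-(2:ℝ)^j) + C * auxS C N (j+1)

lemma auxS_nonneg {C : ℝ} (hC : 0 ≤ C) : ∀ N j, 0 ≤ auxS C N j := by
  intro N
  induction N with
  | zero => intro j; simp [auxS]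
  | succ N ih =>
    intro j
    have h1 := Real.exp_pos (-(2:ℝ)^j)
    have h2 := ih (j+1)
    simp only [auxS]
    positivity

lemma auxS_le {C : ℝ} (hC : 1 ≤ C) {m : ℕ} (hm : 2*C ≤ 2^m) (hm1 : 1 ≤ m) :
    ∀ N j, auxS C N j ≤ (2*C*(m:ℝ)^m) * ((1/(2*C))^j) := by
  have hC0 : (0:ℝ) < C := lt_of_lt_of_le one_pos hC
  have hmpos : (0:ℝ) < (m:ℕ) := by exact_mod_cast hm1
  intro N
  induction N with
  | zero =>
    intro j
    simp only [auxS]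
    positivity
  | succ N ih =>
    intro j
    have ihj := ih (j+1)
    -- key : C * exp(-(2:ℝ)^j) ≤ C * m^m * (1/(2C))^j
    have hkey : ((2:ℝ)*C)^j ≤ (m:ℝ)^m * Real.exp ((2:ℝ)^j) := by
      have h1 : ((2:ℝ)*C)^j ≤ ((2:ℝ)^m)^j := by
        apply pow_le_pow_left₀ (by positivity) hm
      have h2 : ((2:ℝ)^m)^j = ((2:ℝ)^j)^m := by
        rw [← pow_mul, ← pow_mul, Nat.mul_comm]
      have h3 : (2:ℝ)^j ≤ (m:ℝ) * Real.exp ((2:ℝ)^j / m) := by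
        have := Real.add_one_le_exp ((2:ℝ)^j / m)
        have h4 : (2:ℝ)^j / m ≤ Real.exp ((2:ℝ)^j / m) := by
          nlinarith [pow_pos (show (0:ℝ) < 2 by norm_num) j]
        calc (2:ℝ)^j = m * ((2:ℝ)^j / m) := by field_simp
        _ ≤ m * Real.exp ((2:ℝ)^j / m) := by
            apply mul_le_mul_of_nonneg_left h4 (le_of_lt hmpos)
      have h5 : ((2:ℝ)^j)^m ≤ ((m:ℝ) * Real.exp ((2:ℝ)^j / m))^m := by
        apply pow_le_pow_left₀ (by positivity) h3
      have h6 : ((m:ℝ) * Real.exp ((2:ℝ)^j / m))^m = (m:ℝ)^m * Real.exp ((2:ℝ)^j) := by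
        rw [mul_pow, ← Real.exp_nat_mul]
        congr 1
        field_simp
      calc ((2:ℝ)*C)^j ≤ ((2:ℝ)^j)^m := by rw [← h2]; exact h1
      _ ≤ _ := by rw [← h6] at *; exact h5
      _ = _ := h6
    have hexp : Real.exp (-(2:ℝ)^j) ≤ (m:ℝ)^m * (1/(2*C))^j := by
      have h7 : (1/(2*C):ℝ)^j = (((2:ℝ)*C)^j)⁻¹ := by
        rw [one_div, inv_pow]
      rw [Real.exp_neg, h7]
      rw [inv_le_iff_one_le_mul₀ (Real.exp_pos _)]
      have h8 : (m:ℝ)^m * ((2*C)^j)⁻¹ * Real.exp ((2:ℝ)^j)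
          = ((m:ℝ)^m * Real.exp ((2:ℝ)^j)) / (2*C)^j := by ring
      rw [h8, le_div_iff₀ (by positivity), one_mul]
      exact hkey
    simp only [auxS]
    have hθ : C * ((2*C*(m:ℝ)^m) * ((1/(2*C))^(j+1))) = (2*C*(m:ℝ)^m) * ((1/(2*C))^j) / 2 := by
      rw [pow_succ]
      field_simp
    have h8 : C * Real.exp (-(2:ℝ)^j) ≤ (2*C*(m:ℝ)^m) * ((1/(2*C))^j) / 2 := by
      calc C * Real.exp (-(2:ℝ)^j) ≤ C * ((m:ℝ)^m * (1/(2*C))^j) :=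
            mul_le_mul_of_nonneg_left hexp (le_of_lt hC0)
      _ = (2*C*(m:ℝ)^m) * ((1/(2*C))^j) / 2 := by ring
    have h9 : C * auxS C N (j+1) ≤ (2*C*(m:ℝ)^m) * ((1/(2*C))^j) / 2 := by
      calc C * auxS C N (j+1) ≤ C * ((2*C*(m:ℝ)^m) * ((1/(2*C))^(j+1))) :=
            mul_le_mul_of_nonneg_left ihj (le_of_lt hC0)
      _ = _ := hθ
    linarith

lemma aux_one_sub_inv_rpow {m : ℝ} (hm : 2 ≤ m) : (1/8:ℝ) ≤ (1 - 1/m) ^ m := by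
  have hm0 : (0:ℝ) < m := by linarith
  have hlog8 : (2:ℝ) ≤ Real.log 8 := by
    rw [Real.le_log_iff_exp_le (by norm_num)]
    have h := Real.exp_one_lt_d9
    have : Real.exp 2 = Real.exp 1 * Real.exp 1 := by
      rw [← Real.exp_add]; norm_num
    nlinarith [Real.exp_pos 1]
  have key : ((1/8:ℝ)) ^ (1/m) ≤ 1 - 1/m := by
    have h18 : ((1/8:ℝ)) ^ (1/m) = Real.exp (-(Real.log 8 / m)) := by
      rw [show ((1:ℝ)/8) = 8⁻¹ by norm_num, Real.rpow_def_of_pos (by norm_num)]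
      congr 1
      rw [Real.log_inv]
      ring
    rw [h18]
    have ht : 2/m ≤ Real.log 8 / m := by gcongr
    have hexp : 1 + 2/m ≤ Real.exp (Real.log 8 / m) := by
      have := Real.add_one_le_exp (Real.log 8 / m)
      linarith
    rw [Real.exp_neg]
    rw [inv_le_iff_one_le_mul₀ (Real.exp_pos _)]
    have hm1 : 0 < 1 - 1/m := by
      rw [sub_pos, div_lt_one hm0]; linarith
    calc (1:ℝ) ≤ (1 - 1/m) * (1 + 2/m) := by
          have : (1 - 1/m) * (1 + 2/m) - 1 = (m - 2)/m^2 := by field_simp; ring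
          nlinarith [div_nonneg (show (0:ℝ) ≤ m - 2 by linarith)
            (show (0:ℝ) ≤ m^2 by positivity)]
    _ ≤ (1 - 1/m) * Real.exp (Real.log 8 / m) :=
          mul_le_mul_of_nonneg_left hexp hm1.le
  calc (1/8:ℝ) = (((1/8:ℝ)) ^ (1/m)) ^ m := by
        rw [← Real.rpow_mul (by norm_num : (0:ℝ) ≤ 1/8), one_div_mul_cancel (ne_of_gt hm0),
          Real.rpow_one]
  _ ≤ (1 - 1/m) ^ m := by
        apply Real.rpow_le_rpow (Real.rpow_nonneg (by norm_num) _) key hm0.le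

set_option maxHeartbeats 2000000 in
/-- For ω ∈ D̂ there exist C ≥ 1 and η > 0 such that ω_x ≤ C (y/x)^η ω_y
for all 0 < x ≤ y. -/
theorem stmt_2 (ω : ℝ → ℝ) (hnn : ∀ r, 0 ≤ ω r)
    (hInt : IntegrableOn ω (Set.Ico (0:ℝ) 1))
    (What : ℝ → ℝ) (hWhat : ∀ r, What r = ∫ s in Set.Ioc r 1, ω s)
    (hpos : ∀ r ∈ Set.Ico (0:ℝ) 1, 0 < What r)
    (hD : ∃ C ≥ (1:ℝ), ∀ r ∈ Set.Ico (0:ℝ) 1, What r ≤ C * What ((1 + r) / 2))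
    (mom : ℝ → ℝ) (hmom : ∀ x, mom x = ∫ s in Set.Ioc (0:ℝ) 1, s ^ x * ω s) :
    ∃ C ≥ (1:ℝ), ∃ η > (0:ℝ), ∀ x y : ℝ, 0 < x → x ≤ y →
      mom x ≤ C * (y / x) ^ η * mom y := by
  obtain ⟨C, hC1, hDC⟩ := hD
  have hC0 : (0:ℝ) < C := lt_of_lt_of_le one_pos hC1
  -- integrability
  have hres : (volume : Measure ℝ).restrict (Ioc (0:ℝ) 1) = volume.restrict (Ico (0:ℝ) 1) :=
    (Measure.restrict_congr_set
      (MeasureTheory.Ico_ae_eq_Ioc' (measure_singleton _) (measure_singleton _))).symm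
  have hIω : IntegrableOn ω (Ioc (0:ℝ) 1) := by
    rw [IntegrableOn, hres]; exact hInt
  have hIx : ∀ x : ℝ, 0 ≤ x → IntegrableOn (fun s => s ^ x * ω s) (Ioc (0:ℝ) 1) := by
    intro x hx
    apply Integrable.mono hIω
    · exact ((Real.continuous_rpow_const hx).measurable.aestronglyMeasurable.mul
        hIω.aestronglyMeasurable)
    · rw [ae_restrict_iff' measurableSet_Ioc]
      filter_upwards with s hs
      have h1 : (0:ℝ) < s := hs.1
      have h2 : s ^ x ≤ 1 := Real.rpow_le_one h1.le hs.2 hx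
      have h3 : 0 ≤ s ^ x := Real.rpow_nonneg h1.le x
      rw [Real.norm_eq_abs, Real.norm_eq_abs, abs_of_nonneg (mul_nonneg h3 (hnn s)),
        abs_of_nonneg (hnn s)]
      nlinarith [hnn s]
  have hIxsub : ∀ x : ℝ, 0 ≤ x → ∀ a b : ℝ, 0 ≤ a → b ≤ 1 →
      IntegrableOn (fun s => s ^ x * ω s) (Ioc a b) := by
    intro x hx a b ha hb
    exact (hIx x hx).mono_set (Ioc_subset_Ioc ha hb)
  have hWnn : ∀ a : ℝ, 0 ≤ What a := by
    intro a; rw [hWhat]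
    exact setIntegral_nonneg measurableSet_Ioc (fun s _ => hnn s)
  -- splitting
  have hsplit : ∀ (x b c : ℝ), 0 ≤ x → 0 ≤ b → b ≤ c → c ≤ 1 →
      (∫ s in Ioc (0:ℝ) c, s ^ x * ω s)
        = (∫ s in Ioc (0:ℝ) b, s ^ x * ω s) + ∫ s in Ioc b c, s ^ x * ω s := by
    intro x b c hx hb hbc hc1
    rw [← Ioc_union_Ioc_eq_Ioc hb hbc]
    exact setIntegral_union (Set.Ioc_disjoint_Ioc_of_le le_rfl) measurableSet_Ioc
      (hIxsub x hx 0 b le_rfl (le_trans hbc hc1))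
      (hIxsub x hx b c hb hc1)
  -- upper bound on pieces
  have hup : ∀ (x a b : ℝ), 0 ≤ x → 0 ≤ a → a ≤ b → b ≤ 1 →
      (∫ s in Ioc a b, s ^ x * ω s) ≤ b ^ x * What a := by
    intro x a b hx ha hab hb1
    have hbx : 0 ≤ b ^ x := Real.rpow_nonneg (le_trans ha hab) x
    calc (∫ s in Ioc a b, s ^ x * ω s) ≤ ∫ s in Ioc a b, b ^ x * ω s := by
          apply setIntegral_mono_on (hIxsub x hx a b ha hb1)
            (((hIω.mono_set (Ioc_subset_Ioc ha hb1))).const_mul _) measurableSet_Ioc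
          intro s hs
          have : s ^ x ≤ b ^ x :=
            Real.rpow_le_rpow (le_trans ha hs.1.le) hs.2 hx
          exact mul_le_mul_of_nonneg_right this (hnn s)
    _ = b ^ x * ∫ s in Ioc a b, ω s := by rw [integral_const_mul]
    _ ≤ b ^ x * What a := by
          apply mul_le_mul_of_nonneg_left _ hbx
          rw [hWhat]
          apply setIntegral_mono_set (hIω.mono_set (Ioc_subset_Ioc ha le_rfl))
            (Filter.Eventually.of_forall (fun s => hnn s))
            (HasSubset.Subset.eventuallyLE (Ioc_subset_Ioc le_rfl hb1))
  -- lower bound on tail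
  have hlowWhat : ∀ (x a : ℝ), 0 ≤ x → 0 ≤ a → a ≤ 1 →
      a ^ x * What a ≤ ∫ s in Ioc a 1, s ^ x * ω s := by
    intro x a hx ha ha1
    rw [hWhat, ← integral_const_mul]
    apply setIntegral_mono_on ((hIω.mono_set (Ioc_subset_Ioc ha le_rfl)).const_mul _)
      (hIxsub x hx a 1 ha le_rfl) measurableSet_Ioc
    intro s hs
    have : a ^ x ≤ s ^ x := Real.rpow_le_rpow ha hs.1.le hx
    exact mul_le_mul_of_nonneg_right this (hnn s)
  have hmomtail : ∀ (x a : ℝ), 0 ≤ x → 0 ≤ a → a ≤ 1 → a ^ x * What a ≤ mom x := by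
    intro x a hx ha ha1
    rw [hmom, hsplit x a 1 hx ha ha1 le_rfl]
    have h1 := hlowWhat x a hx ha ha1
    have h2 : (0:ℝ) ≤ ∫ s in Ioc (0:ℝ) a, s ^ x * ω s := by
      apply setIntegral_nonneg measurableSet_Ioc
      intro s hs
      exact mul_nonneg (Real.rpow_nonneg hs.1.le x) (hnn s)
    linarith
  have hmom_pos : ∀ x : ℝ, 0 ≤ x → 0 < mom x := by
    intro x hx
    have h := hmomtail x (1/2) hx (by norm_num) (by norm_num)
    have h2 : 0 < (1/2:ℝ) ^ x * What (1/2) :=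
      mul_pos (Real.rpow_pos_of_pos (by norm_num) x) (hpos _ ⟨by norm_num, by norm_num⟩)
    linarith
  have hmom_anti : ∀ x y : ℝ, 0 < x → x ≤ y → mom y ≤ mom x := by
    intro x y hx hxy
    rw [hmom, hmom]
    apply setIntegral_mono_on (hIx y (by linarith)) (hIx x hx.le) measurableSet_Ioc
    intro s hs
    exact mul_le_mul_of_nonneg_right
      (Real.rpow_le_rpow_of_exponent_ge hs.1 hs.2 hxy) (hnn s)
  have hmom_le_What0 : ∀ x : ℝ, 0 ≤ x → mom x ≤ What 0 := by
    intro x hx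
    rw [hmom, hWhat]
    apply setIntegral_mono_on (hIx x hx) hIω measurableSet_Ioc
    intro s hs
    nlinarith [Real.rpow_le_one hs.1.le hs.2 hx, hnn s, Real.rpow_nonneg hs.1.le x]
  -- the dyadic sequence
  set r : ℕ → ℝ := fun N => 1 - (1/2:ℝ)^N with hrdef
  have hr0 : r 0 = 0 := by simp [hrdef]
  have hrmem : ∀ N, r N ∈ Ico (0:ℝ) 1 := by
    intro N
    constructor
    · have : (1/2:ℝ)^N ≤ 1 := pow_le_one₀ (by norm_num) (by norm_num)
      simp only [hrdef]; linarith
    · have : (0:ℝ) < (1/2:ℝ)^N := by positivity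
      simp only [hrdef]; linarith
  have hrmono : ∀ N, r N ≤ r (N+1) := by
    intro N
    have : (1/2:ℝ)^(N+1) ≤ (1/2:ℝ)^N :=
      pow_le_pow_of_le_one (by norm_num) (by norm_num) (Nat.le_succ N)
    simp only [hrdef]; linarith
  have hrsucc : ∀ N, r (N+1) = (1 + r N)/2 := by
    intro N
    simp only [hrdef, pow_succ]
    ring
  have hWD : ∀ N, What (r N) ≤ C * What (r (N+1)) := by
    intro N
    rw [hrsucc]
    exact hDC (r N) (hrmem N)
  have hWpos : ∀ N, 0 < What (r N) := fun N => hpos _ (hrmem N)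
  -- head estimate
  have hg : ∀ N j (x : ℝ), (2:ℝ)^(N+j) ≤ x →
      (∫ s in Ioc (0:ℝ) (r N), s ^ x * ω s) ≤ auxS C N j * What (r N) := by
    intro N
    induction N with
    | zero =>
      intro j x hx
      rw [hr0]
      simp [auxS]
    | succ N ih =>
      intro j x hx
      have hx0 : (0:ℝ) ≤ x := le_trans (by positivity) hx
      have hsp := hsplit x (r N) (r (N+1)) hx0 (hrmem N).1 (hrmono N) (hrmem (N+1)).2.le
      rw [hsp]
      have h1 : (∫ s in Ioc (0:ℝ) (r N), s ^ x * ω s) ≤ auxS C N (j+1) * What (r N) := by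
        apply ih (j+1) x
        rw [show N + (j+1) = (N+1) + j by ring]
        exact hx
      have h2 := hup x (r N) (r (N+1)) hx0 (hrmem N).1 (hrmono N) (hrmem (N+1)).2.le
      have h3 : (r (N+1)) ^ x ≤ Real.exp (-(2:ℝ)^j) := by
        have hu : r (N+1) ≤ Real.exp (-(1/2:ℝ)^(N+1)) := by
          have := Real.add_one_le_exp (-(1/2:ℝ)^(N+1))
          simp only [hrdef]
          linarith
        have h4 : (r (N+1)) ^ x ≤ (Real.exp (-(1/2:ℝ)^(N+1))) ^ x :=
          Real.rpow_le_rpow (hrmem (N+1)).1 hu hx0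
        have h5 : (Real.exp (-(1/2:ℝ)^(N+1))) ^ x = Real.exp (-(1/2:ℝ)^(N+1) * x) := by
          rw [← Real.exp_mul]
        have h6 : Real.exp (-(1/2:ℝ)^(N+1) * x) ≤ Real.exp (-(2:ℝ)^j) := by
          apply Real.exp_le_exp.mpr
          have hkey : ((1/2:ℝ))^(N+1) * (2:ℝ)^(N+1+j) = (2:ℝ)^j := by
            rw [one_div, inv_pow, pow_add (2:ℝ) (N+1) j, ← mul_assoc,
              inv_mul_cancel₀ (by positivity), one_mul]
          nlinarith [pow_pos (show (0:ℝ) < 1/2 by norm_num) (N+1), hx,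
            mul_le_mul_of_nonneg_left hx (pow_pos (show (0:ℝ) < 1/2 by norm_num) (N+1)).le]
        calc (r (N+1)) ^ x ≤ _ := h4
        _ = _ := h5
        _ ≤ _ := h6
      have hSnn : 0 ≤ auxS C N (j+1) := auxS_nonneg hC0.le N (j+1)
      have hexpnn : 0 ≤ Real.exp (-(2:ℝ)^j) := (Real.exp_pos _).le
      have hcomb : (∫ s in Ioc (0:ℝ) (r N), s ^ x * ω s) + (∫ s in Ioc (r N) (r (N+1)), s ^ x * ω s)
          ≤ (auxS C N (j+1) + Real.exp (-(2:ℝ)^j)) * What (r N) := by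
        have := mul_le_mul_of_nonneg_right h3 (hWpos N).le
        nlinarith [hWpos N]
      calc _ ≤ (auxS C N (j+1) + Real.exp (-(2:ℝ)^j)) * What (r N) := hcomb
      _ ≤ (auxS C N (j+1) + Real.exp (-(2:ℝ)^j)) * (C * What (r (N+1))) := by
          apply mul_le_mul_of_nonneg_left (hWD N) (by positivity)
      _ = auxS C (N+1) j * What (r (N+1)) := by
          simp only [auxS]
          ring
    -- series bound
  obtain ⟨m0, hm0⟩ := pow_unbounded_of_one_lt (2*C) (show (1:ℝ) < 2 by norm_num)
  have hm : 2*C ≤ 2^(m0+1) := by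
    have : ((2:ℝ))^m0 ≤ 2^(m0+1) := by
      apply pow_le_pow_right₀ one_le_two (Nat.le_succ m0)
    linarith
  have hm1 : 1 ≤ m0 + 1 := Nat.succ_le_succ (Nat.zero_le _)
  set B := 2*C*((m0:ℝ)+1)^(m0+1) with hBdef
  have hB0 : 0 < B := by positivity
  have hSB : ∀ N, auxS C N 0 ≤ B := by
    intro N
    have h := auxS_le hC1 hm hm1 N 0
    rw [hBdef]
    push_cast at h
    simpa using h
  -- doubling constants
  set K1 := (B+1) * 4096 with hK1def
  set K2 := (16 * What 0) / What (1/2) with hK2def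
  set K := max 2 (max K1 K2) with hKdef
  have hK2 : (2:ℝ) ≤ K := le_max_left _ _
  have hK0 : (0:ℝ) < K := by linarith
  have hK1' : K1 ≤ K := le_trans (le_max_left _ _) (le_max_right _ _)
  have hK2' : K2 ≤ K := le_trans (le_max_right _ _) (le_max_right _ _)
  have hW12 : 0 < What (1/2) := hpos _ ⟨by norm_num, by norm_num⟩
  -- the doubling estimate
  have hdbl : ∀ x : ℝ, 0 < x → mom x ≤ K * mom (2*x) := by
    intro x hx
    have hmom2x : 0 < mom (2*x) := hmom_pos _ (by linarith)
    rcases le_or_gt 2 x with hx2 | hx2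
    · -- case x ≥ 2
      set N := ⌊Real.logb 2 x⌋₊ with hNdef
      have hlogb1 : (1:ℝ) ≤ Real.logb 2 x := by
        have : Real.logb 2 2 ≤ Real.logb 2 x :=
          Real.logb_le_logb_of_le (by norm_num : (1:ℝ) < 2) (by norm_num) hx2
        simpa using this
      have hN1 : 1 ≤ N := Nat.le_floor (by exact_mod_cast hlogb1)
      have hNle : ((2:ℝ))^(N:ℕ) ≤ x := by
        calc ((2:ℝ))^(N:ℕ) = (2:ℝ)^((N:ℝ)) := (Real.rpow_natCast 2 N).symm
        _ ≤ (2:ℝ)^(Real.logb 2 x) := Real.rpow_le_rpow_of_exponent_le (by norm_num)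
            (Nat.floor_le (le_trans zero_le_one hlogb1))
        _ = x := Real.rpow_logb (by norm_num) (by norm_num) (by linarith)
      have hNlt : x < ((2:ℝ))^(N+1 : ℕ) := by
        calc x = (2:ℝ)^(Real.logb 2 x) :=
              (Real.rpow_logb (by norm_num) (by norm_num) (by linarith)).symm
        _ < (2:ℝ)^(((N:ℝ)+1)) := by
              apply Real.rpow_lt_rpow_of_exponent_lt (by norm_num)
              exact_mod_cast Nat.lt_floor_add_one (Real.logb 2 x)
        _ = (2:ℝ)^(N+1 : ℕ) := by
              rw [← Real.rpow_natCast 2 (N+1)]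
              norm_num
      -- upper estimate for mom x
      have hupx : mom x ≤ (B+1) * What (r N) := by
        rw [hmom, hsplit x (r N) 1 (by linarith) (hrmem N).1 (hrmem N).2.le le_rfl]
        have hh : (∫ s in Ioc (0:ℝ) (r N), s ^ x * ω s) ≤ auxS C N 0 * What (r N) := by
          apply hg N 0 x
          simpa using hNle
        have ht := hup x (r N) 1 (by linarith) (hrmem N).1 (hrmem N).2.le le_rfl
        rw [Real.one_rpow, one_mul] at ht
        have hSB' := hSB N
        nlinarith [hWpos N]
      -- lower estimate for mom (2x)
      have hlow2x : (1/4096:ℝ) * What (r N) ≤ mom (2*x) := by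
        have h := hmomtail (2*x) (r N) (by linarith) (hrmem N).1 (hrmem N).2.le
        have hrp : (1/4096:ℝ) ≤ (r N)^(2*x) := by
          set M := ((2:ℝ))^(N:ℕ) with hMdef
          have hM2 : (2:ℝ) ≤ M := by
            calc (2:ℝ) = 2^(1:ℕ) := (pow_one 2).symm
            _ ≤ 2^(N:ℕ) := pow_le_pow_right₀ one_le_two hN1
          have hM0 : (0:ℝ) < M := by positivity
          have hrN : r N = 1 - 1/M := by
            simp only [hrdef, hMdef, one_div, inv_pow]
          have hrNpos : 0 < r N := by
            rw [hrN]
            have h1M : 1/M ≤ 1/2 := by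
              rw [div_le_div_iff₀ hM0 (by norm_num)]; linarith
            linarith
          have h2x : 2*x ≤ M*4 := by
            have hp : ((2:ℝ))^(N+1:ℕ) = 2*M := by rw [pow_succ]; ring
            nlinarith
          have step1 : (r N)^(M*4) ≤ (r N)^(2*x) :=
            Real.rpow_le_rpow_of_exponent_ge hrNpos (hrmem N).2.le h2x
          have step2 : (r N)^(M*(4:ℝ)) = ((r N)^(M))^((4:ℝ)) := by
            rw [← Real.rpow_mul (hrmem N).1]
          have step3 : (1/8:ℝ) ≤ (r N)^(M) := by
            rw [hrN]; exact aux_one_sub_inv_rpow hM2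
          have step4 : ((1/8:ℝ))^((4:ℝ)) ≤ ((r N)^(M))^((4:ℝ)) :=
            Real.rpow_le_rpow (by norm_num) step3 (by norm_num)
          have step5 : ((1/8:ℝ))^((4:ℝ)) = 1/4096 := by
            rw [show (4:ℝ) = ((4:ℕ):ℝ) by norm_num, Real.rpow_natCast]
            norm_num
          calc (1/4096:ℝ) = ((1/8:ℝ))^((4:ℝ)) := step5.symm
          _ ≤ ((r N)^(M))^((4:ℝ)) := step4
          _ = (r N)^(M*(4:ℝ)) := step2.symm
          _ ≤ (r N)^(2*x) := step1
        nlinarith [hWpos N]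
      -- combine
      have hB1 : (0:ℝ) ≤ B + 1 := by linarith
      calc mom x ≤ (B+1) * What (r N) := hupx
      _ = K1 * ((1/4096) * What (r N)) := by rw [hK1def]; ring
      _ ≤ K1 * mom (2*x) := by
          apply mul_le_mul_of_nonneg_left hlow2x
          rw [hK1def]; positivity
      _ ≤ K * mom (2*x) := mul_le_mul_of_nonneg_right hK1' hmom2x.le
    · -- case x < 2
      have h1 : mom x ≤ What 0 := hmom_le_What0 x hx.le
      have h2 : (1/16:ℝ) * What (1/2) ≤ mom (2*x) := by
        have h := hmomtail (2*x) (1/2) (by linarith) (by norm_num) (by norm_num)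
        have h3 : ((1/2:ℝ))^((4:ℝ)) ≤ (1/2:ℝ)^(2*x) :=
          Real.rpow_le_rpow_of_exponent_ge (by norm_num) (by norm_num) (by linarith)
        have h4 : ((1/2:ℝ))^((4:ℝ)) = 1/16 := by
          rw [show (4:ℝ) = ((4:ℕ):ℝ) by norm_num, Real.rpow_natCast]
          norm_num
        nlinarith [hWnn (1/2)]
      have hK2eq : K2 * ((1/16) * What (1/2)) = What 0 := by
        rw [hK2def]
        field_simp
      have hK20 : 0 ≤ K2 := by
        rw [hK2def]
        exact div_nonneg (by nlinarith [hWnn 0]) hW12.le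
      calc mom x ≤ What 0 := h1
      _ = K2 * ((1/16) * What (1/2)) := hK2eq.symm
      _ ≤ K2 * mom (2*x) := mul_le_mul_of_nonneg_left h2 hK20
      _ ≤ K * mom (2*x) := mul_le_mul_of_nonneg_right hK2' hmom2x.le
  -- iterate the doubling
  have hiter : ∀ n (x:ℝ), 0 < x → mom x ≤ K^n * mom ((2:ℝ)^n * x) := by
    intro n
    induction n with
    | zero => intro x hx; simp
    | succ n ih =>
      intro x hx
      have h1 := ih x hx
      have h2 := hdbl ((2:ℝ)^n * x) (by positivity)
      have hKn : (0:ℝ) ≤ K^n := by positivity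
      have harg : 2*((2:ℝ)^n * x) = (2:ℝ)^(n+1) * x := by rw [pow_succ]; ring
      calc mom x ≤ K^n * mom ((2:ℝ)^n * x) := h1
      _ ≤ K^n * (K * mom (2*((2:ℝ)^n * x))) := mul_le_mul_of_nonneg_left h2 hKn
      _ = K^(n+1) * mom ((2:ℝ)^(n+1) * x) := by rw [harg, pow_succ]; ring
  -- conclude
  refine ⟨K, by linarith, Real.log K / Real.log 2, ?_, ?_⟩
  · apply div_pos _ (Real.log_pos (by norm_num))
    apply Real.log_pos
    linarith
  intro x y hx hxy
  have hy : 0 < y := lt_of_lt_of_le hx hxy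
  set t := y/x with htdef
  have ht1 : 1 ≤ t := (one_le_div hx).mpr hxy
  have ht0 : 0 < t := by linarith
  set n := ⌈Real.logb 2 t⌉₊ with hndef
  have htn : t ≤ (2:ℝ)^n := by
    calc t = (2:ℝ)^(Real.logb 2 t) :=
          (Real.rpow_logb (by norm_num) (by norm_num) ht0).symm
    _ ≤ (2:ℝ)^((n:ℝ)) := Real.rpow_le_rpow_of_exponent_le (by norm_num) (Nat.le_ceil _)
    _ = (2:ℝ)^n := Real.rpow_natCast 2 n
  have hyx : y ≤ (2:ℝ)^n * x := by
    have : t * x = y := div_mul_cancel₀ y (ne_of_gt hx)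
    nlinarith
  have h1 := hiter n x hx
  have h2 : mom ((2:ℝ)^n * x) ≤ mom y := hmom_anti y ((2:ℝ)^n*x) hy hyx
  have h3 : K^n ≤ K * t^(Real.log K / Real.log 2) := by
    have hlogb_nn : 0 ≤ Real.logb 2 t := Real.logb_nonneg (by norm_num) ht1
    have hn_le : (n:ℝ) ≤ Real.logb 2 t + 1 := le_of_lt (Nat.ceil_lt_add_one hlogb_nn)
    have hlogK : 0 ≤ Real.log K := Real.log_nonneg (by linarith)
    have e1 : (K:ℝ)^n = Real.exp ((n:ℝ) * Real.log K) := by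
      rw [← Real.log_pow, Real.exp_log (by positivity)]
    have e2 : Real.exp ((n:ℝ) * Real.log K) ≤ Real.exp ((Real.logb 2 t + 1) * Real.log K) := by
      apply Real.exp_le_exp.mpr
      nlinarith
    have e3 : Real.exp ((Real.logb 2 t + 1) * Real.log K) = K * t^(Real.log K / Real.log 2) := by
      rw [add_mul, one_mul, Real.exp_add, Real.exp_log hK0, Real.rpow_def_of_pos ht0,
        Real.logb]
      rw [mul_comm]
      congr 1
      ring
    calc (K:ℝ)^n = Real.exp ((n:ℝ) * Real.log K) := e1
    _ ≤ Real.exp ((Real.logb 2 t + 1) * Real.log K) := e2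
    _ = K * t^(Real.log K / Real.log 2) := e3
  have hmy : 0 < mom y := hmom_pos y hy.le
  have hKn : (0:ℝ) ≤ K^n := by positivity
  calc mom x ≤ K^n * mom ((2:ℝ)^n * x) := h1
  _ ≤ K^n * mom y := mul_le_mul_of_nonneg_left h2 hKn
  _ ≤ (K * t^(Real.log K / Real.log 2)) * mom y :=
      mul_le_mul_of_nonneg_right h3 hmy.le
  _ = K * (y/x)^(Real.log K / Real.log 2) * mom y := by rw [htdef]
end

section
/- Let ω be a radial weight satisfying the converse condition: there exist constants K > 1 and C > 1 such that ω̂(r) ≥ C ω̂(1 - (1-r)/K) for all 0 ≤ r < 1. Assume also that ω̂(r) ≤ C' ((1-r)/(1-t))^β ω̂(t) for 0 ≤ r ≤ t < 1 (i.e., ω ∈ D̂). Then the moments satisfy ω_{2x} ≍ ω_x for x ≥ 1. -/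
open MeasureTheory Set Filter

/-- The auxiliary sequence `exp(-2^n/2) * (2^(n+1))^β` is summable. -/
lemma stmt_3_aux_summable (β : ℝ) :
    Summable (fun n : ℕ => Real.exp (-(2:ℝ)^n/2) * ((2:ℝ)^(n+1)) ^ β) := by
  set b : ℕ → ℝ := fun n => Real.exp (-(2:ℝ)^n/2) * ((2:ℝ)^(n+1)) ^ β with hb
  have hbpos : ∀ n, 0 < b n := fun n =>
    mul_pos (Real.exp_pos _) (Real.rpow_pos_of_pos (by positivity) β)
  have hbstep : ∀ n, b (n+1) = (Real.exp (-(2:ℝ)^n/2) * (2:ℝ)^β) * b n := by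
    intro n
    have h1 : (-(2:ℝ)^(n+1)/2) = (-(2:ℝ)^n/2) + (-(2:ℝ)^n/2) := by ring
    have h2 : ((2:ℝ)^(n+1+1)) = 2 * (2:ℝ)^(n+1) := by ring
    show Real.exp (-(2:ℝ)^(n+1)/2) * ((2:ℝ)^(n+1+1)) ^ β
        = (Real.exp (-(2:ℝ)^n/2) * (2:ℝ)^β) * (Real.exp (-(2:ℝ)^n/2) * ((2:ℝ)^(n+1)) ^ β)
    rw [h1, Real.exp_add, h2, Real.mul_rpow (by norm_num) (by positivity)]
    ring
  apply summable_of_ratio_norm_eventually_le (r := 1/2) (by norm_num)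
  obtain ⟨N, hN⟩ := exists_nat_gt (2*((β+1)*Real.log 2))
  rw [Filter.eventually_atTop]
  refine ⟨N, fun n hn => ?_⟩
  have h2n : (n:ℝ) ≤ (2:ℝ)^n := by exact_mod_cast (Nat.lt_two_pow_self (n := n)).le
  have hkey : (β+1)*Real.log 2 ≤ (2:ℝ)^n/2 := by
    have : (N:ℝ) ≤ (n:ℝ) := by exact_mod_cast hn
    linarith
  have hexp2 : (2:ℝ)^β * 2 ≤ Real.exp ((2:ℝ)^n/2) := by
    have h3 : Real.exp ((β+1)*Real.log 2) ≤ Real.exp ((2:ℝ)^n/2) := Real.exp_le_exp.mpr hkey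
    have h4 : Real.exp ((β+1)*Real.log 2) = (2:ℝ)^β * 2 := by
      rw [show (β+1)*Real.log 2 = Real.log 2 * β + Real.log 2 by ring, Real.exp_add,
        Real.exp_log (by norm_num : (0:ℝ) < 2), ← Real.rpow_def_of_pos (by norm_num : (0:ℝ) < 2)]
    linarith
  have hratio : Real.exp (-(2:ℝ)^n/2) * (2:ℝ)^β ≤ 1/2 := by
    have h5 : Real.exp (-(2:ℝ)^n/2) = (Real.exp ((2:ℝ)^n/2))⁻¹ := by
      rw [← Real.exp_neg]; ring_nf
    rw [h5, inv_mul_le_iff₀ (Real.exp_pos _)]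
    nlinarith [Real.exp_pos ((2:ℝ)^n/2)]
  have hq : 0 < Real.exp (-(2:ℝ)^n/2) * (2:ℝ)^β :=
    mul_pos (Real.exp_pos _) (Real.rpow_pos_of_pos (by norm_num) β)
  rw [hbstep n, Real.norm_eq_abs, Real.norm_eq_abs, abs_of_pos (mul_pos hq (hbpos n)),
    abs_of_pos (hbpos n)]
  calc Real.exp (-(2:ℝ)^n/2) * (2:ℝ)^β * b n ≤ (1/2) * b n :=
        mul_le_mul_of_nonneg_right hratio (hbpos n).le
    _ = 1/2 * b n := rfl

/-- If ω ∈ Ď and ω ∈ D̂ (the latter in the form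
ω̂(r) ≤ C'((1-r)/(1-t))^β ω̂(t) for r ≤ t), then ω_{2x} ≍ ω_x for x ≥ 1. -/
theorem stmt_3 (ω : ℝ → ℝ) (hnn : ∀ r, 0 ≤ ω r)
    (hInt : IntegrableOn ω (Set.Ico (0:ℝ) 1))
    (What : ℝ → ℝ) (hWhat : ∀ r, What r = ∫ s in Set.Ioc r 1, ω s)
    (hpos : ∀ r ∈ Set.Ico (0:ℝ) 1, 0 < What r)
    (hDcheck : ∃ K > (1:ℝ), ∃ C > (1:ℝ), ∀ r ∈ Set.Ico (0:ℝ) 1,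
      C * What (1 - (1 - r) / K) ≤ What r)
    (hDhat : ∃ C' > (0:ℝ), ∃ β > (0:ℝ), ∀ r t : ℝ, 0 ≤ r → r ≤ t → t < 1 →
      What r ≤ C' * ((1 - r) / (1 - t)) ^ β * What t)
    (mom : ℝ → ℝ) (hmom : ∀ x, mom x = ∫ s in Set.Ioc (0:ℝ) 1, s ^ x * ω s) :
    ∃ c > (0:ℝ), ∃ C > (0:ℝ), ∀ x ≥ (1:ℝ),
      c * mom x ≤ mom (2 * x) ∧ mom (2 * x) ≤ C * mom x := by
  classical
  obtain ⟨C', hC', β, hβ, hD⟩ := hDhat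
  -- integrability of ω on Ioc 0 1
  have hIoc : IntegrableOn ω (Ioc (0:ℝ) 1) := by
    have h1 : (Set.Ioc (0:ℝ) 1 : Set ℝ) =ᵐ[volume] Set.Ico (0:ℝ) 1 :=
      (MeasureTheory.Ioc_ae_eq_Icc).trans (MeasureTheory.Ico_ae_eq_Icc).symm
    exact hInt.congr_set_ae h1
  have hWnn : ∀ r, 0 ≤ What r := by
    intro r
    rw [hWhat]
    exact setIntegral_nonneg measurableSet_Ioc fun s _ => hnn s
  have hInt_sub : ∀ u v : ℝ, 0 ≤ u → v ≤ 1 → IntegrableOn ω (Ioc u v) := by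
    intro u v hu hv
    exact hIoc.mono_set fun s hs => ⟨lt_of_le_of_lt hu hs.1, le_trans hs.2 hv⟩
  -- integrability of s^x * ω s on Ioc 0 1
  have hg : ∀ x : ℝ, 0 ≤ x → IntegrableOn (fun s => s ^ x * ω s) (Ioc (0:ℝ) 1) := by
    intro x hx
    have hmeas : Measurable (fun s : ℝ => s ^ x) := by fun_prop
    have hm : AEStronglyMeasurable (fun s => s ^ x * ω s) (volume.restrict (Ioc (0:ℝ) 1)) :=
      (hmeas.aestronglyMeasurable).mul hIoc.aestronglyMeasurable
    apply Integrable.mono hIoc hm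
    filter_upwards [ae_restrict_mem measurableSet_Ioc] with s hs
    rw [Real.norm_eq_abs, Real.norm_eq_abs,
      abs_of_nonneg (mul_nonneg (Real.rpow_nonneg hs.1.le x) (hnn s)), abs_of_nonneg (hnn s)]
    calc s ^ x * ω s ≤ 1 * ω s :=
          mul_le_mul_of_nonneg_right (Real.rpow_le_one hs.1.le hs.2 hx) (hnn s)
      _ = ω s := one_mul _
  set b : ℕ → ℝ := fun n => Real.exp (-(2:ℝ)^n/2) * ((2:ℝ)^(n+1)) ^ β with hb
  have hbpos : ∀ n, 0 < b n := fun n =>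
    mul_pos (Real.exp_pos _) (Real.rpow_pos_of_pos (by positivity) β)
  have hbsum : Summable b := stmt_3_aux_summable β
  set S := ∑' n, b n with hS
  have hSnn : 0 ≤ S := tsum_nonneg fun n => (hbpos n).le
  have hCS : (0:ℝ) < 1 + C' * S := by nlinarith
  -- THE UPPER ESTIMATE : mom x ≤ (1 + C'·S) · What(1 - 1/(2x))
  have upper : ∀ x : ℝ, 1 ≤ x → mom x ≤ (1 + C' * S) * What (1 - 1/(2*x)) := by
    intro x hx
    have hx0 : (0:ℝ) < x := lt_of_lt_of_le one_pos hx
    set δ := 1/(2*x) with hδdef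
    have hδ0 : 0 < δ := by positivity
    have hδx : δ * x = 1/2 := by rw [hδdef]; field_simp
    have hδ2 : δ ≤ 1/2 := by
      rw [hδdef, div_le_div_iff₀ (by positivity) (by norm_num)]
      linarith
    set a := 1 - δ with hadef
    have ha0 : (0:ℝ) ≤ a := by rw [hadef]; linarith
    have ha1 : a < 1 := by rw [hadef]; linarith
    have h1a : 1 - a = δ := by rw [hadef]; ring
    set r : ℕ → ℝ := fun k => max (1 - 2^k * δ) 0 with hrdef
    have hrnn : ∀ k, 0 ≤ r k := fun k => le_max_right _ _
    have hrle1 : ∀ k, r k ≤ 1 := by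
      intro k
      apply max_le _ zero_le_one
      have : (0:ℝ) ≤ 2^k * δ := by positivity
      linarith
    have hrge : ∀ k, 1 - 2^k * δ ≤ r k := fun k => le_max_left _ _
    have hranti : ∀ k, r (k+1) ≤ r k := by
      intro k
      apply max_le_max _ le_rfl
      have h2 : (2:ℝ)^k * δ ≤ 2^(k+1) * δ := by
        have : (2:ℝ)^k ≤ 2^(k+1) := by
          apply pow_le_pow_right₀ (by norm_num) (Nat.le_succ k)
        nlinarith
      linarith
    have hr0 : r 0 = a := by
      rw [hrdef]
      simp only [pow_zero, one_mul]
      rw [max_eq_left (by linarith : (0:ℝ) ≤ 1 - δ), hadef]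
    have hrlea : ∀ k, r k ≤ a := by
      intro k
      induction k with
      | zero => rw [hr0]
      | succ n ih => exact le_trans (hranti n) ih
    have hWa : 0 < What a := hpos a ⟨ha0, ha1⟩
    have hsub : ∀ k, Ioc (r (k+1)) (r k) ⊆ Ioc (0:ℝ) 1 := by
      intro k s hs
      exact ⟨lt_of_le_of_lt (hrnn (k+1)) hs.1, le_trans hs.2 (hrle1 k)⟩
    have hsub1 : ∀ k, Ioc (r k) (1:ℝ) ⊆ Ioc (0:ℝ) 1 := by
      intro k s hs
      exact ⟨lt_of_le_of_lt (hrnn k) hs.1, hs.2⟩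
    -- bound for each piece
    have piece : ∀ n, ∫ s in Ioc (r (n+1)) (r n), s^x * ω s ≤ C' * b n * What a := by
      intro n
      by_cases hcase : 0 < 1 - 2^n * δ
      · have hrn : r n = 1 - 2^n * δ := max_eq_left hcase.le
        have hIone : IntegrableOn ω (Ioc (r (n+1)) 1) := hInt_sub _ _ (hrnn _) le_rfl
        have hI1 : IntegrableOn (fun s => s^x * ω s) (Ioc (r (n+1)) (r n)) :=
          (hg x (by linarith)).mono_set (hsub n)
        have hIsmall : IntegrableOn ω (Ioc (r (n+1)) (r n)) :=
          hIone.mono_set (Ioc_subset_Ioc le_rfl (hrle1 n))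
        have hI2 : IntegrableOn (fun s => (r n)^x * ω s) (Ioc (r (n+1)) (r n)) :=
          hIsmall.const_mul _
        have step1 : ∫ s in Ioc (r (n+1)) (r n), s^x * ω s
            ≤ ∫ s in Ioc (r (n+1)) (r n), (r n)^x * ω s := by
          apply setIntegral_mono_on hI1 hI2 measurableSet_Ioc
          intro s hs
          have hs0 : 0 ≤ s := le_trans (hrnn (n+1)) hs.1.le
          exact mul_le_mul_of_nonneg_right
            (Real.rpow_le_rpow hs0 hs.2 (by linarith)) (hnn s)
        have step2 : ∫ s in Ioc (r (n+1)) (r n), (r n)^x * ω s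
            = (r n)^x * ∫ s in Ioc (r (n+1)) (r n), ω s := by
          exact MeasureTheory.integral_const_mul _ _
        have step3 : ∫ s in Ioc (r (n+1)) (r n), ω s ≤ What (r (n+1)) := by
          rw [hWhat]
          apply setIntegral_mono_set hIone
            (Filter.Eventually.of_forall fun s => hnn s)
            (HasSubset.Subset.eventuallyLE (Ioc_subset_Ioc le_rfl (hrle1 n)))
        have step4 : What (r (n+1)) ≤ C' * ((2:ℝ)^(n+1))^β * What a := by
          have h4 := hD (r (n+1)) a (hrnn _) (hrlea _) ha1
          have h5 : ((1 - r (n+1))/(1 - a))^β ≤ ((2:ℝ)^(n+1))^β := by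
            apply Real.rpow_le_rpow
              (div_nonneg (by linarith [hrle1 (n+1)]) (by rw [h1a]; exact hδ0.le)) _ hβ.le
            rw [h1a, div_le_iff₀ hδ0]
            have := hrge (n+1)
            linarith
          calc What (r (n+1)) ≤ C' * ((1 - r (n+1))/(1-a))^β * What a := h4
            _ ≤ C' * ((2:ℝ)^(n+1))^β * What a := by
                exact mul_le_mul_of_nonneg_right
                  (mul_le_mul_of_nonneg_left h5 hC'.le) hWa.le
        have step5 : (r n)^x ≤ Real.exp (-(2:ℝ)^n / 2) := by
          rw [hrn]
          have h6 : (1 - 2^n * δ) ≤ Real.exp (-((2:ℝ)^n * δ)) := by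
            have := Real.add_one_le_exp (-((2:ℝ)^n * δ))
            linarith
          calc (1 - 2^n*δ)^x ≤ (Real.exp (-((2:ℝ)^n*δ)))^x :=
                Real.rpow_le_rpow hcase.le h6 (by linarith)
            _ = Real.exp (-((2:ℝ)^n*δ) * x) := (Real.exp_mul _ _).symm
            _ = Real.exp (-(2:ℝ)^n/2) := by
                congr 1
                have : -((2:ℝ)^n*δ) * x = -((2:ℝ)^n * (δ * x)) := by ring
                rw [this, hδx]
                ring
        have hrnx : 0 ≤ (r n)^x := Real.rpow_nonneg (hrnn n) x
        calc ∫ s in Ioc (r (n+1)) (r n), s^x * ω s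
            ≤ (r n)^x * What (r (n+1)) := by
              refine le_trans step1 ?_
              rw [step2]
              exact mul_le_mul_of_nonneg_left step3 hrnx
          _ ≤ Real.exp (-(2:ℝ)^n/2) * (C' * ((2:ℝ)^(n+1))^β * What a) :=
              mul_le_mul step5 step4 (hWnn _) (Real.exp_pos _).le
          _ = C' * b n * What a := by rw [hb]; ring
      · push_neg at hcase
        have h0 : r n = 0 := max_eq_right hcase
        have h0' : Ioc (r (n+1)) (r n) = ∅ := by
          rw [h0]
          exact Ioc_eq_empty (by simpa using hrnn (n+1))
        rw [h0', MeasureTheory.setIntegral_empty]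
        exact mul_nonneg (mul_nonneg hC'.le (hbpos n).le) hWa.le
    -- main induction
    have main : ∀ n, ∫ s in Ioc (r n) 1, s^x * ω s
        ≤ What a + C' * (∑ k ∈ Finset.range n, b k) * What a := by
      intro n
      induction n with
      | zero =>
        simp only [Finset.range_zero, Finset.sum_empty, mul_zero, zero_mul, add_zero]
        rw [hr0, hWhat]
        apply setIntegral_mono_on
          ((hg x (by linarith)).mono_set (by rw [← hr0]; exact hsub1 0))
          (hInt_sub a 1 ha0 le_rfl) measurableSet_Ioc
        intro s hs
        have hs0 : 0 < s := lt_of_le_of_lt ha0 hs.1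
        calc s^x * ω s ≤ 1 * ω s :=
              mul_le_mul_of_nonneg_right (Real.rpow_le_one hs0.le hs.2 (by linarith)) (hnn s)
          _ = ω s := one_mul _
      | succ n ih =>
        have hsplit : Ioc (r (n+1)) (1:ℝ) = Ioc (r (n+1)) (r n) ∪ Ioc (r n) 1 :=
          (Ioc_union_Ioc_eq_Ioc (hranti n) (hrle1 n)).symm
        rw [hsplit, setIntegral_union (Set.Ioc_disjoint_Ioc_of_le le_rfl) measurableSet_Ioc
          ((hg x (by linarith)).mono_set (hsub n)) ((hg x (by linarith)).mono_set (hsub1 n))]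
        calc _ ≤ (C' * b n * What a) + (What a + C' * (∑ k ∈ Finset.range n, b k) * What a) :=
              add_le_add (piece n) ih
          _ = What a + C' * (∑ k ∈ Finset.range (n+1), b k) * What a := by
              rw [Finset.sum_range_succ]; ring
    obtain ⟨N, hN⟩ := pow_unbounded_of_one_lt (1/δ) (one_lt_two (α := ℝ))
    have hrN : r N = 0 := by
      apply max_eq_right
      have h7 : (1:ℝ)/δ < 2^N := hN
      have h8 : 1 < 2^N * δ := by
        rw [div_lt_iff₀ hδ0] at h7
        linarith
      linarith
    have hmain := main N
    rw [hrN] at hmain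
    rw [hmom]
    calc ∫ s in Ioc (0:ℝ) 1, s^x * ω s
        ≤ What a + C' * (∑ k ∈ Finset.range N, b k) * What a := hmain
      _ ≤ What a + C' * S * What a := by
          have hsum : (∑ k ∈ Finset.range N, b k) ≤ S :=
            hbsum.sum_le_tsum _ (fun i _ => (hbpos i).le)
          have : C' * (∑ k ∈ Finset.range N, b k) * What a ≤ C' * S * What a := by
            apply mul_le_mul_of_nonneg_right _ hWa.le
            exact mul_le_mul_of_nonneg_left hsum hC'.le
          linarith
      _ = (1 + C' * S) * What a := by ring
  -- THE LOWER ESTIMATE : exp(-2/3) · What(1 - 1/(4x)) ≤ mom(2x)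
  have lower : ∀ x : ℝ, 1 ≤ x → Real.exp (-(2:ℝ)/3) * What (1 - 1/(4*x)) ≤ mom (2*x) := by
    intro x hx
    have hx0 : (0:ℝ) < x := by linarith
    set u := 1/(4*x) with hu
    have hu0 : 0 < u := by positivity
    have hu4 : u ≤ 1/4 := by
      rw [hu, div_le_div_iff₀ (by positivity) (by norm_num)]
      linarith
    have hux : u * x = 1/4 := by rw [hu]; field_simp
    set bb := 1 - u with hbbdef
    have hbb0 : (0:ℝ) ≤ bb := by rw [hbbdef]; linarith
    have hbb1 : bb < 1 := by rw [hbbdef]; linarith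
    have hexp : Real.exp (-(4*u/3)) ≤ bb := by
      have h1 : 1 + 4*u/3 ≤ Real.exp (4*u/3) := by
        have := Real.add_one_le_exp (4*u/3)
        linarith
      have h3 : (0:ℝ) < 1 + 4*u/3 := by linarith
      have h2 : (1:ℝ) ≤ (1-u)*(1+4*u/3) := by nlinarith
      rw [Real.exp_neg]
      calc (Real.exp (4*u/3))⁻¹ ≤ ((1:ℝ)+4*u/3)⁻¹ := by
            apply inv_anti₀ h3 h1
        _ ≤ bb := by
            rw [hbbdef, inv_eq_one_div, div_le_iff₀ h3]
            nlinarith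
    have hpow : Real.exp (-(2:ℝ)/3) ≤ bb ^ (2*x) := by
      calc Real.exp (-(2:ℝ)/3) = (Real.exp (-(4*u/3)))^(2*x) := by
            rw [← Real.exp_mul]
            congr 1
            have h9 : -(4*u/3) * (2*x) = -((8:ℝ)/3) * (u*x) := by ring
            rw [h9, hux]
            norm_num
        _ ≤ bb^(2*x) := Real.rpow_le_rpow (Real.exp_pos _).le hexp (by linarith)
    have hsubb : Ioc bb 1 ⊆ Ioc (0:ℝ) 1 := fun s hs => ⟨lt_of_le_of_lt hbb0 hs.1, hs.2⟩
    have h7 : ∫ s in Ioc bb 1, Real.exp (-(2:ℝ)/3) * ω s ≤ ∫ s in Ioc bb 1, s^(2*x) * ω s := by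
      apply setIntegral_mono_on ((hInt_sub bb 1 hbb0 le_rfl).const_mul _)
        ((hg (2*x) (by linarith)).mono_set hsubb) measurableSet_Ioc
      intro s hs
      have h10 : bb^(2*x) ≤ s^(2*x) := Real.rpow_le_rpow hbb0 hs.1.le (by linarith)
      exact mul_le_mul_of_nonneg_right (le_trans hpow h10) (hnn s)
    have h8 : ∫ s in Ioc bb 1, s^(2*x)*ω s ≤ ∫ s in Ioc (0:ℝ) 1, s^(2*x)*ω s := by
      apply setIntegral_mono_set (hg (2*x) (by linarith)) _
        (HasSubset.Subset.eventuallyLE hsubb)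
      filter_upwards [ae_restrict_mem measurableSet_Ioc] with s hs
      exact mul_nonneg (Real.rpow_nonneg hs.1.le _) (hnn s)
    rw [hmom, hWhat, ← MeasureTheory.integral_const_mul]
    exact le_trans h7 h8
  -- THE CHAIN : What(1 - 1/(2x)) ≤ C'·2^β · What(1 - 1/(4x))
  have chain : ∀ x : ℝ, 1 ≤ x →
      What (1 - 1/(2*x)) ≤ C' * (2:ℝ)^β * What (1 - 1/(4*x)) := by
    intro x hx
    have hx0 : (0:ℝ) < x := by linarith
    have hx' : x ≠ 0 := ne_of_gt hx0
    have h1 : (0:ℝ) ≤ 1 - 1/(2*x) := by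
      have : 1/(2*x) ≤ 1/2 := by
        rw [div_le_div_iff₀ (by positivity) (by norm_num)]; linarith
      linarith
    have h2 : 1 - 1/(2*x) ≤ 1 - 1/(4*x) := by
      have : 1/(4*x) ≤ 1/(2*x) := by
        rw [div_le_div_iff₀ (by positivity) (by positivity)]; linarith
      linarith
    have h3 : 1 - 1/(4*x) < 1 := by
      have : (0:ℝ) < 1/(4*x) := by positivity
      linarith
    have h := hD (1 - 1/(2*x)) (1 - 1/(4*x)) h1 h2 h3
    have hratio : (1 - (1 - 1/(2*x)))/(1 - (1 - 1/(4*x))) = 2 := by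
      field_simp
      ring
    rwa [hratio] at h
  -- ASSEMBLY
  set K := Real.exp ((2:ℝ)/3) * (C' * (2:ℝ)^β) * (1 + C'*S) with hK
  have hK0 : 0 < K := by
    apply mul_pos (mul_pos (Real.exp_pos _) (mul_pos hC' (Real.rpow_pos_of_pos two_pos β))) hCS
  refine ⟨K⁻¹, inv_pos.mpr hK0, 1, one_pos, fun x hx => ⟨?_, ?_⟩⟩
  · -- c · mom x ≤ mom (2x)
    have h2 : What (1 - 1/(4*x)) ≤ Real.exp ((2:ℝ)/3) * mom (2*x) := by
      have h3 := lower x hx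
      have h4 := mul_le_mul_of_nonneg_left h3 (Real.exp_pos ((2:ℝ)/3)).le
      rw [← mul_assoc, ← Real.exp_add,
        show (2:ℝ)/3 + -(2:ℝ)/3 = 0 by ring, Real.exp_zero, one_mul] at h4
      exact h4
    have h1 : mom x ≤ K * mom (2*x) := by
      calc mom x ≤ (1 + C'*S) * What (1 - 1/(2*x)) := upper x hx
        _ ≤ (1 + C'*S) * (C' * (2:ℝ)^β * What (1 - 1/(4*x))) :=
            mul_le_mul_of_nonneg_left (chain x hx) hCS.le
        _ ≤ (1 + C'*S) * (C' * (2:ℝ)^β * (Real.exp ((2:ℝ)/3) * mom (2*x))) := by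
            apply mul_le_mul_of_nonneg_left _ hCS.le
            exact mul_le_mul_of_nonneg_left h2
              (mul_nonneg hC'.le (Real.rpow_pos_of_pos two_pos β).le)
        _ = K * mom (2*x) := by rw [hK]; ring
    calc K⁻¹ * mom x ≤ K⁻¹ * (K * mom (2*x)) :=
          mul_le_mul_of_nonneg_left h1 (inv_nonneg.mpr hK0.le)
      _ = mom (2*x) := by rw [← mul_assoc, inv_mul_cancel₀ (ne_of_gt hK0), one_mul]
  · -- mom (2x) ≤ 1 · mom x
    rw [one_mul, hmom, hmom]
    apply setIntegral_mono_on (hg (2*x) (by linarith)) (hg x (by linarith)) measurableSet_Ioc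
    intro s hs
    exact mul_le_mul_of_nonneg_right
      (Real.rpow_le_rpow_of_exponent_ge hs.1 hs.2 (by linarith)) (hnn s)
end

section
/- Let 0 < p < ∞ and ω ∈ D̂. Then ∫_r^1 ω̂(t)(1-t)^{p-1} dt ≍ ω̂(r)(1-r)^p for all 0 ≤ r < 1, with constants depending only on p and ω. -/
open MeasureTheory Set

/-- If ω ∈ D̂ and 0 < p < ∞, then ∫_r^1 ω̂(t)(1-t)^{p-1} dt ≍ ω̂(r)(1-r)^p. -/
theorem stmt_5 (p : ℝ) (hp : 0 < p) (ω : ℝ → ℝ) (hnn : ∀ r, 0 ≤ ω r)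
    (hInt : IntegrableOn ω (Set.Ico (0:ℝ) 1))
    (What : ℝ → ℝ) (hWhat : ∀ r, What r = ∫ s in Set.Ioc r 1, ω s)
    (hpos : ∀ r ∈ Set.Ico (0:ℝ) 1, 0 < What r)
    (hD : ∃ C ≥ (1:ℝ), ∀ r ∈ Set.Ico (0:ℝ) 1, What r ≤ C * What ((1 + r) / 2)) :
    ∃ c > (0:ℝ), ∃ C > (0:ℝ), ∀ r ∈ Set.Ico (0:ℝ) 1,
      c * (What r * (1 - r) ^ p) ≤ (∫ t in Set.Ioc r 1, What t * (1 - t) ^ (p - 1)) ∧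
      (∫ t in Set.Ioc r 1, What t * (1 - t) ^ (p - 1)) ≤ C * (What r * (1 - r) ^ p) := by
  obtain ⟨C₀, hC₀1, hC₀⟩ := hD
  have hC₀0 : (0:ℝ) < C₀ := lt_of_lt_of_le one_pos hC₀1
  set q : ℝ := (1/2 : ℝ) ^ p with hq
  have hq1 : q < 1 := Real.rpow_lt_one (by norm_num) (by norm_num) hp
  have hq0 : 0 ≤ q := Real.rpow_nonneg (by norm_num) _
  -- integrability of ω on Icc 0 1
  have hIcc : IntegrableOn ω (Icc (0:ℝ) 1) := by
    rw [integrableOn_Icc_iff_integrableOn_Ioo]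
    exact hInt.mono_set (fun x hx => ⟨hx.1.le, hx.2⟩)
  -- splitting
  have hsplit : ∀ a b : ℝ, 0 ≤ a → a ≤ b → b ≤ 1 →
      What a = (∫ s in Ioc a b, ω s) + What b := by
    intro a b ha hab hb1
    rw [hWhat a, hWhat b, ← setIntegral_union (Set.Ioc_disjoint_Ioc_of_le le_rfl) measurableSet_Ioc
      (hIcc.mono_set (Ioc_subset_Icc_self.trans (Icc_subset_Icc ha hb1)))
      (hIcc.mono_set (Ioc_subset_Icc_self.trans (Icc_subset_Icc (ha.trans hab) le_rfl))),
      Ioc_union_Ioc_eq_Ioc hab hb1]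
  -- antitone
  have hWanti : ∀ a b : ℝ, 0 ≤ a → a ≤ b → b ≤ 1 → What b ≤ What a := by
    intro a b ha hab hb1
    have h0 : 0 ≤ ∫ s in Ioc a b, ω s :=
      setIntegral_nonneg measurableSet_Ioc (fun x _ => hnn x)
    have := hsplit a b ha hab hb1
    linarith
  have hWnn : ∀ t : ℝ, 0 ≤ What t := by
    intro t
    rw [hWhat t]
    exact setIntegral_nonneg measurableSet_Ioc (fun x _ => hnn x)
  -- continuity
  have hWcont : ContinuousOn What (Icc (0:ℝ) 1) := by
    have h1 := intervalIntegral.continuousOn_primitive (f := ω) (a := (0:ℝ)) (b := 1)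
      (μ := volume) hIcc
    have h2 : ContinuousOn (fun x => What 0 - ∫ t in Ioc 0 x, ω t) (Icc (0:ℝ) 1) :=
      continuousOn_const.sub h1
    refine h2.congr ?_
    intro x hx
    have := hsplit 0 x le_rfl hx.1 hx.2
    simp only [Pi.sub_apply]
    linarith
  -- integrability of (1-t)^(p-1)
  have hrpowInt : ∀ r : ℝ, r ≤ 1 → IntegrableOn (fun t => (1-t) ^ (p-1)) (Ioc r 1) := by
    intro r hr1
    have h := (intervalIntegral.intervalIntegrable_rpow' (a := 0) (b := 1 - r)
      (by linarith : (-1:ℝ) < p - 1)).comp_sub_left 1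
    simp only [sub_zero, sub_sub_cancel] at h
    exact (intervalIntegrable_iff_integrableOn_Ioc_of_le hr1).1 h.symm
  -- value of ∫ (1-t)^(p-1)
  have hval : ∀ a b : ℝ, a ≤ b → (∫ t in Ioc a b, (1-t) ^ (p-1)) = ((1-a)^p - (1-b)^p) / p := by
    intro a b hab
    rw [← intervalIntegral.integral_of_le hab]
    have h2 := intervalIntegral.integral_comp_sub_left (a := a) (b := b) (fun x => x ^ (p-1)) 1
    rw [h2, integral_rpow (Or.inl (by linarith))]
    rw [sub_add_cancel]
  -- integrability of the integrand
  have hFint : ∀ r : ℝ, 0 ≤ r → r < 1 →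
      IntegrableOn (fun t => What t * (1-t) ^ (p-1)) (Ioc r 1) := by
    intro r hr0 hr1
    have hsub : Ioc r 1 ⊆ Icc (0:ℝ) 1 := fun x hx => ⟨hr0.trans hx.1.le, hx.2⟩
    have hmeas : AEStronglyMeasurable (fun t => What t * (1-t) ^ (p-1))
        (volume.restrict (Ioc r 1)) := by
      refine AEStronglyMeasurable.mul ?_ ?_
      · exact ((hWcont.mono hsub).aestronglyMeasurable measurableSet_Ioc)
      · exact (Measurable.pow (measurable_const.sub measurable_id) measurable_const).aestronglyMeasurable
    refine Integrable.mono' ((hrpowInt r hr1.le).const_mul (What r)) hmeas ?_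
    filter_upwards [ae_restrict_mem measurableSet_Ioc] with t ht
    have h1 : 0 ≤ (1-t) ^ (p-1) := Real.rpow_nonneg (by linarith [ht.2]) _
    rw [Real.norm_eq_abs, abs_of_nonneg (mul_nonneg (hWnn t) h1)]
    exact mul_le_mul_of_nonneg_right (hWanti r t hr0 ht.1.le ht.2) h1
  refine ⟨(1 - q) / (p * C₀), div_pos (by linarith) (by positivity), 1/p, by positivity, ?_⟩
  rintro r ⟨hr0, hr1⟩
  set s : ℝ := (1 + r) / 2 with hs
  have hrs : r ≤ s := by rw [hs]; linarith
  have hs1 : s < 1 := by rw [hs]; linarith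
  have hs1' : 1 - s = (1 - r) / 2 := by rw [hs]; ring
  have hA0 : 0 ≤ (1 - r) ^ p := Real.rpow_nonneg (by linarith) _
  constructor
  · -- lower bound
    have hIs : (∫ t in Ioc r s, What s * (1-t) ^ (p-1)) ≤
        ∫ t in Ioc r s, What t * (1-t) ^ (p-1) := by
      refine setIntegral_mono_on
        (((hrpowInt r hr1.le).mono_set (Ioc_subset_Ioc_right hs1.le)).const_mul _)
        ((hFint r hr0 hr1).mono_set (Ioc_subset_Ioc_right hs1.le)) measurableSet_Ioc ?_
      intro t ht
      exact mul_le_mul_of_nonneg_right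
        (hWanti t s (hr0.trans ht.1.le) ht.2 hs1.le)
        (Real.rpow_nonneg (by linarith [lt_of_le_of_lt ht.2 hs1]) _)
    have hmono : (∫ t in Ioc r s, What t * (1-t) ^ (p-1)) ≤
        ∫ t in Ioc r 1, What t * (1-t) ^ (p-1) := by
      refine setIntegral_mono_set (hFint r hr0 hr1) ?_
        ((Ioc_subset_Ioc_right hs1.le).eventuallyLE)
      filter_upwards [ae_restrict_mem measurableSet_Ioc] with t ht
      exact mul_nonneg (hWnn t) (Real.rpow_nonneg (by linarith [ht.2]) _)
    have hIsval : (∫ t in Ioc r s, What s * (1-t) ^ (p-1)) =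
        What s * (((1-r)^p - (1-s)^p) / p) := by
      rw [integral_const_mul, hval r s hrs]
    have hqs : (1 - s) ^ p = (1 - r) ^ p * q := by
      rw [hs1', hq, ← Real.mul_rpow (by linarith) (by norm_num)]
      congr 1
      ring
    have hDr : What r ≤ C₀ * What s := hC₀ r ⟨hr0, hr1⟩
    have hkey : (1 - q) / (p * C₀) * (What r * (1 - r) ^ p) ≤
        What s * (((1-r)^p - (1-s)^p) / p) := by
      rw [hqs]
      have e1 : (1 - q) / (p * C₀) * (What r * (1 - r) ^ p)
          = ((1 - q) * (1 - r) ^ p / p) * (What r / C₀) := by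
        field_simp
      have e2 : What s * (((1-r)^p - (1-r)^p * q) / p)
          = ((1 - q) * (1 - r) ^ p / p) * What s := by ring
      rw [e1, e2]
      refine mul_le_mul_of_nonneg_left ?_ (div_nonneg (mul_nonneg (by linarith) hA0) hp.le)
      rw [div_le_iff₀ hC₀0]
      linarith [hDr]
    calc (1 - q) / (p * C₀) * (What r * (1 - r) ^ p)
        ≤ What s * (((1-r)^p - (1-s)^p) / p) := hkey
      _ = ∫ t in Ioc r s, What s * (1-t) ^ (p-1) := hIsval.symm
      _ ≤ ∫ t in Ioc r s, What t * (1-t) ^ (p-1) := hIs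
      _ ≤ ∫ t in Ioc r 1, What t * (1-t) ^ (p-1) := hmono
  · -- upper bound
    have h1 : (∫ t in Ioc r 1, What t * (1-t) ^ (p-1)) ≤
        ∫ t in Ioc r 1, What r * (1-t) ^ (p-1) := by
      refine setIntegral_mono_on (hFint r hr0 hr1)
        ((hrpowInt r hr1.le).const_mul _) measurableSet_Ioc ?_
      intro t ht
      exact mul_le_mul_of_nonneg_right (hWanti r t hr0 ht.1.le ht.2)
        (Real.rpow_nonneg (by linarith [ht.2]) _)
    have h2 : (∫ t in Ioc r 1, What r * (1-t) ^ (p-1)) = 1/p * (What r * (1 - r) ^ p) := by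
      rw [integral_const_mul, hval r 1 hr1.le]
      rw [sub_self, Real.zero_rpow hp.ne']
      ring
    linarith [h1, h2.le]
end

section
/- Let 0 < p < ∞ and let ω be a radial weight in D̂. Define h_ω(r) = ∫_r^1 (t - r)^{p-1} ω(t) dt. Then for every a ∈ [0,1), ∫_a^1 h_ω(s) s ds ≤ C ∫_a^1 ω̂(t)(1-t)^{p-1} dt for a constant C = C(p,ω) independent of a. -/
open MeasureTheory Set
open scoped ENNReal

private lemma aux_ii (p : ℝ) (hp : 0 < p) (a b c : ℝ) :
    IntervalIntegrable (fun s => (c - s) ^ (p - 1)) volume a b := by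
  have h := (intervalIntegral.intervalIntegrable_rpow'
      (a := c - a) (b := c - b) (r := p - 1) (by linarith)).comp_sub_left c
  simpa using h

private lemma aux_val (p : ℝ) (hp : 0 < p) {a b c : ℝ} (hab : a ≤ b) :
    ∫ s in Set.Ioc a b, (c - s) ^ (p - 1) = ((c - a) ^ p - (c - b) ^ p) / p := by
  rw [← intervalIntegral.integral_of_le hab,
    intervalIntegral.integral_comp_sub_left (fun x => x ^ (p - 1)) c,
    integral_rpow (Or.inl (by linarith))]
  rw [show p - 1 + 1 = p by ring]

/-- If ω ∈ D̂ and h_ω(r) = ∫_r^1 (t-r)^{p-1} ω(t) dt, then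
∫_a^1 h_ω(s) s ds ≤ C ∫_a^1 ω̂(t)(1-t)^{p-1} dt for all 0 ≤ a < 1. -/
theorem stmt_6 (p : ℝ) (hp : 0 < p) (ω : ℝ → ℝ) (hnn : ∀ r, 0 ≤ ω r)
    (hInt : IntegrableOn ω (Set.Ico (0:ℝ) 1))
    (What : ℝ → ℝ) (hWhat : ∀ r, What r = ∫ s in Set.Ioc r 1, ω s)
    (hpos : ∀ r ∈ Set.Ico (0:ℝ) 1, 0 < What r)
    (hD : ∃ C ≥ (1:ℝ), ∀ r ∈ Set.Ico (0:ℝ) 1, What r ≤ C * What ((1 + r) / 2))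
    (h : ℝ → ℝ) (hh : ∀ r, h r = ∫ t in Set.Ioc r 1, (t - r) ^ (p - 1) * ω t) :
    ∃ C > (0:ℝ), ∀ a ∈ Set.Ico (0:ℝ) 1,
      (∫ s in Set.Ioc a 1, h s * s) ≤
        C * ∫ t in Set.Ioc a 1, What t * (1 - t) ^ (p - 1) := by
  obtain ⟨C₀, hC₀1, hC₀⟩ := hD
  set q : ℝ := (1/2 : ℝ) ^ p with hqdef
  have hq1 : q < 1 := Real.rpow_lt_one (by norm_num) (by norm_num) hp
  have hq0 : 0 < q := Real.rpow_pos_of_pos (by norm_num) p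
  refine ⟨C₀ / (1 - q), div_pos (by linarith) (by linarith), ?_⟩
  intro a ha
  obtain ⟨ha0, ha1⟩ := ha
  -- measurable representative of ω
  obtain ⟨g0, hg0m, hg0e⟩ := hInt.1
  set g : ℝ → ℝ := fun x => max (g0 x) 0 with hgdef
  have hg : Measurable g := hg0m.measurable.max measurable_const
  have hgnn : ∀ x, 0 ≤ g x := fun x => le_max_right _ _
  have hge : ω =ᵐ[volume.restrict (Set.Ico (0:ℝ) 1)] g := by
    filter_upwards [hg0e] with x hx
    rw [hgdef]; simp only []
    rw [← hx, max_eq_left (hnn x)]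
  have key_ae : ∀ s : ℝ, 0 ≤ s → ω =ᵐ[volume.restrict (Set.Ioc s 1)] g := by
    intro s hs
    rw [← Measure.restrict_congr_set Ioo_ae_eq_Ioc]
    have hsub : Set.Ioo s 1 ⊆ Set.Ico (0:ℝ) 1 := fun x hx => ⟨le_trans hs hx.1.le, hx.2⟩
    exact ae_restrict_of_ae_restrict_of_subset hsub hge
  have hW0 : ∀ r, 0 ≤ What r := fun r => by
    rw [hWhat]; exact setIntegral_nonneg measurableSet_Ioc fun t _ => hnn t
  have hIntIoc : ∀ s : ℝ, 0 ≤ s → IntegrableOn ω (Set.Ioc s 1) := by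
    intro s hs
    have : IntegrableOn ω (Set.Ioo s 1) :=
      hInt.mono_set (fun x hx => ⟨le_trans hs hx.1.le, hx.2⟩)
    rwa [IntegrableOn, ← Measure.restrict_congr_set Ioo_ae_eq_Ioc]
  have hIntIocg : ∀ s : ℝ, 0 ≤ s → IntegrableOn g (Set.Ioc s 1) := by
    intro s hs; exact (hIntIoc s hs).congr_fun_ae (key_ae s hs)
  have hWg : ∀ s : ℝ, 0 ≤ s → What s = ∫ t in Set.Ioc s 1, g t := by
    intro s hs; rw [hWhat]; exact integral_congr_ae (key_ae s hs)
  -- the kernel for Tonelli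
  set Φ : ℝ × ℝ → ℝ≥0∞ := fun z =>
    Set.indicator {z : ℝ × ℝ | z.1 < z.2 ∧ z.2 ≤ 1}
      (fun z => ENNReal.ofReal ((z.2 - z.1) ^ (p - 1)) * ENNReal.ofReal (g z.2)) z
    with hΦdef
  have mset : MeasurableSet {z : ℝ × ℝ | z.1 < z.2 ∧ z.2 ≤ 1} :=
    (measurableSet_lt measurable_fst measurable_snd).inter
      (measurableSet_le measurable_snd measurable_const)
  have hΦm : Measurable Φ := by
    apply Measurable.indicator _ mset
    apply Measurable.mul (f := fun z : ℝ × ℝ => ENNReal.ofReal ((z.2 - z.1) ^ (p - 1)))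
      (g := fun z : ℝ × ℝ => ENNReal.ofReal (g z.2))
    · apply ENNReal.measurable_ofReal.comp
      fun_prop
    · exact ENNReal.measurable_ofReal.comp (hg.comp measurable_snd)
  -- Step A: pointwise bound
  have stepA : ∀ s ∈ Set.Ioc a 1, ENNReal.ofReal (h s * s) ≤ ∫⁻ t, Φ (s, t) := by
    intro s hs
    have hs0 : (0:ℝ) ≤ s := le_trans ha0 hs.1.le
    have hhs : 0 ≤ h s := by
      rw [hh]
      exact setIntegral_nonneg measurableSet_Ioc fun t ht =>
        mul_nonneg (Real.rpow_nonneg (by linarith [ht.1]) _) (hnn t)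
    have e1 : ∫⁻ t, Φ (s, t) =
        ∫⁻ t in Set.Ioc s 1, ENNReal.ofReal ((t - s) ^ (p - 1)) * ENNReal.ofReal (g t) := by
      have e0 : ∀ t, Φ (s, t) = (Set.Ioc s 1).indicator
          (fun t => ENNReal.ofReal ((t - s) ^ (p - 1)) * ENNReal.ofReal (g t)) t := by
        intro t
        simp only [hΦdef, Set.indicator, Set.mem_setOf_eq, Set.mem_Ioc]
      simp_rw [e0]
      rw [lintegral_indicator measurableSet_Ioc]
    calc ENNReal.ofReal (h s * s) ≤ ENNReal.ofReal (h s) :=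
          ENNReal.ofReal_le_ofReal (mul_le_of_le_one_right hhs hs.2)
      _ ≤ ∫⁻ t in Set.Ioc s 1, ENNReal.ofReal ((t - s) ^ (p - 1) * ω t) := by
          rw [hh]
          by_cases hi2 : IntegrableOn (fun t => (t - s) ^ (p - 1) * ω t) (Set.Ioc s 1)
          · rw [← ofReal_integral_eq_lintegral_ofReal hi2
              ((ae_restrict_mem measurableSet_Ioc).mono fun t ht =>
                mul_nonneg (Real.rpow_nonneg (by linarith [ht.1]) _) (hnn t))]
          · rw [integral_undef hi2]; simp
      _ = ∫⁻ t, Φ (s, t) := by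
          rw [e1]
          apply lintegral_congr_ae
          filter_upwards [key_ae s hs0, ae_restrict_mem measurableSet_Ioc] with t htg ht
          rw [ENNReal.ofReal_mul (Real.rpow_nonneg (by linarith [ht.1]) _), htg]
  -- Step B : Tonelli and the resulting bound
  have hB : (∫⁻ s in Set.Ioc a 1, ∫⁻ t, Φ (s, t)) ≤
      ENNReal.ofReal ((1 - a) ^ p / p * What a) := by
    have swap := lintegral_lintegral_swap (μ := volume.restrict (Set.Ioc a 1))
      (ν := volume) (f := fun s t => Φ (s, t)) hΦm.aemeasurable
    rw [swap]
    have point : ∀ t, (∫⁻ s in Set.Ioc a 1, Φ (s, t)) ≤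
        (Set.Ioc a 1).indicator
          (fun t => ENNReal.ofReal (g t) * ENNReal.ofReal ((t - a) ^ p / p)) t := by
      intro t
      by_cases ht : t ∈ Set.Ioc a 1
      · rw [Set.indicator_of_mem ht]
        have e0 : ∀ s, Φ (s, t) = (Set.Iio t).indicator
            (fun s => ENNReal.ofReal ((t - s) ^ (p - 1))) s * ENNReal.ofReal (g t) := by
          intro s
          simp only [hΦdef, Set.indicator, Set.mem_setOf_eq, Set.mem_Iio]
          by_cases hst : s < t
          · simp [hst, ht.2]
          · simp [hst]
        simp_rw [e0]
        rw [lintegral_mul_const' _ _ ENNReal.ofReal_ne_top]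
        rw [lintegral_indicator measurableSet_Iio, Measure.restrict_restrict measurableSet_Iio]
        have hset : Set.Iio t ∩ Set.Ioc a 1 = Set.Ioo a t := by
          ext s
          simp only [Set.mem_inter_iff, Set.mem_Iio, Set.mem_Ioc, Set.mem_Ioo]
          constructor
          · rintro ⟨h1, h2, h3⟩; exact ⟨h2, h1⟩
          · rintro ⟨h1, h2⟩; exact ⟨h2, h1, le_trans h2.le ht.2⟩
        rw [hset]
        have hval : (∫⁻ s in Set.Ioo a t, ENNReal.ofReal ((t - s) ^ (p - 1))) =
            ENNReal.ofReal ((t - a) ^ p / p) := by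
          rw [← ofReal_integral_eq_lintegral_ofReal
            (((aux_ii p hp a t t).1).mono_set Set.Ioo_subset_Ioc_self)
            ((ae_restrict_mem measurableSet_Ioo).mono fun s hs =>
              Real.rpow_nonneg (by linarith [hs.2]) _)]
          rw [← integral_Ioc_eq_integral_Ioo, aux_val p hp ht.1.le]
          rw [sub_self, Real.zero_rpow (ne_of_gt hp), sub_zero]
        rw [hval, mul_comm]
      · rw [Set.indicator_of_notMem ht]
        have e0 : ∀ s ∈ Set.Ioc a 1, Φ (s, t) = 0 := by
          intro s hs
          simp only [hΦdef, Set.indicator, Set.mem_setOf_eq]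
          rw [if_neg]
          rintro ⟨h1, h2⟩
          simp only [Set.mem_Ioc, not_and, not_le] at ht
          exact absurd h2 (not_le.mpr (ht (lt_trans hs.1 h1)))
        rw [setLIntegral_congr_fun measurableSet_Ioc e0, lintegral_zero]
    calc (∫⁻ t, ∫⁻ s in Set.Ioc a 1, Φ (s, t)) ≤
        ∫⁻ t, (Set.Ioc a 1).indicator
          (fun t => ENNReal.ofReal (g t) * ENNReal.ofReal ((t - a) ^ p / p)) t :=
          lintegral_mono point
      _ = ∫⁻ t in Set.Ioc a 1, ENNReal.ofReal (g t) * ENNReal.ofReal ((t - a) ^ p / p) :=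
          lintegral_indicator measurableSet_Ioc _
      _ ≤ ∫⁻ t in Set.Ioc a 1, ENNReal.ofReal ((1 - a) ^ p / p) * ENNReal.ofReal (g t) := by
          apply lintegral_mono_ae
          filter_upwards [ae_restrict_mem measurableSet_Ioc] with t ht
          rw [mul_comm]
          apply mul_le_mul_left
          apply ENNReal.ofReal_le_ofReal
          apply (div_le_div_iff_of_pos_right hp).mpr
          exact Real.rpow_le_rpow (by linarith [ht.1]) (by linarith [ht.2]) hp.le
      _ = ENNReal.ofReal ((1 - a) ^ p / p) * ∫⁻ t in Set.Ioc a 1, ENNReal.ofReal (g t) :=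
          lintegral_const_mul' _ _ ENNReal.ofReal_ne_top
      _ = ENNReal.ofReal ((1 - a) ^ p / p) * ENNReal.ofReal (What a) := by
          rw [← ofReal_integral_eq_lintegral_ofReal (hIntIocg a ha0)
            (ae_of_all _ hgnn), ← hWg a ha0]
      _ = ENNReal.ofReal ((1 - a) ^ p / p * What a) := by
          rw [ENNReal.ofReal_mul (div_nonneg (Real.rpow_nonneg (by linarith) _) hp.le)]
    -- measurability of What via lintegral
  set Ψ : ℝ → ℝ → ℝ≥0∞ := fun t u =>
    Set.indicator {z : ℝ × ℝ | z.1 < z.2 ∧ z.2 ≤ 1}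
      (fun z => ENNReal.ofReal (g z.2)) (t, u) with hΨdef
  have hΨm : Measurable (Function.uncurry Ψ) :=
    Measurable.indicator (ENNReal.measurable_ofReal.comp (hg.comp measurable_snd)) mset
  set Fl : ℝ → ℝ≥0∞ := fun t => ∫⁻ u, Ψ t u with hFldef
  have hFlm : Measurable Fl := hΨm.lintegral_prod_right'
  have hFl_eq : ∀ t : ℝ, 0 ≤ t → What t = (Fl t).toReal := by
    intro t ht0
    have e0 : ∀ u, Ψ t u = (Set.Ioc t 1).indicator (fun u => ENNReal.ofReal (g u)) u := by
      intro u; simp only [hΨdef, Set.indicator, Set.mem_setOf_eq, Set.mem_Ioc]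
    have e1 : Fl t = ∫⁻ u in Set.Ioc t 1, ENNReal.ofReal (g u) := by
      rw [hFldef]; simp only []; simp_rw [e0]; rw [lintegral_indicator measurableSet_Ioc]
    rw [e1, ← ofReal_integral_eq_lintegral_ofReal (hIntIocg t ht0) (ae_of_all _ hgnn),
      ENNReal.toReal_ofReal (setIntegral_nonneg measurableSet_Ioc fun u _ => hgnn u),
      ← hWg t ht0]
  have hmeasRHS : AEStronglyMeasurable (fun t => What t * (1 - t) ^ (p - 1))
      (volume.restrict (Set.Ioc a 1)) := by
    have hm : Measurable (fun t : ℝ => (Fl t).toReal * (1 - t) ^ (p - 1)) := by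
      apply Measurable.mul hFlm.ennreal_toReal
      fun_prop
    apply hm.aestronglyMeasurable.congr
    filter_upwards [ae_restrict_mem measurableSet_Ioc] with t ht
    rw [hFl_eq t (le_trans ha0 ht.1.le)]
  set M : ℝ := ∫ u in Set.Ico (0:ℝ) 1, ω u with hMdef
  have hM0 : 0 ≤ M := setIntegral_nonneg measurableSet_Ico fun u _ => hnn u
  have hWM : ∀ t : ℝ, 0 ≤ t → What t ≤ M := by
    intro t ht
    rw [hWhat, hMdef]
    have hsub : Set.Ioc t 1 \ Set.Ico 0 1 ⊆ {(1:ℝ)} := by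
      rintro x ⟨hx1, hx2⟩
      simp only [Set.mem_Ico, not_and, not_lt] at hx2
      exact Set.mem_singleton_iff.mpr (le_antisymm hx1.2 (hx2 (le_trans ht hx1.1.le)))
    exact setIntegral_mono_set hInt (ae_of_all _ hnn)
      (ae_le_set.mpr (measure_mono_null hsub (measure_singleton 1)))
  have hRHSnn : ∀ t ∈ Set.Ioc a 1, 0 ≤ What t * (1 - t) ^ (p - 1) := fun t ht =>
    mul_nonneg (hW0 t) (Real.rpow_nonneg (by linarith [ht.2]) _)
  have hRHSint : IntegrableOn (fun t => What t * (1 - t) ^ (p - 1)) (Set.Ioc a 1) := by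
    apply Integrable.mono (((aux_ii p hp a 1 1).1).const_mul M) hmeasRHS
    filter_upwards [ae_restrict_mem measurableSet_Ioc] with t ht
    have h1t : (0:ℝ) ≤ (1 - t) ^ (p - 1) := Real.rpow_nonneg (by linarith [ht.2]) _
    rw [Real.norm_eq_abs, Real.norm_eq_abs, abs_of_nonneg (hRHSnn t ht),
      abs_of_nonneg (mul_nonneg hM0 h1t)]
    exact mul_le_mul_of_nonneg_right (hWM t (le_trans ha0 ht.1.le)) h1t
  set m : ℝ := (1 + a) / 2 with hmdef
  have ham : a < m := by rw [hmdef]; linarith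
  have hm1 : m < 1 := by rw [hmdef]; linarith
  have hm0 : (0:ℝ) ≤ m := le_trans ha0 ham.le
  have hWam : What a ≤ C₀ * What m := hC₀ a ⟨ha0, ha1⟩
  have h1 : (∫ t in Set.Ioc a m, What t * (1 - t) ^ (p - 1)) ≤
      ∫ t in Set.Ioc a 1, What t * (1 - t) ^ (p - 1) :=
    setIntegral_mono_set hRHSint ((ae_restrict_mem measurableSet_Ioc).mono hRHSnn)
      (HasSubset.Subset.eventuallyLE (Set.Ioc_subset_Ioc_right hm1.le))
  have h2 : (∫ t in Set.Ioc a m, What m * (1 - t) ^ (p - 1)) ≤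
      ∫ t in Set.Ioc a m, What t * (1 - t) ^ (p - 1) := by
    apply setIntegral_mono_on (((aux_ii p hp a m 1).1).const_mul (What m))
      (hRHSint.mono_set (Set.Ioc_subset_Ioc_right hm1.le)) measurableSet_Ioc
    intro t ht
    have h1t : (0:ℝ) ≤ (1 - t) ^ (p - 1) :=
      Real.rpow_nonneg (by linarith [ht.2, hm1]) _
    have ht0 : (0:ℝ) ≤ t := le_trans ha0 ht.1.le
    apply mul_le_mul_of_nonneg_right _ h1t
    have hdecomp : What t = (∫ u in Set.Ioc t m, ω u) + What m := by
      rw [hWhat t, hWhat m, ← setIntegral_union (Set.Ioc_disjoint_Ioc_of_le le_rfl) measurableSet_Ioc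
        (hInt.mono_set fun u hu => ⟨le_trans ht0 hu.1.le, lt_of_le_of_lt hu.2 hm1⟩)
        (hIntIoc m hm0), Set.Ioc_union_Ioc_eq_Ioc ht.2 hm1.le]
    have hnn2 : 0 ≤ ∫ u in Set.Ioc t m, ω u :=
      setIntegral_nonneg measurableSet_Ioc fun u _ => hnn u
    linarith [hdecomp]
  have h3 : (∫ t in Set.Ioc a m, What m * (1 - t) ^ (p - 1)) =
      What m * ((1 - a) ^ p * (1 - q) / p) := by
    rw [integral_const_mul]
    congr 1
    rw [aux_val p hp ham.le]
    have e2 : (1 : ℝ) - m = (1 - a) * (1/2) := by rw [hmdef]; ring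
    rw [e2, Real.mul_rpow (by linarith) (by norm_num), ← hqdef]
    ring
  by_cases hi : Integrable (fun s => h s * s) (volume.restrict (Set.Ioc a 1))
  case neg =>
    rw [integral_undef hi]
    have hpos2 : 0 ≤ ∫ t in Set.Ioc a 1, What t * (1 - t) ^ (p - 1) :=
      setIntegral_nonneg measurableSet_Ioc hRHSnn
    have : (0:ℝ) < C₀ / (1 - q) := div_pos (by linarith) (by linarith)
    positivity
  case pos =>
  have hnnae : 0 ≤ᵐ[volume.restrict (Set.Ioc a 1)] fun s => h s * s := by
    filter_upwards [ae_restrict_mem measurableSet_Ioc] with s hs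
    have hs0 : (0:ℝ) ≤ s := le_trans ha0 hs.1.le
    have hhs : 0 ≤ h s := by
      rw [hh]
      exact setIntegral_nonneg measurableSet_Ioc fun t ht =>
        mul_nonneg (Real.rpow_nonneg (by linarith [ht.1]) _) (hnn t)
    exact mul_nonneg hhs hs0
  have hLHS : (∫ s in Set.Ioc a 1, h s * s) ≤ (1 - a) ^ p / p * What a := by
    rw [integral_eq_lintegral_of_nonneg_ae hnnae hi.1]
    have chain : (∫⁻ s in Set.Ioc a 1, ENNReal.ofReal (h s * s)) ≤
        ENNReal.ofReal ((1 - a) ^ p / p * What a) := by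
      refine le_trans (lintegral_mono_ae ?_) hB
      filter_upwards [ae_restrict_mem measurableSet_Ioc] with s hs
      exact stepA s hs
    calc (∫⁻ s in Set.Ioc a 1, ENNReal.ofReal (h s * s)).toReal
        ≤ (ENNReal.ofReal ((1 - a) ^ p / p * What a)).toReal :=
          ENNReal.toReal_mono ENNReal.ofReal_ne_top chain
      _ = (1 - a) ^ p / p * What a :=
          ENNReal.toReal_ofReal (mul_nonneg
            (div_nonneg (Real.rpow_nonneg (by linarith) _) hp.le) (hW0 a))
  have hcomb : (1 - a) ^ p / p * What a ≤
      (C₀ / (1 - q)) * (What m * ((1 - a) ^ p * (1 - q) / p)) := by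
    have e : (C₀ / (1 - q)) * (What m * ((1 - a) ^ p * (1 - q) / p)) =
        (1 - a) ^ p / p * (C₀ * What m) := by
      have hq' : (1:ℝ) - q ≠ 0 := by linarith
      field_simp
    rw [e]
    exact mul_le_mul_of_nonneg_left hWam
      (div_nonneg (Real.rpow_nonneg (by linarith) _) hp.le)
  calc (∫ s in Set.Ioc a 1, h s * s) ≤ (1 - a) ^ p / p * What a := hLHS
    _ ≤ (C₀ / (1 - q)) * (What m * ((1 - a) ^ p * (1 - q) / p)) := hcomb
    _ = (C₀ / (1 - q)) * ∫ t in Set.Ioc a m, What m * (1 - t) ^ (p - 1) := by rw [h3]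
    _ ≤ (C₀ / (1 - q)) * ∫ t in Set.Ioc a 1, What t * (1 - t) ^ (p - 1) :=
        mul_le_mul_of_nonneg_left (le_trans h2 h1)
          (le_of_lt (div_pos (by linarith) (by linarith)))
end

section
/- Let 1 < p < ∞ and let ω be a radial weight in D̂. Define h_ω(r) = ∫_r^1 (t-r)^{p-1} ω(t) dt. Then there exists a constant c = c(p,ω) > 0 such that h_ω(r) ≥ c ω̂(r)(1-r)^{p-1} for all 0 ≤ r < 1. -/
open MeasureTheory Set

/-- If 1 < p < ∞ and ω ∈ D̂, then h_ω(r) ≥ c ω̂(r)(1-r)^{p-1}. -/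
theorem stmt_7 (p : ℝ) (hp : 1 < p) (ω : ℝ → ℝ) (hnn : ∀ r, 0 ≤ ω r)
    (hInt : IntegrableOn ω (Set.Ico (0:ℝ) 1))
    (What : ℝ → ℝ) (hWhat : ∀ r, What r = ∫ s in Set.Ioc r 1, ω s)
    (hpos : ∀ r ∈ Set.Ico (0:ℝ) 1, 0 < What r)
    (hD : ∃ C ≥ (1:ℝ), ∀ r ∈ Set.Ico (0:ℝ) 1, What r ≤ C * What ((1 + r) / 2))
    (h : ℝ → ℝ) (hh : ∀ r, h r = ∫ t in Set.Ioc r 1, (t - r) ^ (p - 1) * ω t) :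
    ∃ c > (0:ℝ), ∀ r ∈ Set.Ico (0:ℝ) 1,
      c * (What r * (1 - r) ^ (p - 1)) ≤ h r := by
  obtain ⟨C, hC1, hC⟩ := hD
  have hC0 : (0:ℝ) < C := lt_of_lt_of_le one_pos hC1
  have h2p : (0:ℝ) < (2:ℝ) ^ (p - 1) := Real.rpow_pos_of_pos two_pos _
  refine ⟨(C * (2:ℝ) ^ (p - 1))⁻¹, by positivity, ?_⟩
  intro r hr
  obtain ⟨hr0, hr1⟩ := hr
  set m := (1 + r) / 2 with hm
  have hrm : r < m := by rw [hm]; linarith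
  have hm1 : m < 1 := by rw [hm]; linarith
  have hmr : m - r = (1 - r) / 2 := by rw [hm]; ring
  have h1r : (0:ℝ) < 1 - r := by linarith
  have hωIoo : IntegrableOn ω (Set.Ioo r 1) :=
    hInt.mono_set (fun x hx => ⟨le_of_lt (lt_of_le_of_lt hr0 hx.1), hx.2⟩)
  have hgmeas : Continuous fun t : ℝ => (t - r) ^ (p - 1) :=
    (continuous_id.sub continuous_const).rpow_const (fun _ => Or.inr (by linarith))
  have hfInt : IntegrableOn (fun t => (t - r) ^ (p - 1) * ω t) (Set.Ioo r 1) := by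
    refine hωIoo.mono' (hgmeas.aestronglyMeasurable.mul hωIoo.aestronglyMeasurable) ?_
    filter_upwards [ae_restrict_mem measurableSet_Ioo] with t ht
    have h1 : (0:ℝ) ≤ t - r := by linarith [ht.1]
    have h2 : (t - r) ^ (p - 1) ≤ 1 := by
      calc (t - r) ^ (p - 1) ≤ (1:ℝ) ^ (p - 1) :=
            Real.rpow_le_rpow h1 (by linarith [ht.2]) (by linarith)
        _ = 1 := Real.one_rpow _
    rw [Real.norm_eq_abs, abs_mul, abs_of_nonneg (Real.rpow_nonneg h1 _),
      abs_of_nonneg (hnn t)]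
    calc (t - r) ^ (p - 1) * ω t ≤ 1 * ω t := mul_le_mul_of_nonneg_right h2 (hnn t)
      _ = ω t := one_mul _
  rw [hh, MeasureTheory.integral_Ioc_eq_integral_Ioo]
  have hWm : What m = ∫ t in Set.Ioo m 1, ω t := by
    rw [hWhat, MeasureTheory.integral_Ioc_eq_integral_Ioo]
  have step1 : (∫ t in Set.Ioo m 1, ((1 - r) / 2) ^ (p - 1) * ω t) ≤
      ∫ t in Set.Ioo m 1, (t - r) ^ (p - 1) * ω t := by
    apply setIntegral_mono_on
    · exact (hωIoo.mono_set (Set.Ioo_subset_Ioo hrm.le le_rfl)).const_mul _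
    · exact hfInt.mono_set (Set.Ioo_subset_Ioo hrm.le le_rfl)
    · exact measurableSet_Ioo
    · intro t ht
      have hle : ((1 - r) / 2) ≤ t - r := by
        have := ht.1; linarith [hmr]
      exact mul_le_mul_of_nonneg_right
        (Real.rpow_le_rpow (by linarith) hle (by linarith)) (hnn t)
  have step2 : (∫ t in Set.Ioo m 1, (t - r) ^ (p - 1) * ω t) ≤
      ∫ t in Set.Ioo r 1, (t - r) ^ (p - 1) * ω t := by
    apply setIntegral_mono_set hfInt
    · filter_upwards [ae_restrict_mem measurableSet_Ioo] with t ht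
      exact mul_nonneg (Real.rpow_nonneg (by linarith [ht.1]) _) (hnn t)
    · exact HasSubset.Subset.eventuallyLE (Set.Ioo_subset_Ioo hrm.le le_rfl)
  have key : ((1 - r) / 2) ^ (p - 1) * What m ≤
      ∫ t in Set.Ioo r 1, (t - r) ^ (p - 1) * ω t := by
    rw [hWm, ← MeasureTheory.integral_const_mul]
    exact step1.trans step2
  refine le_trans ?_ key
  have hWmr : What r / C ≤ What m := by
    rw [div_le_iff₀ hC0, mul_comm]
    exact hC r ⟨hr0, hr1⟩
  have hA : (0:ℝ) ≤ (1 - r) ^ (p - 1) / (2:ℝ) ^ (p - 1) :=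
    div_nonneg (Real.rpow_nonneg h1r.le _) h2p.le
  calc (C * (2:ℝ) ^ (p - 1))⁻¹ * (What r * (1 - r) ^ (p - 1))
      = (1 - r) ^ (p - 1) / (2:ℝ) ^ (p - 1) * (What r / C) := by
        field_simp
    _ ≤ (1 - r) ^ (p - 1) / (2:ℝ) ^ (p - 1) * What m :=
        mul_le_mul_of_nonneg_left hWmr hA
    _ = ((1 - r) / 2) ^ (p - 1) * What m := by
        rw [Real.div_rpow h1r.le (by norm_num : (0:ℝ) ≤ 2)]
end

section
/- Let 0 < p < ∞, p ≠ 2, and let ω be a radial weight. Then the spaces HL^ω_p and A^p_ω are different; more precisely, there is no constant C > 1 such that C^{-1}‖f‖_{HL^ω_p} ≤ ‖f‖_{A^p_ω} ≤ C‖f‖_{HL^ω_p} holds for all analytic f on the unit disc. In fact, for the monomials m_n(z) = z^n one has ‖m_n‖^p_{A^p_ω} = 2ω_{np+1} and ‖m_n‖^p_{HL^ω_p} = (n+1)^{p-2}ω_{np+1}, whose ratio tends to 0 or ∞ as n → ∞. -/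
open MeasureTheory Set Filter

lemma stmt9_iter_pow (n : ℕ) : ∀ m : ℕ, iteratedDeriv m (fun z : ℂ => z ^ n) =
    fun z => (n.descFactorial m : ℂ) * z ^ (n - m) := by
  intro m
  induction m with
  | zero => simp
  | succ m ih =>
    rw [iteratedDeriv_succ, ih]
    funext z
    rw [Nat.descFactorial_succ]
    have : deriv (fun z : ℂ => (n.descFactorial m : ℂ) * z ^ (n - m)) z =
        (n.descFactorial m : ℂ) * ((n - m : ℕ) * z ^ (n - m - 1)) := by
      rw [deriv_const_mul _ (differentiable_pow _ |>.differentiableAt)]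
      simp [deriv_pow]
    have he : n - m - 1 = n - (m + 1) := by omega
    rw [this, he]
    push_cast
    ring

/-- For p ≠ 2 the spaces HL^ω_p and A^p_ω differ: the monomial norms are
‖z^n‖^p_{A^p_ω} = 2ω_{np+1} and ‖z^n‖^p_{HL^ω_p} = (n+1)^{p-2}ω_{np+1}, the
ratio tends to 0 or ∞, and no constant C > 1 makes the two norms comparable
for all analytic f on the unit disc. -/
theorem stmt_9 (p : ℝ) (hp : 0 < p) (hpne : p ≠ 2)
    (ω : ℝ → ℝ) (hnn : ∀ r, 0 ≤ ω r)
    (hInt : IntegrableOn ω (Set.Ico (0:ℝ) 1))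
    (mom : ℝ → ℝ) (hmom : ∀ x, mom x = ∫ s in Set.Ioc (0:ℝ) 1, s ^ x * ω s)
    (hmompos : ∀ x : ℝ, 0 ≤ x → 0 < mom x) :
    (∀ n : ℕ, (1 / Real.pi) *
        (∫ z in Metric.ball (0:ℂ) 1, ‖z ^ n‖ ^ p * ω ‖z‖) =
        2 * mom ((n : ℝ) * p + 1)) ∧
    (∀ n : ℕ, (∑' m : ℕ,
        (‖iteratedDeriv m (fun z : ℂ => z ^ n) 0‖ / (m.factorial : ℝ)) ^ p *
          ((m : ℝ) + 1) ^ (p - 2) * mom ((m : ℝ) * p + 1)) =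
        ((n : ℝ) + 1) ^ (p - 2) * mom ((n : ℝ) * p + 1)) ∧
    (Tendsto (fun n : ℕ =>
        (2 * mom ((n : ℝ) * p + 1)) / (((n : ℝ) + 1) ^ (p - 2) * mom ((n : ℝ) * p + 1)))
        atTop atTop ∨
      Tendsto (fun n : ℕ =>
        (2 * mom ((n : ℝ) * p + 1)) / (((n : ℝ) + 1) ^ (p - 2) * mom ((n : ℝ) * p + 1)))
        atTop (nhds 0)) ∧
    ¬ ∃ C > (1:ℝ), ∀ f : ℂ → ℂ, AnalyticOnNhd ℂ f (Metric.ball 0 1) →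
      C⁻¹ * (∑' m : ℕ,
          (‖iteratedDeriv m f 0‖ / (m.factorial : ℝ)) ^ p *
            ((m : ℝ) + 1) ^ (p - 2) * mom ((m : ℝ) * p + 1)) ^ (1 / p) ≤
          ((1 / Real.pi) *
            ∫ z in Metric.ball (0:ℂ) 1, ‖f z‖ ^ p * ω ‖z‖) ^ (1 / p) ∧
        ((1 / Real.pi) *
            ∫ z in Metric.ball (0:ℂ) 1, ‖f z‖ ^ p * ω ‖z‖) ^ (1 / p) ≤
          C * (∑' m : ℕ,
            (‖iteratedDeriv m f 0‖ / (m.factorial : ℝ)) ^ p *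
              ((m : ℝ) + 1) ^ (p - 2) * mom ((m : ℝ) * p + 1)) ^ (1 / p) := by
  have hM : ∀ n : ℕ, 0 < mom ((n : ℝ) * p + 1) := fun n => hmompos _ (by positivity)
  -- Part 1
  have hA : ∀ n : ℕ, (1 / Real.pi) *
      (∫ z in Metric.ball (0:ℂ) 1, ‖z ^ n‖ ^ p * ω ‖z‖) =
      2 * mom ((n : ℝ) * p + 1) := by
    intro n
    set F : ℝ → ℝ := fun r => (Set.Iio (1:ℝ)).indicator (fun r => (r ^ n) ^ p * ω r) r with hF
    have h1 : (∫ z in Metric.ball (0:ℂ) 1, ‖z ^ n‖ ^ p * ω ‖z‖)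
        = ∫ z : ℂ, F ‖z‖ := by
      rw [← integral_indicator measurableSet_ball]
      congr 1
      funext z
      by_cases h : ‖z‖ < 1
      · simp [hF, indicator, h, norm_pow]
      · simp [hF, indicator, h]
    rw [h1, MeasureTheory.integral_fun_norm_addHaar volume F]
    have hdim : Module.finrank ℝ ℂ = 2 := Complex.finrank_real_complex
    rw [hdim]
    have hvol : volume.real (Metric.ball (0:ℂ) 1) = Real.pi := by
      simp [Measure.real, Complex.volume_ball]
    rw [hvol]
    have h2 : (∫ y in Set.Ioi (0:ℝ), y ^ (2 - 1) • F y)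
        = ∫ y in Set.Ioc (0:ℝ) 1, y ^ ((n:ℝ) * p + 1) * ω y := by
      have : ∀ y : ℝ, y ^ (2 - 1) • F y
          = (Set.Iio (1:ℝ)).indicator (fun y => y * ((y ^ n) ^ p * ω y)) y := by
        intro y
        by_cases h : y < 1 <;> simp [hF, indicator, h]
      simp_rw [this]
      rw [setIntegral_indicator measurableSet_Iio, Set.Ioi_inter_Iio,
        ← integral_Ioc_eq_integral_Ioo]
      refine setIntegral_congr_fun measurableSet_Ioc fun y hy => ?_
      have hy0 : 0 < y := hy.1
      have hnp : ((y:ℝ) ^ n) ^ p = y ^ ((n:ℝ) * p) := by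
        rw [← Real.rpow_natCast y n, ← Real.rpow_mul hy0.le]
      rw [hnp, Real.rpow_add hy0, Real.rpow_one]
      ring
    rw [h2, hmom]
    have hpi : Real.pi ≠ 0 := Real.pi_ne_zero
    simp only [smul_eq_mul, nsmul_eq_mul, Nat.cast_ofNat]
    field_simp
  -- Part 2
  have hH : ∀ n : ℕ, (∑' m : ℕ,
      (‖iteratedDeriv m (fun z : ℂ => z ^ n) 0‖ / (m.factorial : ℝ)) ^ p *
        ((m : ℝ) + 1) ^ (p - 2) * mom ((m : ℝ) * p + 1)) =
      ((n : ℝ) + 1) ^ (p - 2) * mom ((n : ℝ) * p + 1) := by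
    intro n
    have key : ∀ m : ℕ, iteratedDeriv m (fun z : ℂ => z ^ n) 0 =
        if m = n then (n.factorial : ℂ) else 0 := by
      intro m
      rw [stmt9_iter_pow n m]
      by_cases h : m = n
      · subst h; simp [Nat.descFactorial_self]
      · rcases lt_or_gt_of_ne h with hlt | hgt
        · simp [h, zero_pow (by omega : n - m ≠ 0)]
        · simp [h, Nat.descFactorial_eq_zero_iff_lt.2 hgt]
    rw [tsum_eq_single n]
    · rw [key n, if_pos rfl]
      simp [Complex.norm_natCast, div_self (by positivity : (n.factorial : ℝ) ≠ 0),
        Real.one_rpow]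
    · intro m hm
      rw [key m, if_neg hm]
      simp [Real.zero_rpow hp.ne']
  -- Part 3
  have hT : (Tendsto (fun n : ℕ =>
        (2 * mom ((n : ℝ) * p + 1)) / (((n : ℝ) + 1) ^ (p - 2) * mom ((n : ℝ) * p + 1)))
        atTop atTop ∨
      Tendsto (fun n : ℕ =>
        (2 * mom ((n : ℝ) * p + 1)) / (((n : ℝ) + 1) ^ (p - 2) * mom ((n : ℝ) * p + 1)))
        atTop (nhds 0)) := by
    have hsimp : ∀ n : ℕ,
        (2 * mom ((n : ℝ) * p + 1)) / (((n : ℝ) + 1) ^ (p - 2) * mom ((n : ℝ) * p + 1))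
        = 2 * ((n : ℝ) + 1) ^ (2 - p) := by
      intro n
      have hb : (0:ℝ) < (n : ℝ) + 1 := by positivity
      rw [show (2 * mom ((n : ℝ) * p + 1)) / (((n : ℝ) + 1) ^ (p - 2) * mom ((n : ℝ) * p + 1))
          = 2 / ((n : ℝ) + 1) ^ (p - 2) from by
        rw [div_mul_eq_div_div_swap, mul_div_assoc, div_self (hM n).ne', mul_one]]
      rw [div_eq_mul_inv, ← Real.rpow_neg hb.le, neg_sub]
    have hcomp : Tendsto (fun n : ℕ => (n : ℝ) + 1) atTop atTop :=
      tendsto_atTop_add_const_right _ 1 tendsto_natCast_atTop_atTop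
    rcases lt_or_gt_of_ne hpne with h | h
    · left
      refine Tendsto.congr (fun n => (hsimp n).symm) ?_
      exact (tendsto_rpow_atTop (by linarith)).comp hcomp |>.const_mul_atTop two_pos
    · right
      refine Tendsto.congr (fun n => (hsimp n).symm) ?_
      have h0 : Tendsto (fun n : ℕ => ((n : ℝ) + 1) ^ (2 - p)) atTop (nhds 0) := by
        have := (tendsto_rpow_neg_atTop (y := p - 2) (by linarith)).comp hcomp
        simpa [neg_sub, Function.comp_def] using this
      simpa using h0.const_mul 2
  refine ⟨hA, hH, hT, ?_⟩
  -- Part 4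
  rintro ⟨C, hC1, hall⟩
  have hC0 : (0:ℝ) < C := lt_trans one_pos hC1
  have hCp : (0:ℝ) < C ^ p := Real.rpow_pos_of_pos hC0 p
  have hbound : ∀ n : ℕ,
      (2 * mom ((n : ℝ) * p + 1)) / (((n : ℝ) + 1) ^ (p - 2) * mom ((n : ℝ) * p + 1))
        ≤ C ^ p ∧
      (C ^ p)⁻¹ ≤
      (2 * mom ((n : ℝ) * p + 1)) / (((n : ℝ) + 1) ^ (p - 2) * mom ((n : ℝ) * p + 1)) := by
    intro n
    obtain ⟨h1, h2⟩ := hall (fun z => z ^ n) (analyticOnNhd_id.pow n)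
    rw [hA n, hH n] at h1 h2
    set An := 2 * mom ((n : ℝ) * p + 1) with hAn
    set Hn := ((n : ℝ) + 1) ^ (p - 2) * mom ((n : ℝ) * p + 1) with hHn
    have hAnpos : 0 < An := by
      have := hM n; rw [hAn]; positivity
    have hHnpos : 0 < Hn := by
      have := hM n
      have : (0:ℝ) < ((n : ℝ) + 1) ^ (p - 2) := Real.rpow_pos_of_pos (by positivity) _
      rw [hHn]; positivity
    have cancel : ∀ x : ℝ, 0 ≤ x → (x ^ (1/p)) ^ p = x := by
      intro x hx
      rw [← Real.rpow_mul hx, one_div, inv_mul_cancel₀ hp.ne', Real.rpow_one]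
    constructor
    · -- An ≤ C^p * Hn
      have := Real.rpow_le_rpow (by positivity) h2 hp.le
      rw [cancel An hAnpos.le, Real.mul_rpow hC0.le (Real.rpow_nonneg hHnpos.le _),
        cancel Hn hHnpos.le] at this
      exact (div_le_iff₀ hHnpos).2 this
    · -- (C^p)⁻¹ * Hn ≤ An
      have := Real.rpow_le_rpow (by positivity) h1 hp.le
      rw [cancel An hAnpos.le, Real.mul_rpow (by positivity) (Real.rpow_nonneg hHnpos.le _),
        cancel Hn hHnpos.le, Real.inv_rpow hC0.le] at this
      exact (le_div_iff₀ hHnpos).2 this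
  rcases hT with hT | hT
  · obtain ⟨n, hn⟩ := (hT.eventually_gt_atTop (C ^ p)).exists
    exact absurd (hbound n).1 (not_le.2 hn)
  · obtain ⟨n, hn⟩ := (hT.eventually_lt_const (by positivity : (0:ℝ) < (C ^ p)⁻¹)).exists
    exact absurd (hbound n).2 (not_le.2 hn)
end

section
/- Let 0 < p ≤ 1 and ω ∈ D̂. Then sup_{0≤r<1} (1-r)^{2-1/p} / ω̂(r)^{1/p} < ∞ if and only if sup_{0≤r<1} (1-r) Σ_{k=1}^∞ r^{2(k-1)} / (ω̂(1-1/k)^{1/p} k^{2-1/p}) < ∞. -/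
open MeasureTheory Set

lemma aux_exp_bound {r : ℝ} (h : 1/2 ≤ r) (h1 : r < 1) :
    ((1:ℝ)/16) ^ (1 - r : ℝ) ≤ r := by
  have hL : (2:ℝ) ≤ Real.log 16 := by
    have h2 : Real.log 16 = 4 * Real.log 2 := by
      rw [show (16:ℝ) = 2^(4:ℕ) by norm_num, Real.log_pow]; push_cast; ring
    nlinarith [Real.log_two_gt_d9]
  set y := (1 - r) * Real.log 16 with hy
  have hy0 : 0 ≤ y := by
    have : 0 ≤ Real.log 16 := by linarith
    nlinarith
  have key : ((1:ℝ)/16) ^ (1 - r : ℝ) = Real.exp (-y) := by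
    rw [Real.rpow_def_of_pos (by norm_num : (0:ℝ) < 1/16)]
    rw [show Real.log (1/16) = -Real.log 16 by rw [one_div, Real.log_inv]]
    ring_nf
    congr 1; rw [hy]; ring
  rw [key, Real.exp_neg]
  have h2 : 1 + y ≤ Real.exp y := by linarith [Real.add_one_le_exp y]
  have h3 : (Real.exp y)⁻¹ ≤ (1 + y)⁻¹ := inv_anti₀ (by linarith) h2
  refine h3.trans ?_
  rw [inv_le_iff_one_le_mul₀ (by linarith)]
  have : 1 ≤ r * Real.log 16 := by nlinarith
  nlinarith

lemma aux_r16 {r : ℝ} (h : 1/2 ≤ r) (h1 : r < 1) :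
    (1/16 : ℝ) ≤ r ^ ((1 - r)⁻¹ : ℝ) := by
  have ht : (0:ℝ) < 1 - r := by linarith
  have h0 : (0:ℝ) ≤ (1/16:ℝ) ^ (1 - r : ℝ) := Real.rpow_nonneg (by norm_num) _
  have := Real.rpow_le_rpow h0 (aux_exp_bound h h1) (by positivity : (0:ℝ) ≤ (1-r)⁻¹)
  rwa [← Real.rpow_mul (by norm_num), mul_inv_cancel₀ ht.ne', Real.rpow_one] at this

lemma aux_pow_log {C : ℝ} (hC1 : 1 ≤ C) (k : ℕ) :
    C ^ (Nat.log 2 (k+1)) ≤ ((k:ℝ)+1) ^ (Real.logb 2 C) := by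
  have hC0 : (0:ℝ) < C := lt_of_lt_of_le one_pos hC1
  have hβ : 0 ≤ Real.logb 2 C := Real.logb_nonneg (by norm_num) hC1
  have hcast : ((k:ℝ)+1) = ((k+1 : ℕ) : ℝ) := by push_cast; ring
  calc C ^ (Nat.log 2 (k+1))
      = ((2:ℝ) ^ (Real.logb 2 C)) ^ (Nat.log 2 (k+1)) := by
        rw [Real.rpow_logb two_pos (by norm_num) hC0]
    _ = (2:ℝ) ^ (Real.logb 2 C * (Nat.log 2 (k+1) : ℝ)) := by
        rw [← Real.rpow_natCast ((2:ℝ) ^ (Real.logb 2 C)), ← Real.rpow_mul (by norm_num)]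
    _ ≤ (2:ℝ) ^ (Real.logb 2 C * Real.logb 2 ((k:ℝ)+1)) := by
        apply Real.rpow_le_rpow_of_exponent_le one_le_two
        apply mul_le_mul_of_nonneg_left _ hβ
        rw [hcast]; exact Real.natLog_le_logb _ _
    _ = ((2:ℝ) ^ (Real.logb 2 ((k:ℝ)+1))) ^ (Real.logb 2 C) := by
        rw [← Real.rpow_mul (by norm_num), mul_comm]
    _ = ((k:ℝ)+1) ^ (Real.logb 2 C) := by
        rw [Real.rpow_logb two_pos (by norm_num) (by positivity)]

set_option maxHeartbeats 2000000 in
/-- For 0 < p ≤ 1 and ω ∈ D̂: sup_{0≤r<1} (1-r)^{2-1/p}/ω̂(r)^{1/p} < ∞ iff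
sup_{0≤r<1} (1-r) Σ_{k≥1} r^{2(k-1)}/(ω̂(1-1/k)^{1/p} k^{2-1/p}) < ∞. -/
theorem stmt_11 (p : ℝ) (hp : 0 < p) (hp1 : p ≤ 1)
    (ω : ℝ → ℝ) (hnn : ∀ r, 0 ≤ ω r)
    (hInt : IntegrableOn ω (Set.Ico (0:ℝ) 1))
    (What : ℝ → ℝ) (hWhat : ∀ r, What r = ∫ s in Set.Ioc r 1, ω s)
    (hpos : ∀ r ∈ Set.Ico (0:ℝ) 1, 0 < What r)
    (hD : ∃ C ≥ (1:ℝ), ∀ r ∈ Set.Ico (0:ℝ) 1, What r ≤ C * What ((1 + r) / 2)) :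
    (∃ M : ℝ, ∀ r ∈ Set.Ico (0:ℝ) 1, (1 - r) ^ (2 - 1/p) / What r ^ (1/p) ≤ M) ↔
    (∃ M : ℝ, ∀ r ∈ Set.Ico (0:ℝ) 1,
      (1 - r) * (∑' k : ℕ, r ^ (2 * k) /
        (What (1 - 1 / ((k : ℝ) + 1)) ^ (1/p) * ((k : ℝ) + 1) ^ (2 - 1/p))) ≤ M) := by
  obtain ⟨C, hC1, hCd⟩ := hD
  have hC0 : (0:ℝ) < C := lt_of_lt_of_le one_pos hC1
  have hp' : 0 < 1/p := by positivity
  set α : ℝ := 2 - 1/p with hα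
  have hα1 : α ≤ 1 := by
    have : 1 ≤ 1/p := by rw [le_div_iff₀ hp]; linarith
    simp only [hα]; linarith
  -- basic facts about What
  have hWnn : ∀ r, 0 ≤ What r := by
    intro r; rw [hWhat]
    exact setIntegral_nonneg measurableSet_Ioc (fun x _ => hnn x)
  have hIntIoc : ∀ a : ℝ, 0 ≤ a → IntegrableOn ω (Set.Ioc a 1) := by
    intro a ha
    have h1 : IntegrableOn ω (Set.Ico a 1) :=
      hInt.mono_set (fun x hx => ⟨le_trans ha hx.1, hx.2⟩)
    exact h1.congr_set_ae ((Ioo_ae_eq_Ioc (μ := volume) (a := a) (b := 1)).symm.trans Ioo_ae_eq_Ico)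
  have hWm : ∀ a b : ℝ, 0 ≤ a → a ≤ b → What b ≤ What a := by
    intro a b ha hab
    rw [hWhat, hWhat]
    exact setIntegral_mono_set (hIntIoc a ha) (ae_of_all _ (fun x => hnn x))
      ((Ioc_subset_Ioc_left hab).eventuallyLE)
  have hW0 : 0 < What 0 := hpos 0 ⟨le_refl 0, one_pos⟩
  have hxmem : ∀ k : ℕ, (1 - 1/((k:ℝ)+1)) ∈ Set.Ico (0:ℝ) 1 := by
    intro k
    have hk1 : (1:ℝ) ≤ (k:ℝ)+1 := by have := Nat.cast_nonneg (α := ℝ) k; linarith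
    constructor
    · have : 1/((k:ℝ)+1) ≤ 1 := by rw [div_le_one (by linarith)]; linarith
      linarith
    · have : 0 < 1/((k:ℝ)+1) := by positivity
      linarith
  have hWk : ∀ k : ℕ, 0 < What (1 - 1/((k:ℝ)+1)) := fun k => hpos _ (hxmem k)
  -- nonnegativity of terms
  have htermnn : ∀ r : ℝ, 0 ≤ r → ∀ k : ℕ,
      0 ≤ r ^ (2*k) / (What (1 - 1/((k:ℝ)+1)) ^ (1/p) * ((k:ℝ)+1) ^ α) := by
    intro r hr k
    apply div_nonneg (pow_nonneg hr _)
    apply mul_nonneg (Real.rpow_nonneg (hWnn _) _) (Real.rpow_nonneg (by positivity) _)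
  -- dyadic lower bound from D̂
  have hdy : ∀ j : ℕ, What 0 ≤ C ^ j * What (1 - ((1:ℝ)/2)^j) := by
    intro j
    induction j with
    | zero => simp
    | succ j ih =>
      have hpj : (0:ℝ) < ((1:ℝ)/2)^j := by positivity
      have hpj1 : ((1:ℝ)/2)^j ≤ 1 := by
        apply pow_le_one₀ <;> norm_num
      have hmem : (1 - ((1:ℝ)/2)^j) ∈ Set.Ico (0:ℝ) 1 := ⟨by linarith, by linarith⟩
      have hstep := hCd _ hmem
      rw [show (1 + (1 - ((1:ℝ)/2)^j))/2 = 1 - ((1:ℝ)/2)^(j+1) by rw [pow_succ]; ring] at hstep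
      calc What 0 ≤ C ^ j * What (1 - ((1:ℝ)/2)^j) := ih
        _ ≤ C ^ j * (C * What (1 - ((1:ℝ)/2)^(j+1))) :=
            mul_le_mul_of_nonneg_left hstep (pow_nonneg hC0.le j)
        _ = C ^ (j+1) * What (1 - ((1:ℝ)/2)^(j+1)) := by rw [pow_succ]; ring
  -- polynomial lower bound on What at the points 1 - 1/(k+1)
  have hWlow : ∀ k : ℕ,
      What 0 / (C * ((k:ℝ)+1) ^ (Real.logb 2 C)) ≤ What (1 - 1/((k:ℝ)+1)) := by
    intro k
    set m := Nat.log 2 (k+1) + 1 with hm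
    have h2m : (k+1 : ℕ) < 2 ^ m := Nat.lt_pow_succ_log_self (by norm_num) (k+1)
    have h2mR : ((k:ℝ)+1) < 2 ^ m := by
      have := (Nat.cast_lt (α := ℝ)).mpr h2m
      push_cast at this ⊢; convert this using 2 <;> norm_num
    have hk0 : (0:ℝ) < (k:ℝ)+1 := by positivity
    have hlt : ((1:ℝ)/2)^m ≤ 1/((k:ℝ)+1) := by
      rw [div_pow, one_pow, div_le_div_iff₀ (by positivity) hk0]
      nlinarith
    have hx : 1 - 1/((k:ℝ)+1) ≤ 1 - ((1:ℝ)/2)^m := by linarith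
    have hmono := hWm _ _ (hxmem k).1 hx
    have hdy' := hdy m
    have hCm : C ^ m ≤ C * ((k:ℝ)+1) ^ (Real.logb 2 C) := by
      rw [hm, pow_succ, mul_comm (C ^ Nat.log 2 (k+1)) C]
      exact mul_le_mul_of_nonneg_left (aux_pow_log hC1 k) hC0.le
    have hCmpos : (0:ℝ) < C ^ m := pow_pos hC0 m
    have h1 : What 0 / (C * ((k:ℝ)+1) ^ (Real.logb 2 C)) ≤ What 0 / C ^ m :=
      div_le_div_of_nonneg_left hW0.le hCmpos hCm
    have h2 : What 0 / C ^ m ≤ What (1 - ((1:ℝ)/2)^m) := by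
      rw [div_le_iff₀ hCmpos]; linarith [hdy' ]
    linarith
  -- summability
  have hsummable : ∀ r : ℝ, 0 < r → r < 1 →
      Summable (fun k : ℕ => r ^ (2*k) /
        (What (1 - 1/((k:ℝ)+1)) ^ (1/p) * ((k:ℝ)+1) ^ α)) := by
    intro r hr0 hr1
    set β : ℝ := Real.logb 2 C with hβdef
    have hβ : 0 ≤ β := Real.logb_nonneg (by norm_num) hC1
    set K : ℝ := (C / What 0) ^ (1/p) with hKdef
    have hK0 : 0 < K := Real.rpow_pos_of_pos (by positivity) _
    set N : ℕ := ⌈β * (1/p) - α⌉₊ with hNdef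
    have hx2 : 0 < r^2 := by positivity
    have hx21 : r^2 < 1 := by nlinarith
    -- per-term bound
    have hbound : ∀ k : ℕ, r ^ (2*k) /
        (What (1 - 1/((k:ℝ)+1)) ^ (1/p) * ((k:ℝ)+1) ^ α)
        ≤ K * (((k:ℝ)+1)^N * (r^2)^k) := by
      intro k
      have hk0 : (0:ℝ) < (k:ℝ)+1 := by positivity
      have hk1 : (1:ℝ) ≤ (k:ℝ)+1 := by
        have := Nat.cast_nonneg (α := ℝ) k; linarith
      have hWkpos := hWk k
      have hginv : (What (1 - 1/((k:ℝ)+1)) ^ (1/p) * ((k:ℝ)+1) ^ α)⁻¹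
          ≤ K * ((k:ℝ)+1)^(N:ℝ) := by
        have hstep1 : (What (1 - 1/((k:ℝ)+1)))⁻¹ ≤ C * ((k:ℝ)+1)^β / What 0 := by
          rw [inv_le_iff_one_le_mul₀ hWkpos]
          have h := hWlow k
          have hcb : (0:ℝ) < C * ((k:ℝ)+1)^β := by
            have : (0:ℝ) < ((k:ℝ)+1)^β := Real.rpow_pos_of_pos hk0 _
            positivity
          rw [div_le_iff₀ hcb] at h
          rw [div_mul_eq_mul_div, le_div_iff₀ hW0]
          nlinarith
        have hstep2 : (What (1 - 1/((k:ℝ)+1)) ^ (1/p))⁻¹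
            ≤ (C * ((k:ℝ)+1)^β / What 0) ^ (1/p) := by
          rw [← Real.inv_rpow (hWnn _)]
          exact Real.rpow_le_rpow (by positivity) hstep1 hp'.le
        have hexpand : (C * ((k:ℝ)+1)^β / What 0) ^ (1/p)
            = K * ((k:ℝ)+1)^(β * (1/p)) := by
          rw [show C * ((k:ℝ)+1)^β / What 0 = (C/What 0) * ((k:ℝ)+1)^β by ring,
            Real.mul_rpow (by positivity) (Real.rpow_nonneg hk0.le _),
            ← Real.rpow_mul hk0.le, hKdef]
        rw [mul_inv, ← Real.rpow_neg hk0.le]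
        calc (What (1 - 1/((k:ℝ)+1)) ^ (1/p))⁻¹ * ((k:ℝ)+1)^(-α)
            ≤ (K * ((k:ℝ)+1)^(β * (1/p))) * ((k:ℝ)+1)^(-α) := by
              apply mul_le_mul_of_nonneg_right _ (Real.rpow_nonneg hk0.le _)
              rw [← hexpand]; exact hstep2
          _ = K * ((k:ℝ)+1)^(β * (1/p) - α) := by
              rw [mul_assoc, ← Real.rpow_add hk0, sub_eq_add_neg]
          _ ≤ K * ((k:ℝ)+1)^(N:ℝ) := by
              apply mul_le_mul_of_nonneg_left _ hK0.le
              exact Real.rpow_le_rpow_of_exponent_le hk1 (Nat.le_ceil _)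
      have hrw : r ^ (2*k) = (r^2)^k := by rw [pow_mul]
      rw [div_eq_mul_inv, hrw]
      calc (r^2)^k * (What (1 - 1/((k:ℝ)+1)) ^ (1/p) * ((k:ℝ)+1) ^ α)⁻¹
          ≤ (r^2)^k * (K * ((k:ℝ)+1)^(N:ℝ)) :=
            mul_le_mul_of_nonneg_left hginv (by positivity)
        _ = K * (((k:ℝ)+1)^N * (r^2)^k) := by
            rw [Real.rpow_natCast]; ring
    -- the majorant is summable
    have hmaj : Summable (fun k : ℕ => K * (((k:ℝ)+1)^N * (r^2)^k)) := by
      apply Summable.mul_left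
      have h1 : Summable (fun n : ℕ => (n:ℝ)^N * (r^2)^n) :=
        summable_pow_mul_geometric_of_norm_lt_one N
          (by rw [Real.norm_eq_abs, abs_of_pos hx2]; exact hx21)
      have h2 : Summable (fun k : ℕ => ((k:ℝ)+1)^N * (r^2)^(k+1)) := by
        have := h1.comp_injective (Nat.succ_injective)
        apply this.congr
        intro k
        simp only [Function.comp_apply, Nat.succ_eq_add_one]
        push_cast; ring
      have h3 := h2.mul_left ((r^2)⁻¹)
      apply h3.congr
      intro k
      field_simp
      ring
    exact Summable.of_nonneg_of_le (htermnn r hr0.le) hbound hmaj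
  constructor
  · -- forward: A ⇒ B
    rintro ⟨M, hM⟩
    have hM0 : 0 ≤ M := by
      have h0 := hM 0 ⟨le_refl 0, one_pos⟩
      have : (0:ℝ) ≤ (1 - 0) ^ α / What 0 ^ (1/p) :=
        div_nonneg (Real.rpow_nonneg (by norm_num) _) (Real.rpow_nonneg (hWnn 0) _)
      linarith
    refine ⟨M, ?_⟩
    rintro r ⟨hr0, hr1⟩
    have hx21 : r^2 < 1 := by nlinarith
    have hx20 : (0:ℝ) ≤ r^2 := by positivity
    have hterm : ∀ k : ℕ, r ^ (2*k) /
        (What (1 - 1/((k:ℝ)+1)) ^ (1/p) * ((k:ℝ)+1) ^ α) ≤ M * (r^2)^k := by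
      intro k
      have hk0 : (0:ℝ) < (k:ℝ)+1 := by positivity
      have hg : (What (1 - 1/((k:ℝ)+1)) ^ (1/p) * ((k:ℝ)+1) ^ α)⁻¹ ≤ M := by
        have hA := hM _ (hxmem k)
        rw [show (1 : ℝ) - (1 - 1/((k:ℝ)+1)) = 1/((k:ℝ)+1) by ring] at hA
        have heq : (What (1 - 1/((k:ℝ)+1)) ^ (1/p) * ((k:ℝ)+1) ^ α)⁻¹
            = (1/((k:ℝ)+1)) ^ α / What (1 - 1/((k:ℝ)+1)) ^ (1/p) := by
          rw [one_div, Real.inv_rpow hk0.le, mul_inv, div_eq_mul_inv]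
          ring
        rw [heq]; exact hA
      rw [div_eq_mul_inv, pow_mul]
      calc (r^2)^k * (What (1 - 1/((k:ℝ)+1)) ^ (1/p) * ((k:ℝ)+1) ^ α)⁻¹
          ≤ (r^2)^k * M := mul_le_mul_of_nonneg_left hg (by positivity)
        _ = M * (r^2)^k := mul_comm _ _
    have hgeo : Summable (fun k : ℕ => M * (r^2)^k) :=
      (summable_geometric_of_lt_one hx20 hx21).mul_left M
    have hsf : Summable (fun k : ℕ => r ^ (2*k) /
        (What (1 - 1/((k:ℝ)+1)) ^ (1/p) * ((k:ℝ)+1) ^ α)) :=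
      Summable.of_nonneg_of_le (htermnn r hr0) hterm hgeo
    have htsum : (∑' k : ℕ, r ^ (2*k) /
        (What (1 - 1/((k:ℝ)+1)) ^ (1/p) * ((k:ℝ)+1) ^ α)) ≤ M * (1-r^2)⁻¹ := by
      calc (∑' k : ℕ, r ^ (2*k) /
          (What (1 - 1/((k:ℝ)+1)) ^ (1/p) * ((k:ℝ)+1) ^ α))
          ≤ ∑' k : ℕ, M * (r^2)^k := Summable.tsum_le_tsum hterm hsf hgeo
        _ = M * (1-r^2)⁻¹ := by rw [tsum_mul_left, tsum_geometric_of_lt_one hx20 hx21]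
    have h1r : (0:ℝ) < 1 - r := by linarith
    have hfin : (1-r) * (M * (1-r^2)⁻¹) ≤ M := by
      have he : (1-r) * (M * (1-r^2)⁻¹) = M * (1+r)⁻¹ := by
        have h1 : (1:ℝ) - r^2 ≠ 0 := by nlinarith
        have h2 : (1:ℝ) + r ≠ 0 := by positivity
        field_simp
        ring
      rw [he]
      have : (1+r)⁻¹ ≤ 1 := by
        rw [inv_le_one_iff₀]; right; linarith
      calc M * (1+r)⁻¹ ≤ M * 1 := mul_le_mul_of_nonneg_left this hM0
        _ = M := mul_one M
    calc (1-r) * (∑' k : ℕ, r ^ (2*k) /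
        (What (1 - 1/((k:ℝ)+1)) ^ (1/p) * ((k:ℝ)+1) ^ α))
        ≤ (1-r) * (M * (1-r^2)⁻¹) := mul_le_mul_of_nonneg_left htsum h1r.le
      _ ≤ M := hfin
  · -- backward: B ⇒ A
    rintro ⟨M, hM⟩
    have hM0 : 0 ≤ M := by
      have h0 := hM 0 ⟨le_refl 0, one_pos⟩
      have : (0:ℝ) ≤ (1 - 0) * (∑' k : ℕ, (0:ℝ) ^ (2*k) /
          (What (1 - 1/((k:ℝ)+1)) ^ (1/p) * ((k:ℝ)+1) ^ α)) := by
        apply mul_nonneg (by norm_num)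
        exact tsum_nonneg (htermnn 0 le_rfl)
      linarith
    set c0 : ℝ := ((1:ℝ)/16)^(8:ℕ) with hc0
    have hc0pos : (0:ℝ) < c0 := by positivity
    have hWhalf : 0 < What (1/2) := hpos _ ⟨by norm_num, by norm_num⟩
    set M₀ : ℝ := max 1 (((1:ℝ)/2)^α) / What (1/2) ^ (1/p) with hM₀
    refine ⟨max M₀ (4/c0*M), ?_⟩
    rintro r ⟨hr0, hr1⟩
    have hWrpos : 0 < What r := hpos r ⟨hr0, hr1⟩
    have hWr1p : 0 < What r ^ (1/p) := Real.rpow_pos_of_pos hWrpos _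
    by_cases hr : r < 1/2
    · -- small r
      have hnum : (1-r)^α ≤ max 1 (((1:ℝ)/2)^α) := by
        rcases le_or_gt 0 α with hα0 | hα0
        · exact le_max_of_le_left (Real.rpow_le_one (by linarith) (by linarith) hα0)
        · exact le_max_of_le_right
            (Real.rpow_le_rpow_of_nonpos (by norm_num) (by linarith) hα0.le)
      have hden : What (1/2) ^ (1/p) ≤ What r ^ (1/p) :=
        Real.rpow_le_rpow (hWnn _) (hWm r (1/2) hr0 hr.le) hp'.le
      have hhalfp : 0 < What (1/2) ^ (1/p) := Real.rpow_pos_of_pos hWhalf _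
      have : (1-r)^α / What r ^ (1/p) ≤ M₀ := by
        rw [hM₀]
        exact div_le_div₀ (le_trans zero_le_one (le_max_left _ _)) hnum hhalfp hden
      exact le_trans this (le_max_left _ _)
    · push_neg at hr
      have h1r : (0:ℝ) < 1 - r := by linarith
      have hr0' : (0:ℝ) < r := by linarith
      set a : ℝ := (1-r)⁻¹ with hadef
      have ha0 : (0:ℝ) < a := by positivity
      have ha2 : (2:ℝ) ≤ a := by
        have h12 : (1:ℝ) - r ≤ 1/2 := by linarith
        calc (2:ℝ) = ((1:ℝ)/2)⁻¹ := by norm_num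
          _ ≤ (1-r)⁻¹ := inv_anti₀ h1r h12
      set n : ℕ := ⌈a⌉₊ with hndef
      have hn1 : a ≤ (n:ℝ) := Nat.le_ceil a
      have hn2 : (n:ℝ) ≤ 2*a := le_trans (Nat.ceil_lt_add_one ha0.le).le (by linarith)
      have hnpos : 1 ≤ n := by
        have : (1:ℝ) ≤ (n:ℝ) := by linarith
        exact_mod_cast this
      have haα : (0:ℝ) < a^α := Real.rpow_pos_of_pos ha0 _
      have hdenbig : (0:ℝ) < What r ^ (1/p) * (4 * a^α) :=
        mul_pos hWr1p (by positivity)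
      set b : ℝ := c0 * (What r ^ (1/p) * (4 * a^α))⁻¹ with hbdef
      have hbpos : 0 < b := mul_pos hc0pos (inv_pos.mpr hdenbig)
      have hterml : ∀ k ∈ Finset.Icc n (2*n-1), b ≤ r ^ (2*k) /
          (What (1 - 1/((k:ℝ)+1)) ^ (1/p) * ((k:ℝ)+1) ^ α) := by
        intro k hk
        rw [Finset.mem_Icc] at hk
        obtain ⟨hk1, hk2⟩ := hk
        have hka : a ≤ (k:ℝ) := le_trans hn1 (Nat.cast_le.mpr hk1)
        have hk0 : (0:ℝ) < (k:ℝ)+1 := by positivity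
        have hk4a : ((k:ℝ)+1) ≤ 4*a := by
          have h1 : (k:ℝ) ≤ ((2*n-1 : ℕ):ℝ) := Nat.cast_le.mpr hk2
          have h2 : ((2*n-1:ℕ):ℝ) = 2*(n:ℝ)-1 := by
            rw [Nat.cast_sub (by omega)]; push_cast; ring
          rw [h2] at h1
          linarith
        have hrx : r ≤ 1 - 1/((k:ℝ)+1) := by
          have h1 : 1/((k:ℝ)+1) ≤ 1-r := by
            rw [div_le_iff₀ hk0]
            have hprod : (1-r) * a = 1 := by rw [hadef]; field_simp
            calc (1:ℝ) = (1-r)*a := hprod.symm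
              _ ≤ (1-r)*((k:ℝ)+1) := mul_le_mul_of_nonneg_left (by linarith) h1r.le
          linarith
        have hWkp : What (1 - 1/((k:ℝ)+1)) ^ (1/p) ≤ What r ^ (1/p) :=
          Real.rpow_le_rpow (hWnn _) (hWm r _ hr0 hrx) hp'.le
        have hkα : ((k:ℝ)+1)^α ≤ 4*(a^α) := by
          rcases le_or_gt 0 α with hα0 | hα0
          · calc ((k:ℝ)+1)^α ≤ (4*a)^α := Real.rpow_le_rpow hk0.le hk4a hα0
              _ = 4^α * a^α := Real.mul_rpow (by norm_num) ha0.le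
              _ ≤ 4*(a^α) := by
                apply mul_le_mul_of_nonneg_right _ haα.le
                calc (4:ℝ)^α ≤ (4:ℝ)^(1:ℝ) :=
                      Real.rpow_le_rpow_of_exponent_le (by norm_num) hα1
                  _ = 4 := Real.rpow_one 4
          · have hak : a ≤ (k:ℝ)+1 := by linarith
            calc ((k:ℝ)+1)^α ≤ a^α := Real.rpow_le_rpow_of_nonpos ha0 hak hα0.le
              _ ≤ 4*(a^α) := by linarith
        have hrk : c0 ≤ r^(2*k) := by
          have h2k4n : 2*k ≤ 4*n := by omega
          have h1 : r^(4*n) ≤ r^(2*k) := pow_le_pow_of_le_one hr0'.le hr1.le h2k4n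
          have h2 : r ^ ((8:ℝ)*a) ≤ r^(((4*n : ℕ)):ℝ) := by
            apply Real.rpow_le_rpow_of_exponent_ge hr0' hr1.le
            push_cast; linarith
          have h3 : r^(((4*n:ℕ)):ℝ) = r^(4*n) := Real.rpow_natCast r (4*n)
          have h4 : c0 ≤ r^((8:ℝ)*a) := by
            have h16 := aux_r16 hr hr1
            have he : r ^ ((8:ℝ)*a) = (r ^ a)^(8:ℕ) := by
              rw [mul_comm, Real.rpow_mul hr0'.le,
                show ((8:ℝ)) = ((8:ℕ):ℝ) by norm_num, Real.rpow_natCast]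
            rw [he, hc0]
            exact pow_le_pow_left₀ (by norm_num) (by rw [hadef]; exact h16) 8
          rw [h3] at h2
          linarith
        have hdenle : What (1 - 1/((k:ℝ)+1)) ^ (1/p) * ((k:ℝ)+1)^α
            ≤ What r ^ (1/p) * (4 * a^α) :=
          mul_le_mul hWkp hkα (Real.rpow_nonneg hk0.le _) hWr1p.le
        have hdenpos : (0:ℝ) < What (1 - 1/((k:ℝ)+1)) ^ (1/p) * ((k:ℝ)+1)^α :=
          mul_pos (Real.rpow_pos_of_pos (hWk k) _) (Real.rpow_pos_of_pos hk0 _)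
        rw [hbdef, div_eq_mul_inv]
        exact mul_le_mul hrk (inv_anti₀ hdenpos hdenle) (by positivity) (by positivity)
      have hcard : (Finset.Icc n (2*n-1)).card = n := by
        rw [Nat.card_Icc]; omega
      have hsum : (n:ℝ) * b ≤ ∑ k ∈ Finset.Icc n (2*n-1), r ^ (2*k) /
          (What (1 - 1/((k:ℝ)+1)) ^ (1/p) * ((k:ℝ)+1) ^ α) := by
        have := Finset.card_nsmul_le_sum (Finset.Icc n (2*n-1)) _ b hterml
        rwa [hcard, nsmul_eq_mul] at this
      have htsumge : (∑ k ∈ Finset.Icc n (2*n-1), r ^ (2*k) /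
          (What (1 - 1/((k:ℝ)+1)) ^ (1/p) * ((k:ℝ)+1) ^ α))
          ≤ ∑' k : ℕ, r ^ (2*k) /
          (What (1 - 1/((k:ℝ)+1)) ^ (1/p) * ((k:ℝ)+1) ^ α) :=
        Summable.sum_le_tsum _ (fun k _ => htermnn r hr0 k) (hsummable r hr0' hr1)
      have hMb := hM r ⟨hr0, hr1⟩
      have hfinal : b ≤ M := by
        have h1 : (1-r) * ((n:ℝ)*b) ≤ M :=
          le_trans (mul_le_mul_of_nonneg_left (le_trans hsum htsumge) h1r.le) hMb
        have h2 : (1:ℝ) ≤ (1-r)*(n:ℝ) := by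
          have hprod : (1-r) * a = 1 := by rw [hadef]; field_simp
          calc (1:ℝ) = (1-r)*a := hprod.symm
            _ ≤ (1-r)*(n:ℝ) := mul_le_mul_of_nonneg_left hn1 h1r.le
        calc b = 1 * b := (one_mul b).symm
          _ ≤ ((1-r)*(n:ℝ)) * b := mul_le_mul_of_nonneg_right h2 hbpos.le
          _ = (1-r) * ((n:ℝ)*b) := by ring
          _ ≤ M := h1
      have haα' : a^α = ((1-r)^α)⁻¹ := by rw [hadef, Real.inv_rpow h1r.le]
      have h1rα : (0:ℝ) < (1-r)^α := Real.rpow_pos_of_pos h1r _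
      have hbeq : b = (c0/4) * ((1-r)^α / What r ^ (1/p)) := by
        rw [hbdef, haα']
        field_simp
      have hgoal : (1-r)^α / What r ^ (1/p) ≤ (4/c0)*M := by
        have hb := hfinal
        rw [hbeq] at hb
        rw [show (4:ℝ)/c0*M = M/(c0/4) by field_simp]
        rw [le_div_iff₀ (by positivity)]
        linarith
      exact le_trans hgoal (le_max_right _ _)
end

section
/- Let 0 < p ≤ 1 and ω ∈ D̂. Then limsup_{r→1⁻} (1-r)^{2-1/p} / ω̂(r)^{1/p} = 0 if and only if limsup_{r→1⁻} (1-r) Σ_{k=1}^∞ r^{2(k-1)} / (ω̂(1-1/k)^{1/p} k^{2-1/p}) = 0. -/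
open MeasureTheory Set Filter

lemma aux_limsup_eq_zero_iff {h : ℝ → ℝ} {l : Filter ℝ} [l.NeBot]
    (hnn : ∀ᶠ x in l, 0 ≤ h x) :
    Filter.limsup h l = 0 ↔
      (¬ Filter.IsBoundedUnder (· ≤ ·) l h) ∨ Filter.Tendsto h l (nhds 0) := by
  constructor
  · intro h0
    by_cases hb : Filter.IsBoundedUnder (· ≤ ·) l h
    · right
      refine tendsto_of_le_liminf_of_limsup_le ?_ (le_of_eq h0) hb ⟨0, by simpa using hnn⟩
      exact Filter.le_liminf_of_le hb.isCobounded_ge hnn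
    · exact Or.inl hb
  · rintro (hb | ht)
    · rw [Filter.limsup_eq]
      have : {a : ℝ | ∀ᶠ n in l, h n ≤ a} = ∅ := by
        rw [Set.eq_empty_iff_forall_notMem]
        exact fun a ha => hb ⟨a, ha⟩
      rw [this, Real.sInf_empty]
    · exact ht.limsup_eq

lemma aux_summable_poly_geom (M : ℕ) {x : ℝ} (h0 : 0 < x) (h1 : x < 1) :
    Summable (fun n : ℕ => ((n:ℝ)+1)^M * x^n) := by
  have hs0 : Summable (fun n : ℕ => (n:ℝ)^M * x^n) :=
    summable_pow_mul_geometric_of_norm_lt_one M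
      (by rw [Real.norm_eq_abs, abs_of_pos h0]; exact h1)
  have hs1 : Summable (fun n : ℕ => ((n:ℝ)+1)^M * x^(n+1)) := by
    have := (summable_nat_add_iff 1).mpr hs0
    simpa using this
  have heq : (fun n : ℕ => ((n:ℝ)+1)^M * x^(n+1))
      = fun n : ℕ => x * (((n:ℝ)+1)^M * x^n) := by
    funext n; ring
  rw [heq] at hs1
  exact (summable_mul_left_iff (ne_of_gt h0)).mp hs1

set_option maxHeartbeats 2000000 in
/-- For 0 < p ≤ 1 and ω ∈ D̂: limsup_{r→1⁻} (1-r)^{2-1/p}/ω̂(r)^{1/p} = 0 iff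
limsup_{r→1⁻} (1-r) Σ_{k≥1} r^{2(k-1)}/(ω̂(1-1/k)^{1/p} k^{2-1/p}) = 0. -/
theorem stmt_12 (p : ℝ) (hp : 0 < p) (hp1 : p ≤ 1)
    (ω : ℝ → ℝ) (hnn : ∀ r, 0 ≤ ω r)
    (hInt : IntegrableOn ω (Set.Ico (0:ℝ) 1))
    (What : ℝ → ℝ) (hWhat : ∀ r, What r = ∫ s in Set.Ioc r 1, ω s)
    (hpos : ∀ r ∈ Set.Ico (0:ℝ) 1, 0 < What r)
    (hD : ∃ C ≥ (1:ℝ), ∀ r ∈ Set.Ico (0:ℝ) 1, What r ≤ C * What ((1 + r) / 2)) :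
    (Filter.limsup (fun r : ℝ => (1 - r) ^ (2 - 1/p) / What r ^ (1/p))
        (nhdsWithin 1 (Set.Iio 1)) = 0) ↔
    (Filter.limsup (fun r : ℝ =>
        (1 - r) * (∑' k : ℕ, r ^ (2 * k) /
          (What (1 - 1 / ((k : ℝ) + 1)) ^ (1/p) * ((k : ℝ) + 1) ^ (2 - 1/p))))
        (nhdsWithin 1 (Set.Iio 1)) = 0) := by
  obtain ⟨C, hC1, hDC⟩ := hD
  have hC0 : (0:ℝ) < C := lt_of_lt_of_le one_pos hC1
  have hpinv0 : 0 < 1/p := by positivity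
  have hpinv1 : 1 ≤ 1/p := by rw [le_div_iff₀ hp]; linarith
  set l : Filter ℝ := nhdsWithin 1 (Set.Iio 1) with hl
  set e : ℝ := 2 - 1/p with he
  set F : ℝ → ℝ := fun r : ℝ => (1 - r) ^ e / What r ^ (1/p) with hFdef
  -- antitonicity of What
  have hanti : ∀ {r s : ℝ}, 0 ≤ r → r ≤ s → s ≤ 1 → What s ≤ What r := by
    intro r s hr hrs hs
    rw [hWhat, hWhat]
    have hI : IntegrableOn ω (Set.Ioc r 1) := by
      have h1 : IntegrableOn ω (Set.Ioo r 1) :=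
        hInt.mono_set (fun x hx => ⟨le_trans hr (le_of_lt hx.1), hx.2⟩)
      have h2 : IntegrableOn ω {(1:ℝ)} := by
        rw [integrableOn_singleton_iff]
        exact Or.inr (by simp)
      have hsub : Set.Ioc r 1 ⊆ Set.Ioo r 1 ∪ {1} := by
        intro x hx
        rcases eq_or_lt_of_le hx.2 with h | h
        · right; simp [h]
        · left; exact ⟨hx.1, h⟩
      exact (h1.union h2).mono_set hsub
    refine setIntegral_mono_set hI ?_ ?_
    · exact Filter.Eventually.of_forall fun x => hnn x
    · exact HasSubset.Subset.eventuallyLE (Set.Ioc_subset_Ioc_left hrs)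
  have hmem : ∀ k : ℕ, (1 - 1/((k:ℝ)+1)) ∈ Set.Ico (0:ℝ) 1 := by
    intro k
    have h1 : (0:ℝ) < (k:ℝ)+1 := by positivity
    constructor
    · have : 1/((k:ℝ)+1) ≤ 1 := by
        rw [div_le_one h1]; linarith [Nat.cast_nonneg (α := ℝ) k]
      linarith
    · have : 0 < 1/((k:ℝ)+1) := by positivity
      linarith
  have hWk_pos : ∀ k : ℕ, 0 < What (1 - 1/((k:ℝ)+1)) := fun k => hpos _ (hmem k)
  set a : ℕ → ℝ :=
    fun k => 1 / (What (1 - 1/((k:ℝ)+1)) ^ (1/p) * ((k:ℝ)+1) ^ e) with haa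
  have hak_pos : ∀ k, 0 < a k := by
    intro k
    have h1 : (0:ℝ) < What (1 - 1/((k:ℝ)+1)) ^ (1/p) :=
      Real.rpow_pos_of_pos (hWk_pos k) _
    have h2 : (0:ℝ) < ((k:ℝ)+1) ^ e := Real.rpow_pos_of_pos (by positivity) _
    simp only [haa]
    positivity
  -- dyadic lower bound
  have hdy : ∀ n : ℕ, What 0 ≤ C^n * What (1 - (1/2:ℝ)^n) := by
    intro n
    induction n with
    | zero => simp
    | succ n ih =>
      have hmem2 : (1 - (1/2:ℝ)^n) ∈ Set.Ico (0:ℝ) 1 := by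
        constructor
        · have : (1/2:ℝ)^n ≤ 1 := pow_le_one₀ (by norm_num) (by norm_num)
          linarith
        · have : (0:ℝ) < (1/2:ℝ)^n := by positivity
          linarith
      have h2 : What (1 - (1/2:ℝ)^n) ≤ C * What (1 - (1/2:ℝ)^(n+1)) := by
        have h3 := hDC _ hmem2
        have harg : (1 + (1 - (1/2:ℝ)^n)) / 2 = 1 - (1/2:ℝ)^(n+1) := by ring
        rwa [harg] at h3
      calc What 0 ≤ C^n * What (1 - (1/2:ℝ)^n) := ih
        _ ≤ C^n * (C * What (1 - (1/2:ℝ)^(n+1))) :=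
            mul_le_mul_of_nonneg_left h2 (by positivity)
        _ = C^(n+1) * What (1 - (1/2:ℝ)^(n+1)) := by ring
  have hlow : ∀ k : ℕ, What 0 ≤ C^(Nat.log 2 (k+1) + 1) * What (1 - 1/((k:ℝ)+1)) := by
    intro k
    set n : ℕ := Nat.log 2 (k+1) + 1 with hn
    have hk2n : (k:ℝ)+1 ≤ 2^n := by
      have h1 := Nat.lt_pow_succ_log_self (b := 2) (by norm_num) (k+1)
      have h2 : k+1 ≤ 2^n := le_of_lt h1
      exact_mod_cast h2
    have hle : 1 - 1/((k:ℝ)+1) ≤ (1 - (1/2:ℝ)^n) := by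
      have h1 : (0:ℝ) < (k:ℝ)+1 := by positivity
      have h2 : (0:ℝ) < (2:ℝ)^n := by positivity
      have h3 : (1/2:ℝ)^n ≤ 1/((k:ℝ)+1) := by
        rw [div_pow, one_pow, div_le_div_iff₀ h2 h1]
        linarith
      linarith
    have h4 : What (1 - 1/((k:ℝ)+1)) ≥ What (1 - (1/2:ℝ)^n) := by
      refine hanti (hmem k).1 hle ?_
      have : (0:ℝ) < (1/2:ℝ)^n := by positivity
      linarith
    calc What 0 ≤ C^n * What (1 - (1/2:ℝ)^n) := hdy n
      _ ≤ C^n * What (1 - 1/((k:ℝ)+1)) :=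
          mul_le_mul_of_nonneg_left h4 (by positivity)
  -- polynomial upper bound for a
  have hW0pos : 0 < What 0 := hpos 0 (by norm_num)
  set D : ℝ := C ^ (1/p) with hDdef
  have hD1 : 1 ≤ D := Real.one_le_rpow hC1 (le_of_lt hpinv0)
  have hD0 : 0 < D := lt_of_lt_of_le one_pos hD1
  set E : ℕ := ⌈D⌉₊ with hEdef
  set P : ℕ := ⌈1/p⌉₊ with hPdef
  set A : ℝ := D / What 0 ^ (1/p) with hAdef
  have hA0 : 0 < A := div_pos hD0 (Real.rpow_pos_of_pos hW0pos _)
  set M : ℕ := E + P with hMdef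
  have hpoly : ∀ k : ℕ, a k ≤ A * ((k:ℝ)+1)^M := by
    intro k
    set n : ℕ := Nat.log 2 (k+1) + 1 with hn
    have hk1 : (1:ℝ) ≤ (k:ℝ)+1 := by
      have := Nat.cast_nonneg (α := ℝ) k; linarith
    have hWk := hWk_pos k
    have h1 : 1 / What (1 - 1/((k:ℝ)+1)) ≤ C^n / What 0 := by
      rw [div_le_div_iff₀ hWk hW0pos, one_mul]
      exact hlow k
    have h2 : (1 / What (1 - 1/((k:ℝ)+1))) ^ (1/p) ≤ (C^n / What 0) ^ (1/p) :=
      Real.rpow_le_rpow (by positivity) h1 (le_of_lt hpinv0)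
    have h3 : (1 / What (1 - 1/((k:ℝ)+1))) ^ (1/p)
        = 1 / What (1 - 1/((k:ℝ)+1)) ^ (1/p) := by
      rw [one_div, Real.inv_rpow (le_of_lt hWk)]
      exact (one_div _).symm
    have h4 : (C^n / What 0) ^ (1/p) = D^n / What 0 ^ (1/p) := by
      rw [Real.div_rpow (by positivity) (le_of_lt hW0pos)]
      congr 1
      rw [← Real.rpow_natCast C n, ← Real.rpow_mul (le_of_lt hC0), mul_comm,
        Real.rpow_mul (le_of_lt hC0), Real.rpow_natCast]
    have h5 : D ≤ 2^E := by
      calc D ≤ (E : ℝ) := Nat.le_ceil D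
        _ ≤ 2^E := by exact_mod_cast le_of_lt (Nat.lt_two_pow_self (n := E))
    have h6 : D^n ≤ D * ((k:ℝ)+1)^E := by
      rw [hn, pow_succ, mul_comm]
      refine mul_le_mul_of_nonneg_left ?_ (le_of_lt hD0)
      calc D ^ Nat.log 2 (k+1) ≤ ((2:ℝ)^E) ^ Nat.log 2 (k+1) :=
            pow_le_pow_left₀ (le_of_lt hD0) h5 _
        _ = ((2:ℝ) ^ Nat.log 2 (k+1)) ^ E := by
            rw [← pow_mul, ← pow_mul, Nat.mul_comm]
        _ ≤ ((k:ℝ)+1) ^ E := by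
            refine pow_le_pow_left₀ (by positivity) ?_ _
            have h7 := Nat.pow_log_le_self 2 (Nat.succ_ne_zero k)
            exact_mod_cast h7
    have h7 : 1 / ((k:ℝ)+1) ^ e ≤ ((k:ℝ)+1) ^ (P:ℕ) := by
      rw [one_div, ← Real.rpow_neg (by positivity : (0:ℝ) ≤ (k:ℝ)+1)]
      calc ((k:ℝ)+1) ^ (-e) ≤ ((k:ℝ)+1) ^ ((P:ℕ):ℝ) := by
            refine Real.rpow_le_rpow_of_exponent_le hk1 ?_
            have h8 : 1/p ≤ ((P:ℕ):ℝ) := Nat.le_ceil _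
            rw [he]; push_cast; linarith
        _ = ((k:ℝ)+1) ^ (P:ℕ) := Real.rpow_natCast _ _
    have h9 : 1 / What (1 - 1/((k:ℝ)+1)) ^ (1/p) ≤ D^n / What 0 ^ (1/p) := by
      rw [← h3, ← h4]; exact h2
    have h10 : 0 ≤ D^n / What 0 ^ (1/p) :=
      le_of_lt (div_pos (pow_pos hD0 n) (Real.rpow_pos_of_pos hW0pos _))
    calc a k = (1 / What (1 - 1/((k:ℝ)+1)) ^ (1/p)) * (1 / ((k:ℝ)+1) ^ e) := by
          simp only [haa, one_div, mul_inv]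
      _ ≤ (D^n / What 0 ^ (1/p)) * ((k:ℝ)+1)^(P:ℕ) := by
          refine mul_le_mul h9 h7 ?_ h10
          have : (0:ℝ) < ((k:ℝ)+1) ^ e := Real.rpow_pos_of_pos (by positivity) _
          positivity
      _ ≤ (D * ((k:ℝ)+1)^E / What 0 ^ (1/p)) * ((k:ℝ)+1)^(P:ℕ) := by
          gcongr
      _ = A * ((k:ℝ)+1)^M := by
          rw [hAdef, hMdef, pow_add]; ring
  -- summability
  have hsummable : ∀ r : ℝ, 0 < r → r < 1 → Summable (fun k => r^(2*k) * a k) := by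
    intro r h0 h1
    have hr2 : r^2 < 1 := by nlinarith
    have hr20 : 0 < r^2 := by positivity
    have hs2 := (aux_summable_poly_geom M hr20 hr2).mul_left A
    refine Summable.of_nonneg_of_le
      (fun k => mul_nonneg (by positivity) (le_of_lt (hak_pos k))) (fun k => ?_) hs2
    calc r^(2*k) * a k ≤ r^(2*k) * (A * ((k:ℝ)+1)^M) :=
          mul_le_mul_of_nonneg_left (hpoly k) (by positivity)
      _ = A * (((k:ℝ)+1)^M * (r^2)^k) := by rw [pow_mul]; ring
  -- nonnegativity of F
  have hFnonneg : ∀ r ∈ Set.Ico (0:ℝ) 1, 0 ≤ F r := by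
    intro r hr
    simp only [hFdef]
    exact div_nonneg (Real.rpow_nonneg (by linarith [hr.2]) _)
      (Real.rpow_nonneg (le_of_lt (hpos r hr)) _)
  -- a in terms of F
  have haf2 : ∀ k : ℕ, a k = (1/((k:ℝ)+1))^e / What (1 - 1/((k:ℝ)+1)) ^ (1/p) := by
    intro k
    have hk0 : (0:ℝ) < (k:ℝ)+1 := by positivity
    have hX : What (1 - 1/((k:ℝ)+1)) ^ (1/p) ≠ 0 := ne_of_gt (Real.rpow_pos_of_pos (hWk_pos k) _)
    have hY : ((k:ℝ)+1) ^ e ≠ 0 := ne_of_gt (Real.rpow_pos_of_pos hk0 _)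
    simp only [haa]
    rw [one_div ((k:ℝ)+1), Real.inv_rpow (le_of_lt hk0)]
    field_simp
  have haf : ∀ k : ℕ, a k = F (1 - 1/((k:ℝ)+1)) := by
    intro k
    have h1 : 1 - (1 - 1/((k:ℝ)+1)) = 1/((k:ℝ)+1) := by ring
    simp only [hFdef]
    rw [h1]
    exact haf2 k
  -- constants for the lower estimate
  set c0 : ℝ := min ((4:ℝ)^(-e)) 1 with hc0def
  have hc00 : 0 < c0 := lt_min (Real.rpow_pos_of_pos (by norm_num) _) one_pos
  set K : ℝ := (Real.exp (-16) * c0)⁻¹ with hKdef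
  have hK0 : 0 < K := by positivity
  -- Gm: multiplication form of G
  set Gm : ℝ → ℝ := fun r => (1 - r) * ∑' k : ℕ, r^(2*k) * a k with hGmdef
  have hGmNonneg : ∀ r ∈ Set.Ico (0:ℝ) 1, 0 ≤ Gm r := by
    intro r hr
    simp only [hGmdef]
    refine mul_nonneg (by linarith [hr.2]) (tsum_nonneg fun k => ?_)
    exact mul_nonneg (pow_nonneg hr.1 _) (le_of_lt (hak_pos k))
  -- key lower estimate: F ≤ K * Gm near 1
  have key1 : ∀ r ∈ Set.Ioo (1/2 : ℝ) 1, F r ≤ K * Gm r := by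
    intro r hr
    obtain ⟨hrh, hr1⟩ := hr
    have hr0 : (0:ℝ) < r := lt_trans (by norm_num) hrh
    have h1r : (0:ℝ) < 1 - r := by linarith
    set N : ℕ := ⌈1/(1-r)⌉₊ with hNdef
    have hNge : 1/(1-r) ≤ (N:ℝ) := Nat.le_ceil _
    have h1r1 : 1 ≤ 1/(1-r) := by rw [le_div_iff₀ h1r]; linarith
    have hNle : (N:ℝ) ≤ 2/(1-r) := by
      have h1 := Nat.ceil_lt_add_one (le_of_lt (show (0:ℝ) < 1/(1-r) by positivity))
      have h2 : 2/(1-r) = 1/(1-r) + 1/(1-r) := by ring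
      rw [hNdef]; linarith
    have hterm : ∀ k ∈ Finset.Ico N (2*N),
        Real.exp (-16) * (c0 * F r) ≤ r^(2*k) * a k := by
      intro k hk
      obtain ⟨hkN, hk2N⟩ := Finset.mem_Ico.mp hk
      have hkNr : (N:ℝ) ≤ (k:ℝ) := by exact_mod_cast hkN
      have hk1r : (k:ℝ)+1 ≤ 2*(N:ℝ) := by exact_mod_cast Nat.succ_le_of_lt hk2N
      have hkpos : (0:ℝ) < (k:ℝ)+1 := by positivity
      have hx1 : 1/((k:ℝ)+1) ≤ 1 - r := by
        rw [div_le_iff₀ hkpos]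
        have h1 : 1/(1-r) ≤ (k:ℝ)+1 := by linarith
        calc (1:ℝ) = (1-r) * (1/(1-r)) := by field_simp
          _ ≤ (1-r) * ((k:ℝ)+1) := mul_le_mul_of_nonneg_left h1 (le_of_lt h1r)
      have hx2 : (1-r)/4 ≤ 1/((k:ℝ)+1) := by
        have h1rne : (1:ℝ) - r ≠ 0 := ne_of_gt h1r
        have h4 : (k:ℝ)+1 ≤ 4/(1-r) := by
          have h5 : 2*(N:ℝ) ≤ 2*(2/(1-r)) := by linarith
          have h6 : 2*(2/(1-r)) = 4/(1-r) := by ring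
          linarith
        rw [div_le_div_iff₀ (by norm_num) hkpos]
        calc (1-r)*((k:ℝ)+1) ≤ (1-r)*(4/(1-r)) :=
              mul_le_mul_of_nonneg_left h4 (le_of_lt h1r)
          _ = 4 := by field_simp
          _ ≤ 1*4 := by norm_num
      have hWcomp : What (1 - 1/((k:ℝ)+1)) ≤ What r := by
        refine hanti (le_of_lt hr0) (by linarith) ?_
        have : 0 < 1/((k:ℝ)+1) := by positivity
        linarith
      have hWrpos : 0 < What r := hpos r ⟨le_of_lt hr0, hr1⟩
      have hWc2 : What (1 - 1/((k:ℝ)+1)) ^ (1/p) ≤ What r ^ (1/p) :=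
        Real.rpow_le_rpow (le_of_lt (hWk_pos k)) hWcomp (le_of_lt hpinv0)
      have hxe : c0 * (1-r)^e ≤ (1/((k:ℝ)+1))^e := by
        rcases le_or_gt 0 e with hepos | heneg
        · have h1 : ((1-r)/4)^e ≤ (1/((k:ℝ)+1))^e :=
            Real.rpow_le_rpow (by positivity) hx2 hepos
          have h2 : ((1-r)/4)^e = (1-r)^e * (4:ℝ)^(-e) := by
            rw [Real.div_rpow (by linarith) (by norm_num), Real.rpow_neg (by norm_num),
              div_eq_mul_inv]
          have h3 : c0 ≤ (4:ℝ)^(-e) := min_le_left _ _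
          calc c0 * (1-r)^e ≤ (4:ℝ)^(-e) * (1-r)^e :=
                mul_le_mul_of_nonneg_right h3 (Real.rpow_nonneg (by linarith) _)
            _ = ((1-r)/4)^e := by rw [h2]; ring
            _ ≤ _ := h1
        · have h1 : (1-r)^e ≤ (1/((k:ℝ)+1))^e :=
            Real.rpow_le_rpow_of_nonpos (by positivity) hx1 (le_of_lt heneg)
          have h3 : c0 ≤ 1 := min_le_right _ _
          calc c0 * (1-r)^e ≤ 1 * (1-r)^e :=
                mul_le_mul_of_nonneg_right h3 (Real.rpow_nonneg (by linarith) _)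
            _ = (1-r)^e := one_mul _
            _ ≤ _ := h1
      have hafr : c0 * F r ≤ a k := by
        rw [haf2 k]
        simp only [hFdef]
        rw [← mul_div_assoc]
        exact div_le_div₀ (Real.rpow_nonneg (by positivity) _) hxe
          (Real.rpow_pos_of_pos (hWk_pos k) _) hWc2
      have hfr0 : 0 ≤ F r := hFnonneg r ⟨le_of_lt hr0, hr1⟩
      have hrk : Real.exp (-16) ≤ r^(2*k) := by
        have h1 : r^(4*N) ≤ r^(2*k) :=
          pow_le_pow_of_le_one (le_of_lt hr0) (le_of_lt hr1) (by omega)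
        have h2 : r^(4*N) = Real.exp ((4*N : ℕ) * Real.log r) := by
          rw [Real.exp_nat_mul, Real.exp_log hr0]
        have hlog0 : 0 ≤ -Real.log r := by
          have := Real.log_nonpos (le_of_lt hr0) (le_of_lt hr1)
          linarith
        have hrne : r ≠ 0 := ne_of_gt hr0
        have hlogr : -Real.log r ≤ 2*(1-r) := by
          have h3 := Real.log_le_sub_one_of_pos (show (0:ℝ) < 1/r by positivity)
          have h4 : Real.log (1/r) = -Real.log r := by
            rw [one_div, Real.log_inv]
          rw [h4] at h3
          have h5 : 1/r ≤ 2 := by rw [div_le_iff₀ hr0]; linarith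
          have h6 : (1-r)*(1/r) ≤ (1-r)*2 := mul_le_mul_of_nonneg_left h5 (le_of_lt h1r)
          have h7 : 1/r - 1 = (1-r)*(1/r) := by field_simp
          linarith
        have h1rne : (1:ℝ) - r ≠ 0 := ne_of_gt h1r
        have h4N : ((4*N:ℕ):ℝ) * (-Real.log r) ≤ 16 := by
          have hA : ((4*N:ℕ):ℝ) = 4*(N:ℝ) := by push_cast; ring
          have hB : 4*(N:ℝ) ≤ 8/(1-r) := by
            have h8 : 4*(2/(1-r)) = 8/(1-r) := by ring
            linarith
          calc ((4*N:ℕ):ℝ) * (-Real.log r) ≤ (8/(1-r)) * (2*(1-r)) := by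
                rw [hA]
                exact mul_le_mul hB hlogr hlog0 (by positivity)
            _ = 16 := by field_simp; ring
        calc Real.exp (-16) ≤ Real.exp (((4*N:ℕ):ℝ) * Real.log r) := by
              refine Real.exp_le_exp.mpr ?_
              nlinarith [h4N]
          _ = r^(4*N) := h2.symm
          _ ≤ r^(2*k) := h1
      exact mul_le_mul hrk hafr (mul_nonneg (le_of_lt hc00) hfr0) (by positivity)
    have hcard : (Finset.Ico N (2*N)).card = N := by rw [Nat.card_Ico]; omega
    have hsum1 : (N:ℝ) * (Real.exp (-16) * (c0 * F r))
        ≤ ∑ k ∈ Finset.Ico N (2*N), r^(2*k) * a k := by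
      have h1 := Finset.card_nsmul_le_sum (Finset.Ico N (2*N))
        (fun k => r^(2*k) * a k) _ hterm
      rwa [hcard, nsmul_eq_mul] at h1
    have hsum2 : (∑ k ∈ Finset.Ico N (2*N), r^(2*k) * a k) ≤ ∑' k : ℕ, r^(2*k) * a k :=
      Summable.sum_le_tsum _ (fun k _ => mul_nonneg (by positivity) (le_of_lt (hak_pos k)))
        (hsummable r hr0 hr1)
    have hfr0 : 0 ≤ F r := hFnonneg r ⟨le_of_lt hr0, hr1⟩
    have hN1r : 1 ≤ (1-r) * (N:ℝ) := by
      have h1 : (1-r) * (1/(1-r)) = 1 := by field_simp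
      nlinarith [mul_le_mul_of_nonneg_left hNge (le_of_lt h1r)]
    have hx0 : 0 ≤ Real.exp (-16) * (c0 * F r) :=
      mul_nonneg (Real.exp_nonneg _) (mul_nonneg (le_of_lt hc00) hfr0)
    have hmain : Real.exp (-16) * (c0 * F r) ≤ Gm r := by
      calc Real.exp (-16) * (c0 * F r)
          ≤ ((1-r)*(N:ℝ)) * (Real.exp (-16) * (c0 * F r)) := le_mul_of_one_le_left hx0 hN1r
        _ = (1-r) * ((N:ℝ) * (Real.exp (-16) * (c0 * F r))) := by ring
        _ ≤ (1-r) * (∑ k ∈ Finset.Ico N (2*N), r^(2*k) * a k) :=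
            mul_le_mul_of_nonneg_left hsum1 (le_of_lt h1r)
        _ ≤ (1-r) * ∑' k : ℕ, r^(2*k) * a k :=
            mul_le_mul_of_nonneg_left hsum2 (le_of_lt h1r)
        _ = Gm r := by rw [hGmdef]
    rw [hKdef]
    have hpos2 : (0:ℝ) < Real.exp (-16) * c0 := mul_pos (Real.exp_pos _) hc00
    refine (le_inv_mul_iff₀ hpos2).mpr ?_
    calc (Real.exp (-16) * c0) * F r = Real.exp (-16) * (c0 * F r) := by ring
      _ ≤ Gm r := hmain
  -- upper bound for Gm
  have hub : ∀ (K0 : ℕ) (ε : ℝ), 0 ≤ ε → (∀ k, K0 ≤ k → a k ≤ ε) →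
      ∀ r : ℝ, 0 < r → r < 1 → Gm r ≤ (1-r) * (∑ k ∈ Finset.range K0, a k) + ε := by
    intro K0 ε hε hKa r hr0 hr1
    have h1r : (0:ℝ) < 1 - r := by linarith
    have hS := hsummable r hr0 hr1
    have hr2 : r^2 < 1 := by nlinarith
    have hr20 : (0:ℝ) ≤ r^2 := by positivity
    have h1r2 : (0:ℝ) < 1 - r^2 := by nlinarith
    have hhead : (∑ k ∈ Finset.range K0, r^(2*k) * a k) ≤ ∑ k ∈ Finset.range K0, a k := by
      refine Finset.sum_le_sum fun k _ => ?_
      calc r^(2*k) * a k ≤ 1 * a k :=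
            mul_le_mul_of_nonneg_right
              (pow_le_one₀ (le_of_lt hr0) (le_of_lt hr1)) (le_of_lt (hak_pos k))
        _ = a k := one_mul _
    have htail : (∑' i : ℕ, r^(2*(i+K0)) * a (i+K0)) ≤ ε * (1-r^2)⁻¹ := by
      have hgs : Summable (fun i : ℕ => ε * (r^2)^i) :=
        (summable_geometric_of_lt_one hr20 hr2).mul_left ε
      have hls : Summable (fun i : ℕ => r^(2*(i+K0)) * a (i+K0)) :=
        (summable_nat_add_iff K0).mpr hS
      have hterm2 : ∀ i : ℕ, r^(2*(i+K0)) * a (i+K0) ≤ ε * (r^2)^i := by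
        intro i
        have h1 : r^(2*(i+K0)) ≤ r^(2*i) :=
          pow_le_pow_of_le_one (le_of_lt hr0) (le_of_lt hr1) (by omega)
        have h2 : a (i+K0) ≤ ε := hKa _ (by omega)
        calc r^(2*(i+K0)) * a (i+K0) ≤ r^(2*i) * ε :=
              mul_le_mul h1 h2 (le_of_lt (hak_pos _)) (by positivity)
          _ = ε * (r^2)^i := by rw [pow_mul]; ring
      calc (∑' i : ℕ, r^(2*(i+K0)) * a (i+K0)) ≤ ∑' i : ℕ, ε * (r^2)^i :=
            Summable.tsum_le_tsum hterm2 hls hgs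
        _ = ε * (1-r^2)⁻¹ := by rw [tsum_mul_left, tsum_geometric_of_lt_one hr20 hr2]
    have hcomb : (∑' k : ℕ, r^(2*k) * a k)
        ≤ (∑ k ∈ Finset.range K0, a k) + ε * (1-r^2)⁻¹ := by
      rw [← Summable.sum_add_tsum_nat_add K0 hS]
      exact add_le_add hhead htail
    have hfrac : (1-r) * (ε * (1-r^2)⁻¹) ≤ ε := by
      have h1 : (1-r) * (1-r^2)⁻¹ ≤ 1 := by
        rw [← div_eq_mul_inv, div_le_one h1r2]
        nlinarith
      calc (1-r)*(ε*(1-r^2)⁻¹) = ε * ((1-r)*(1-r^2)⁻¹) := by ring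
        _ ≤ ε * 1 := mul_le_mul_of_nonneg_left h1 hε
        _ = ε := mul_one _
    calc Gm r = (1-r) * ∑' k : ℕ, r^(2*k) * a k := by rw [hGmdef]
      _ ≤ (1-r) * ((∑ k ∈ Finset.range K0, a k) + ε * (1-r^2)⁻¹) :=
          mul_le_mul_of_nonneg_left hcomb (le_of_lt h1r)
      _ = (1-r) * (∑ k ∈ Finset.range K0, a k) + (1-r)*(ε*(1-r^2)⁻¹) := by ring
      _ ≤ (1-r) * (∑ k ∈ Finset.range K0, a k) + ε := by linarith [hfrac]
  -- filter facts
  have hIooMem : ∀ m : ℝ, m < 1 → Set.Ioo m 1 ∈ l := by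
    intro m hm
    rw [hl]
    exact Ioo_mem_nhdsLT_of_mem ⟨hm, le_refl 1⟩
  have hseq : Filter.Tendsto (fun k : ℕ => 1 - 1/((k:ℝ)+1)) Filter.atTop l := by
    rw [hl]
    refine tendsto_nhdsWithin_of_tendsto_nhds_of_eventually_within _ ?_ ?_
    · have h0 := tendsto_one_div_add_atTop_nhds_zero_nat (𝕜 := ℝ)
      have h1 := h0.const_sub 1
      simpa using h1
    · refine Filter.Eventually.of_forall fun k => ?_
      have : 0 < 1/((k:ℝ)+1) := by positivity
      simp only [Set.mem_Iio]; linarith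
  have hatendsto : Filter.Tendsto F l (nhds 0) → Filter.Tendsto a Filter.atTop (nhds 0) := by
    intro hF
    have h1 := hF.comp hseq
    have heq : (F ∘ fun k : ℕ => 1 - 1/((k:ℝ)+1)) = a := by
      funext k; exact (haf k).symm
    rwa [heq] at h1
  -- tendsto transfer
  have key2 : Filter.Tendsto F l (nhds 0) → Filter.Tendsto Gm l (nhds 0) := by
    intro hF
    rw [NormedAddCommGroup.tendsto_nhds_zero]
    intro ε hε
    have ha0 := hatendsto hF
    have h1 : ∀ᶠ k in Filter.atTop, a k < ε/4 :=
      ha0.eventually_lt_const (by positivity)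
    rw [Filter.eventually_atTop] at h1
    obtain ⟨K0, hK0a⟩ := h1
    set S : ℝ := ∑ k ∈ Finset.range K0, a k with hSdef
    have hS0 : 0 ≤ S := Finset.sum_nonneg fun k _ => le_of_lt (hak_pos k)
    have hmax1 : max (1 - (ε/4)/(S+1)) 0 < 1 := by
      refine max_lt ?_ one_pos
      have : 0 < (ε/4)/(S+1) := by positivity
      linarith
    refine Filter.eventually_of_mem (hIooMem _ hmax1) fun r hr => ?_
    obtain ⟨hrl, hr1⟩ := hr
    have hr0 : (0:ℝ) < r := lt_of_le_of_lt (le_max_right _ _) hrl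
    have h1r : (0:ℝ) < 1 - r := by linarith
    have hub2 := hub K0 (ε/4) (by positivity) (fun k hk => le_of_lt (hK0a k hk)) r hr0 hr1
    have h3 : 1 - r < (ε/4)/(S+1) := by
      have h4 := lt_of_le_of_lt (le_max_left _ _) hrl
      linarith
    have h4 : (1-r)*S < ε/4 := by
      have h5 : (1-r)*S ≤ (1-r)*(S+1) := by nlinarith
      have h6 : (1-r)*(S+1) < ((ε/4)/(S+1))*(S+1) :=
        mul_lt_mul_of_pos_right h3 (by linarith)
      have h7 : ((ε/4)/(S+1))*(S+1) = ε/4 := by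
        field_simp
      linarith
    have hGnn := hGmNonneg r ⟨le_of_lt hr0, hr1⟩
    rw [Real.norm_eq_abs, abs_of_nonneg hGnn]
    calc Gm r ≤ (1-r)*S + ε/4 := hub2
      _ < ε/4 + ε/4 := by linarith
      _ < ε := by linarith
  -- boundedness transfer
  have key3 : Filter.IsBoundedUnder (· ≤ ·) l F → Filter.IsBoundedUnder (· ≤ ·) l Gm := by
    rintro ⟨B, hB⟩
    rw [Filter.eventually_map] at hB
    have hak : ∀ᶠ k in Filter.atTop, a k ≤ B := by
      have h1 := hseq.eventually hB
      refine h1.mono fun k hk => ?_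
      rw [haf k]; exact hk
    rw [Filter.eventually_atTop] at hak
    obtain ⟨K0, hK0a⟩ := hak
    set B' : ℝ := max B 0 with hB'def
    set S : ℝ := ∑ k ∈ Finset.range K0, a k with hSdef
    have hS0 : 0 ≤ S := Finset.sum_nonneg fun k _ => le_of_lt (hak_pos k)
    refine ⟨S + B', ?_⟩
    rw [Filter.eventually_map]
    refine Filter.eventually_of_mem (hIooMem 0 one_pos) fun r hr => ?_
    have hub2 := hub K0 B' (le_max_right _ _)
      (fun k hk => le_trans (hK0a k hk) (le_max_left _ _)) r hr.1 hr.2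
    have h5 : (1-r)*S ≤ S := by nlinarith [hr.1, hr.2]
    linarith
  -- eventual facts
  have hFev : ∀ᶠ r in l, 0 ≤ F r :=
    Filter.eventually_of_mem (hIooMem 0 one_pos) fun r hr => hFnonneg r ⟨le_of_lt hr.1, hr.2⟩
  have hGev : ∀ᶠ r in l, 0 ≤ Gm r :=
    Filter.eventually_of_mem (hIooMem 0 one_pos) fun r hr => hGmNonneg r ⟨le_of_lt hr.1, hr.2⟩
  have hkey1ev : ∀ᶠ r in l, F r ≤ K * Gm r :=
    Filter.eventually_of_mem (hIooMem (1/2) (by norm_num)) fun r hr => key1 r hr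
  have hGshape : (fun r : ℝ =>
      (1 - r) * (∑' k : ℕ, r ^ (2 * k) /
        (What (1 - 1 / ((k : ℝ) + 1)) ^ (1/p) * ((k : ℝ) + 1) ^ e))) = Gm := by
    funext r
    rw [hGmdef]
    congr 1
    refine tsum_congr fun k => ?_
    simp only [haa]
    exact div_eq_mul_one_div _ _
  rw [hGshape]
  rw [aux_limsup_eq_zero_iff hFev, aux_limsup_eq_zero_iff hGev]
  constructor
  · rintro (hnb | ht)
    · left
      intro hbG
      refine hnb ?_
      obtain ⟨B, hB⟩ := hbG
      rw [Filter.eventually_map] at hB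
      refine ⟨K * B, ?_⟩
      rw [Filter.eventually_map]
      filter_upwards [hkey1ev, hB] with r h1 h2
      calc F r ≤ K * Gm r := h1
        _ ≤ K * B := mul_le_mul_of_nonneg_left h2 (le_of_lt hK0)
    · right; exact key2 ht
  · rintro (hnb | ht)
    · left
      intro hbF
      exact hnb (key3 hbF)
    · right
      refine tendsto_of_tendsto_of_tendsto_of_le_of_le' tendsto_const_nhds ?_ hFev hkey1ev
      have h1 := ht.const_mul K
      simpa using h1
end

section
/- Let 0 < p < 1 and ω ∈ D̂. Then for each point a in the unit disc with |a| close enough to 1, ∫_{S(a)} ω̂(z)^{1/p} (1-|z|)^{1/p - 2} dA(z) ≤ C (ω(S(a)))^{1/p}, where S(a) is the Carleson square based at a and ω(S(a)) = ∫_{S(a)} ω dA ≍ ω̂(a)(1-|a|). -/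
open MeasureTheory Set

lemma polar_sector (t c h : ℝ) (ht : 0 < t) (f : ℝ → ℝ) :
    ∫ z in {z : ℂ | t ≤ ‖z‖ ∧ ‖z‖ < 1 ∧ |Complex.arg z - c| ≤ h}, f ‖z‖
    = (∫ r in Ico t 1, r * f r) *
      (volume (Ioo (-Real.pi) Real.pi ∩ Icc (c - h) (c + h))).toReal := by
  have hSmeas : MeasurableSet {z : ℂ | t ≤ ‖z‖ ∧ ‖z‖ < 1 ∧ |Complex.arg z - c| ≤ h} := by
    have : {z : ℂ | t ≤ ‖z‖ ∧ ‖z‖ < 1 ∧ |Complex.arg z - c| ≤ h}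
        = ((fun z : ℂ => ‖z‖) ⁻¹' Ici t) ∩ ((fun z : ℂ => ‖z‖) ⁻¹' Iio 1) ∩
          ((fun z : ℂ => |Complex.arg z - c|) ⁻¹' Iic h) := by
      ext z; simp [mem_setOf_eq, and_assoc]
    rw [this]
    exact ((measurable_norm measurableSet_Ici).inter
      (measurable_norm measurableSet_Iio)).inter
      (((Complex.measurable_arg.sub measurable_const).abs) measurableSet_Iic)
  rw [← integral_indicator hSmeas]
  rw [← Complex.integral_comp_polarCoord_symm]
  have key : ∀ p ∈ polarCoord.target,
      p.1 • Set.indicator {z : ℂ | t ≤ ‖z‖ ∧ ‖z‖ < 1 ∧ |Complex.arg z - c| ≤ h}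
        (fun z => f ‖z‖) (Complex.polarCoord.symm p)
      = Set.indicator (Ico t 1) (fun r => r * f r) p.1 *
        Set.indicator (Icc (c - h) (c + h)) (fun _ => (1:ℝ)) p.2 := by
    intro p hp
    rw [polarCoord_target] at hp
    obtain ⟨h1, h2⟩ := hp
    have hnorm : ‖Complex.polarCoord.symm p‖ = p.1 := by
      rw [Complex.norm_polarCoord_symm, abs_of_pos h1]
    have harg : Complex.arg (Complex.polarCoord.symm p) = p.2 := by
      rw [Complex.polarCoord_symm_apply, Complex.ofReal_cos, Complex.ofReal_sin]
      exact Complex.arg_mul_cos_add_sin_mul_I h1 ⟨h2.1, h2.2.le⟩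
    have hiff : Complex.polarCoord.symm p ∈
        {z : ℂ | t ≤ ‖z‖ ∧ ‖z‖ < 1 ∧ |Complex.arg z - c| ≤ h}
        ↔ (p.1 ∈ Ico t 1 ∧ p.2 ∈ Icc (c - h) (c + h)) := by
      simp only [mem_setOf_eq, hnorm, harg, mem_Ico, mem_Icc, abs_le]
      constructor
      · rintro ⟨a1, a2, a3, a4⟩; exact ⟨⟨a1, a2⟩, by linarith, by linarith⟩
      · rintro ⟨⟨a1, a2⟩, a3, a4⟩; exact ⟨a1, a2, by linarith, by linarith⟩
    simp only [Set.indicator_apply, hiff, hnorm, smul_eq_mul]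
    split_ifs <;> simp_all
  rw [setIntegral_congr_fun polarCoord.open_target.measurableSet key]
  rw [polarCoord_target, Measure.volume_eq_prod, setIntegral_prod_mul]
  rw [setIntegral_indicator measurableSet_Ico, setIntegral_indicator measurableSet_Icc]
  have hss : Ioi (0:ℝ) ∩ Ico t 1 = Ico t 1 :=
    inter_eq_self_of_subset_right (fun x hx => lt_of_lt_of_le ht hx.1)
  rw [hss, setIntegral_const]
  simp [smul_eq_mul, measureReal_def]

/-- For 0 < p < 1 and ω ∈ D̂, for |a| close enough to 1,
∫_{S(a)} ω̂(z)^{1/p}(1-|z|)^{1/p-2} dA(z) ≤ C (ω(S(a)))^{1/p}, where S(a) is the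
Carleson square at a and dA is the normalized area measure. -/
theorem stmt_14 (p : ℝ) (hp : 0 < p) (hp1 : p < 1)
    (ω : ℝ → ℝ) (hnn : ∀ r, 0 ≤ ω r)
    (hInt : IntegrableOn ω (Set.Ico (0:ℝ) 1))
    (What : ℝ → ℝ) (hWhat : ∀ r, What r = ∫ s in Set.Ioc r 1, ω s)
    (hpos : ∀ r ∈ Set.Ico (0:ℝ) 1, 0 < What r)
    (hD : ∃ C ≥ (1:ℝ), ∀ r ∈ Set.Ico (0:ℝ) 1, What r ≤ C * What ((1 + r) / 2))
    (S : ℂ → Set ℂ)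
    (hS : ∀ a : ℂ, S a = {z : ℂ | ‖a‖ ≤ ‖z‖ ∧ ‖z‖ < 1 ∧
      |Complex.arg z - Complex.arg a| ≤ (1 - ‖a‖) / 2}) :
    ∃ C > (0:ℝ), ∃ r₀ ∈ Set.Ico (0:ℝ) 1, ∀ a : ℂ, a ≠ 0 → r₀ ≤ ‖a‖ → ‖a‖ < 1 →
      (1 / Real.pi) * (∫ z in S a, What ‖z‖ ^ (1/p) * (1 - ‖z‖) ^ (1/p - 2)) ≤
        C * ((1 / Real.pi) * ∫ z in S a, ω ‖z‖) ^ (1/p) := by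
  have hπ : (0:ℝ) < Real.pi := Real.pi_pos
  have hp' : (1:ℝ) < 1/p := one_lt_one_div hp hp1
  set q : ℝ := 1/p - 2 with hqdef
  have hq : (-1:ℝ) < q := by rw [hqdef]; linarith
  have hq1 : (0:ℝ) < q + 1 := by linarith
  have hpinv : (0:ℝ) < 1/p := by positivity
  set D : ℝ := (4 * Real.pi) ^ (1/p) with hDdef
  have hDpos : 0 < D := Real.rpow_pos_of_pos (by positivity) _
  have hIoc0 : IntegrableOn ω (Ioc 0 1) := by
    rw [integrableOn_Ioc_iff_integrableOn_Ioo]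
    exact hInt.mono_set (fun x hx => ⟨hx.1.le, hx.2⟩)
  refine ⟨D / (Real.pi * (q+1)), by positivity, 1/2, by norm_num, ?_⟩
  intro a ha ht2 ht1
  rw [hS a]
  set t : ℝ := ‖a‖ with htdef
  set c : ℝ := Complex.arg a with hcdef
  set h' : ℝ := (1 - t)/2 with hhdef
  have ht0 : (0:ℝ) < t := lt_of_lt_of_le (by norm_num) ht2
  have h1t : (0:ℝ) < 1 - t := by linarith
  have hh0 : 0 < h' := by rw [hhdef]; linarith
  have hh4 : h' ≤ 1/4 := by rw [hhdef]; linarith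
  set m : ℝ := (volume (Ioo (-Real.pi) Real.pi ∩ Icc (c - h') (c + h'))).toReal with hmdef
  -- measure of the angular set
  have hvol_le : volume (Ioo (-Real.pi) Real.pi ∩ Icc (c - h') (c + h'))
      ≤ ENNReal.ofReal (1 - t) := by
    refine le_trans (measure_mono inter_subset_right) ?_
    rw [Real.volume_Icc]
    apply ENNReal.ofReal_le_ofReal; rw [hhdef]; ring_nf; linarith
  have hm_le : m ≤ 1 - t := by
    rw [hmdef]
    calc (volume (Ioo (-Real.pi) Real.pi ∩ Icc (c - h') (c + h'))).toReal
        ≤ (ENNReal.ofReal (1 - t)).toReal :=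
          ENNReal.toReal_mono (by simp) hvol_le
      _ = 1 - t := ENNReal.toReal_ofReal h1t.le
  have hm_ge : h' ≤ m := by
    have hπ3 : (3:ℝ) < Real.pi := Real.pi_gt_three
    have hsub : ∃ x : ℝ, Ioo x (x + h') ⊆
        Ioo (-Real.pi) Real.pi ∩ Icc (c - h') (c + h') := by
      rcases le_or_gt c (Real.pi - h') with hc | hc
      · refine ⟨c, fun θ hθ => ?_⟩
        obtain ⟨hθ1, hθ2⟩ := hθ
        have harc : -Real.pi < c := Complex.neg_pi_lt_arg a
        exact ⟨⟨by linarith, by linarith⟩, by constructor <;> [linarith; linarith]⟩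
      · refine ⟨c - h', fun θ hθ => ?_⟩
        obtain ⟨hθ1, hθ2⟩ := hθ
        have harc : c ≤ Real.pi := Complex.arg_le_pi a
        have : c - h' + h' = c := by ring
        rw [this] at hθ2
        exact ⟨⟨by linarith, by linarith⟩, by constructor <;> [linarith; linarith]⟩
    obtain ⟨x, hx⟩ := hsub
    have : ENNReal.ofReal h' ≤ volume (Ioo (-Real.pi) Real.pi ∩ Icc (c - h') (c + h')) := by
      calc ENNReal.ofReal h' = volume (Ioo x (x + h')) := by
            rw [Real.volume_Ioo]; congr 1; ring
        _ ≤ _ := measure_mono hx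
    rw [hmdef]
    calc h' = (ENNReal.ofReal h').toReal := (ENNReal.toReal_ofReal hh0.le).symm
      _ ≤ _ := ENNReal.toReal_mono
          (ne_top_of_le_ne_top (by simp) hvol_le) this
  have hm0 : 0 ≤ m := le_trans hh0.le hm_ge
  -- monotonicity / positivity of What on [t,1)
  have hWmono : ∀ r ∈ Ico t 1, What r ≤ What t := by
    intro r hr
    rw [hWhat r, hWhat t]
    exact setIntegral_mono_set (hIoc0.mono_set (Ioc_subset_Ioc_left ht0.le))
      (ae_of_all _ hnn) (HasSubset.Subset.eventuallyLE (Ioc_subset_Ioc_left hr.1))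
  have hWnn : ∀ r ∈ Ico t 1, 0 ≤ What r := fun r hr =>
    (hpos r ⟨le_trans ht0.le hr.1, hr.2⟩).le
  set W : ℝ := What t with hWdef
  have hW : 0 < W := hpos t ⟨ht0.le, ht1⟩
  -- a.e. strong measurability of What on Ico t 1
  have hg_anti : Antitone (fun r : ℝ => ∫ s in Ioc (max r 0) 1, ω s) := by
    intro r r' hrr'
    exact setIntegral_mono_set (hIoc0.mono_set (Ioc_subset_Ioc_left (le_max_right r 0)))
      (ae_of_all _ hnn)
      (HasSubset.Subset.eventuallyLE (Ioc_subset_Ioc_left (max_le_max hrr' le_rfl)))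
  have hWaesm : AEStronglyMeasurable What (volume.restrict (Ico t 1)) := by
    refine (hg_anti.measurable.aestronglyMeasurable).congr ?_
    filter_upwards [ae_restrict_mem measurableSet_Ico] with r hr
    rw [hWhat r, max_eq_left (le_trans ht0.le hr.1)]
  -- integrability of (1-r)^q on Ico t 1
  have hGii : IntervalIntegrable (fun x : ℝ => (1-x) ^ q) volume t 1 := by
    have h0 := (intervalIntegral.intervalIntegrable_rpow' (a := 1 - 1) (b := 1 - t) hq)
    have := (h0.comp_sub_left 1).symm
    simpa using this
  have hGint : IntegrableOn (fun x : ℝ => (1-x) ^ q) (Ico t 1) := by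
    have := (intervalIntegrable_iff' (μ := volume)).mp hGii
    exact this.mono_set (fun x hx => mem_uIcc.mpr (Or.inl ⟨hx.1, hx.2.le⟩))
  have hG2int : IntegrableOn (fun x : ℝ => W ^ (1/p) * (1-x) ^ q) (Ico t 1) :=
    hGint.const_mul _
  -- pointwise bound for the weighted integrand
  have hpt : ∀ r ∈ Ico t 1,
      r * (What r ^ (1/p) * (1 - r) ^ q) ≤ W ^ (1/p) * (1-r) ^ q := by
    intro r hr
    have h1 : 0 ≤ What r := hWnn r hr
    have h2 : (0:ℝ) ≤ (1 - r) ^ q := Real.rpow_nonneg (by linarith [hr.2]) _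
    have h3 : What r ^ (1/p) ≤ W ^ (1/p) :=
      Real.rpow_le_rpow h1 (hWmono r hr) hpinv.le
    have h4 : 0 ≤ What r ^ (1/p) := Real.rpow_nonneg h1 _
    calc r * (What r ^ (1/p) * (1 - r) ^ q) ≤ 1 * (What r ^ (1/p) * (1 - r) ^ q) := by
          apply mul_le_mul_of_nonneg_right hr.2.le (mul_nonneg h4 h2)
      _ = What r ^ (1/p) * (1 - r) ^ q := one_mul _
      _ ≤ W ^ (1/p) * (1-r) ^ q := mul_le_mul_of_nonneg_right h3 h2
  -- integrability of the weighted integrand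
  have hFaem : AEStronglyMeasurable (fun r => r * (What r ^ (1/p) * (1 - r) ^ q))
      (volume.restrict (Ico t 1)) := by
    have h1 : AEStronglyMeasurable (fun r => What r ^ (1/p)) (volume.restrict (Ico t 1)) :=
      (Real.continuous_rpow_const hpinv.le).comp_aestronglyMeasurable hWaesm
    have h2 : AEStronglyMeasurable (fun r : ℝ => (1-r) ^ q) (volume.restrict (Ico t 1)) := by
      refine ContinuousOn.aestronglyMeasurable ?_ measurableSet_Ico
      refine ContinuousOn.rpow_const (continuous_const.sub continuous_id).continuousOn ?_
      intro x hx; exact Or.inl (by simp only [mem_Ico] at hx; intro h; linarith [hx.2])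
    exact aestronglyMeasurable_id.mul (h1.mul h2)
  have hFint : IntegrableOn (fun r => r * (What r ^ (1/p) * (1-r)^q)) (Ico t 1) := by
    refine Integrable.mono hG2int hFaem ?_
    filter_upwards [ae_restrict_mem measurableSet_Ico] with r hr
    have h2 : (0:ℝ) ≤ (1-r)^q := Real.rpow_nonneg (by linarith [hr.2]) _
    have hF0 : 0 ≤ r * (What r ^ (1/p) * (1-r)^q) :=
      mul_nonneg (le_trans ht0.le hr.1)
        (mul_nonneg (Real.rpow_nonneg (hWnn r hr) _) h2)
    rw [Real.norm_eq_abs, Real.norm_eq_abs, abs_of_nonneg hF0,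
      abs_of_nonneg (mul_nonneg (Real.rpow_nonneg hW.le _) h2)]
    exact hpt r hr
  have hGval : ∫ r in Ico t 1, (1-r)^q = (1-t)^(q+1) / (q+1) := by
    rw [integral_Ico_eq_integral_Ioo, ← integral_Ioc_eq_integral_Ioo,
        ← intervalIntegral.integral_of_le ht1.le]
    rw [intervalIntegral.integral_comp_sub_left (fun x => x ^ q) 1]
    norm_num
    rw [integral_rpow (Or.inl hq), Real.zero_rpow (ne_of_gt hq1), sub_zero]
  have hA_le : (∫ r in Ico t 1, r * (What r ^ (1/p) * (1-r)^q))
      ≤ W ^ (1/p) * ((1-t)^(q+1)/(q+1)) := by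
    calc (∫ r in Ico t 1, r * (What r ^ (1/p) * (1-r)^q))
        ≤ ∫ r in Ico t 1, W ^ (1/p) * (1-r)^q :=
          setIntegral_mono_on hFint hG2int measurableSet_Ico hpt
      _ = W ^ (1/p) * ∫ r in Ico t 1, (1-r)^q := integral_const_mul _ _
      _ = W ^ (1/p) * ((1-t)^(q+1)/(q+1)) := by rw [hGval]
  have hA_nn : 0 ≤ ∫ r in Ico t 1, r * (What r ^ (1/p) * (1-r)^q) :=
    setIntegral_nonneg measurableSet_Ico (fun r hr =>
      mul_nonneg (le_trans ht0.le hr.1)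
        (mul_nonneg (Real.rpow_nonneg (hWnn r hr) _)
          (Real.rpow_nonneg (by linarith [hr.2]) _)))
  have hωIco : IntegrableOn ω (Ico t 1) :=
    hInt.mono_set (fun x hx => ⟨le_trans ht0.le hx.1, hx.2⟩)
  have hrωint : IntegrableOn (fun r => r * ω r) (Ico t 1) := by
    refine Integrable.mono hωIco (aestronglyMeasurable_id.mul hωIco.1) ?_
    filter_upwards [ae_restrict_mem measurableSet_Ico] with r hr
    rw [Real.norm_eq_abs, Real.norm_eq_abs,
      abs_of_nonneg (mul_nonneg (le_trans ht0.le hr.1) (hnn r)), abs_of_nonneg (hnn r)]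
    exact mul_le_of_le_one_left (hnn r) hr.2.le
  have hB_ge : W / 2 ≤ ∫ r in Ico t 1, r * ω r := by
    have h1 : ∫ r in Ico t 1, (1/2 : ℝ) * ω r ≤ ∫ r in Ico t 1, r * ω r :=
      setIntegral_mono_on (hωIco.const_mul _) hrωint measurableSet_Ico
        (fun r hr => mul_le_mul_of_nonneg_right (le_trans ht2 hr.1) (hnn r))
    have h2 : ∫ r in Ico t 1, (1/2 : ℝ) * ω r = (1/2 : ℝ) * ∫ r in Ico t 1, ω r :=
      integral_const_mul _ _
    have h3 : ∫ r in Ico t 1, ω r = W := by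
      rw [hWdef, hWhat t, integral_Ico_eq_integral_Ioo, integral_Ioc_eq_integral_Ioo]
    rw [h2, h3] at h1; linarith
  have hB_nn : 0 ≤ ∫ r in Ico t 1, r * ω r := le_trans (by linarith) hB_ge
  -- convert the planar integrals to radial ones
  have e1 : (∫ z in {z : ℂ | t ≤ ‖z‖ ∧ ‖z‖ < 1 ∧ |Complex.arg z - c| ≤ h'},
        What ‖z‖ ^ (1/p) * (1 - ‖z‖) ^ q)
      = (∫ r in Ico t 1, r * (What r ^ (1/p) * (1-r)^q)) *
        (volume (Ioo (-Real.pi) Real.pi ∩ Icc (c - h') (c + h'))).toReal :=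
    polar_sector t c h' ht0 (fun r => What r ^ (1/p) * (1-r)^q)
  have e2 : (∫ z in {z : ℂ | t ≤ ‖z‖ ∧ ‖z‖ < 1 ∧ |Complex.arg z - c| ≤ h'}, ω ‖z‖)
      = (∫ r in Ico t 1, r * ω r) *
        (volume (Ioo (-Real.pi) Real.pi ∩ Icc (c - h') (c + h'))).toReal :=
    polar_sector t c h' ht0 ω
  rw [e1, e2, ← hmdef]
  -- final arithmetic
  set A : ℝ := ∫ r in Ico t 1, r * (What r ^ (1/p) * (1-r)^q) with hAdef
  set B : ℝ := ∫ r in Ico t 1, r * ω r with hBdef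
  set X : ℝ := W ^ (1/p) * (1-t) ^ (1/p) with hXdef
  have hrw : (1-t)^(q+1) * (1-t) = (1-t) ^ (1/p) := by
    calc (1-t)^(q+1) * (1-t) = (1-t)^(q+1) * (1-t)^(1:ℝ) := by rw [Real.rpow_one]
      _ = (1-t)^((q+1)+1) := (Real.rpow_add h1t _ _).symm
      _ = (1-t) ^ (1/p) := by congr 1; rw [hqdef]; ring
  have hmulr : (W * (1-t)) ^ (1/p) = X := Real.mul_rpow hW.le h1t.le
  have step1 : (1/Real.pi) * (A * m) ≤ X / (Real.pi * (q+1)) := by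
    have h1 : A * m ≤ (W ^ (1/p) * ((1-t)^(q+1)/(q+1))) * (1-t) :=
      mul_le_mul hA_le hm_le hm0 (by positivity)
    have heq : (1/Real.pi) * ((W ^ (1/p) * ((1-t)^(q+1)/(q+1))) * (1-t))
        = X / (Real.pi * (q+1)) := by
      rw [hXdef, ← hrw]; field_simp
    calc (1/Real.pi) * (A * m) ≤ (1/Real.pi) * ((W ^ (1/p) * ((1-t)^(q+1)/(q+1))) * (1-t)) :=
          mul_le_mul_of_nonneg_left h1 (by positivity)
      _ = X / (Real.pi * (q+1)) := heq
  have step2 : X / D ≤ ((1/Real.pi) * (B * m)) ^ (1/p) := by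
    have h1 : (W/2) * ((1-t)/2) ≤ B * m := by
      apply mul_le_mul hB_ge ?_ (by linarith) hB_nn
      calc (1-t)/2 = h' := by rw [hhdef]
        _ ≤ m := hm_ge
    have h2 : (W * (1-t)) / (4 * Real.pi) ≤ (1/Real.pi) * (B * m) := by
      have : (W * (1-t)) / (4 * Real.pi) = (1/Real.pi) * ((W/2) * ((1-t)/2)) := by
        field_simp; ring
      rw [this]
      exact mul_le_mul_of_nonneg_left h1 (by positivity)
    calc X / D = ((W * (1-t)) / (4 * Real.pi)) ^ (1/p) := by
          rw [Real.div_rpow (by positivity) (by positivity), hmulr, hDdef]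
      _ ≤ ((1/Real.pi) * (B * m)) ^ (1/p) :=
          Real.rpow_le_rpow (by positivity) h2 hpinv.le
  calc (1/Real.pi) * (A * m) ≤ X / (Real.pi * (q+1)) := step1
    _ = D / (Real.pi * (q+1)) * (X / D) := by field_simp
    _ ≤ D / (Real.pi * (q+1)) * ((1/Real.pi) * (B * m)) ^ (1/p) :=
        mul_le_mul_of_nonneg_left step2 (by positivity)
end
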